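/- arXiv:1006.1741 — 7 statements merged into one kernel-verified Lean document; each statement's English description precedes it below -/
import Mathlib

section
/- Let G = (X, E, Y) be a finite connected graph with nonempty boundary set Y ⊆ X. For extensions u, v : X → ℝ^m of g : Y → ℝ^m, say v is tighter than u if sup{Su(x) : x ∈ X∖Y, Su(x) > Sv(x)} > sup{Sv(x) : x ∈ X∖Y, Su(x) < Sv(x)} (with sup ∅ = 0). If lv(u) ∈ ℝ^{|X∖Y|} denotes the values of Su listed in non-increasing order, then v tighter than u implies lv(v) < lv(u) in the lexicographic order. -/
/-- The local Lipschitz constant `Su(x) = sup_{y ~ x} ‖u y - u x‖` of a vertex function. -/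
noncomputable def Sloc {X : Type*} {m : ℕ} (G : SimpleGraph X)
    (u : X → EuclideanSpace ℝ (Fin m)) (x : X) : ℝ :=
  sSup {d : ℝ | ∃ y, G.Adj x y ∧ d = ‖u y - u x‖}

/-- `v` is tighter than `u` on `G` relative to the boundary set `Y`. -/
noncomputable def Tighter {X : Type*} {m : ℕ} (G : SimpleGraph X) (Y : Set X)
    (v u : X → EuclideanSpace ℝ (Fin m)) : Prop :=
  (∀ y ∈ Y, v y = u y) ∧
    sSup {d : ℝ | ∃ x, x ∉ Y ∧ Sloc G u x = d ∧ Sloc G v x < Sloc G u x} >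
      sSup {d : ℝ | ∃ x, x ∉ Y ∧ Sloc G v x = d ∧ Sloc G u x < Sloc G v x}

/-- The values of `Su` on `X \ Y`, listed in non-increasing order. -/
noncomputable def lv {X : Type*} [Fintype X] [DecidableEq X] {m : ℕ} (G : SimpleGraph X)
    (Y : Finset X) (u : X → EuclideanSpace ℝ (Fin m)) : List ℝ :=
  (((Finset.univ \ Y).val.map (Sloc G u)).sort (· ≤ ·)).reverse

lemma lex_aux : ∀ (l₂ l₁ : List ℝ), l₁.Pairwise (· ≥ ·) → l₂.Pairwise (· ≥ ·) →
    ∀ μ : ℝ, l₁.count μ < l₂.count μ → (∀ ν, μ < ν → l₁.count ν = l₂.count ν) →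
    List.Lex (· < ·) l₁ l₂ := by
  intro l₂
  induction l₂ with
  | nil => intro l₁ _ _ μ hc _; simp at hc
  | cons b t₂ ih =>
    intro l₁ h₁ h₂ μ hc hν
    cases l₁ with
    | nil => exact List.Lex.nil
    | cons a t₁ =>
      rcases lt_trichotomy a b with hab | hab | hab
      · exact List.Lex.rel hab
      · subst hab
        apply List.Lex.cons
        apply ih t₁ h₁.of_cons h₂.of_cons μ
        · rw [List.count_cons, List.count_cons] at hc
          omega
        · intro ν hμν
          have := hν ν hμν
          rw [List.count_cons, List.count_cons] at this
          omega
      · exfalso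
        have hmem : ∀ x ∈ b :: t₂, x ≤ b := by
          intro x hx
          rcases List.mem_cons.mp hx with rfl | hx
          · exact le_refl x
          · exact List.rel_of_pairwise_cons h₂ hx
        rcases le_or_gt a μ with haμ | haμ
        · have hμb : b < μ := lt_of_lt_of_le hab haμ
          have : μ ∉ b :: t₂ := fun hm => absurd (hmem μ hm) (not_le.mpr hμb)
          rw [List.count_eq_zero.mpr this] at hc
          omega
        · have : a ∉ b :: t₂ := fun hm => absurd (hmem a hm) (not_le.mpr hab)
          have h0 : (b :: t₂).count a = 0 := List.count_eq_zero.mpr this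
          have h1 : 0 < (a :: t₁).count a :=
            List.count_pos_iff.mpr (List.mem_cons_self (a := a) (l := t₁))
          have := hν a haμ
          omega

theorem stmt0 {X : Type*} [Fintype X] [DecidableEq X] {m : ℕ} (G : SimpleGraph X)
    (hconn : G.Connected) (Y : Finset X) (hY : Y.Nonempty)
    (u v : X → EuclideanSpace ℝ (Fin m))
    (h : Tighter G (Y : Set X) v u) :
    List.Lex (· < ·) (lv G Y v) (lv G Y u) := by
  classical
  obtain ⟨-, hAB⟩ := h
  set f : X → ℝ := Sloc G u with hf
  set g : X → ℝ := Sloc G v with hg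
  have hnn : ∀ (w : X → EuclideanSpace ℝ (Fin m)) x, 0 ≤ Sloc G w x := by
    intro w x
    apply Real.sSup_nonneg
    rintro d ⟨y, -, rfl⟩
    positivity
  set SA := {d : ℝ | ∃ x, x ∉ (Y : Set X) ∧ f x = d ∧ g x < f x} with hSAdef
  set SB := {d : ℝ | ∃ x, x ∉ (Y : Set X) ∧ g x = d ∧ f x < g x} with hSBdef
  set A := sSup SA with hAdef
  set B := sSup SB with hBdef
  have hSAfin : SA.Finite :=
    (Set.finite_range f).subset (by rintro d ⟨x, -, rfl, -⟩; exact ⟨x, rfl⟩)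
  have hSBfin : SB.Finite :=
    (Set.finite_range g).subset (by rintro d ⟨x, -, rfl, -⟩; exact ⟨x, rfl⟩)
  have hBA : B < A := hAB
  have hBnn : 0 ≤ B := by
    rcases SB.eq_empty_or_nonempty with hE | hne
    · rw [hBdef, hE, Real.sSup_empty]
    · obtain ⟨d, x, hx, rfl, hlt⟩ := hne
      exact le_trans (le_trans (hnn u x) hlt.le)
        (le_csSup hSBfin.bddAbove ⟨x, hx, rfl, hlt⟩)
  have hSAne : SA.Nonempty := by
    by_contra hne
    rw [Set.not_nonempty_iff_eq_empty] at hne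
    rw [hAdef, hne, Real.sSup_empty] at hBA
    exact absurd hBA (not_lt.mpr hBnn)
  obtain ⟨x0, hx0Y, hx0f, hx0lt⟩ := hSAne.csSup_mem hSAfin
  have hx0Y' : x0 ∉ Y := by simpa using hx0Y
  have hbound : ∀ x, x ∉ Y → f x < g x → g x ≤ B := by
    intro x hx hlt
    exact le_csSup hSBfin.bddAbove ⟨x, by simpa using hx, rfl, hlt⟩
  -- the multiset setting
  set Z : Finset X := Finset.univ \ Y with hZdef
  have hZmem : ∀ x, x ∈ Z ↔ x ∉ Y := by intro x; simp [hZdef]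
  set M : Multiset ℝ := Z.val.map f with hMdef
  set N : Multiset ℝ := Z.val.map g with hNdef
  -- for x ∈ Z with g x ≥ r > B we get g x ≤ f x
  have hgle : ∀ x, x ∉ Y → ∀ r, B < r → r ≤ g x → g x ≤ f x := by
    intro x hx r hr hrg
    by_contra hgt
    push_neg at hgt
    exact absurd (le_trans hrg (hbound x hx hgt)) (not_le.mpr hr)
  -- threshold counts via finsets
  have hcard : ∀ (w : X → ℝ) (r : ℝ),
      Multiset.countP (r ≤ ·) (Z.val.map w) = (Z.filter (fun x => r ≤ w x)).card := by
    intro w r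
    rw [Multiset.countP_map]
    rfl
  -- strict inequality at A
  have hstrict : Multiset.countP (A ≤ ·) N < Multiset.countP (A ≤ ·) M := by
    rw [hcard, hcard]
    apply Finset.card_lt_card
    constructor
    · intro x hx
      rw [Finset.mem_filter] at hx ⊢
      obtain ⟨hxZ, hxg⟩ := hx
      exact ⟨hxZ, le_trans hxg (hgle x ((hZmem x).mp hxZ) A hBA hxg)⟩
    · intro hsub
      have hx0mem : x0 ∈ Z.filter (fun x => A ≤ f x) := by
        rw [Finset.mem_filter]
        exact ⟨(hZmem x0).mpr hx0Y', le_of_eq hx0f.symm⟩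
      have := hsub hx0mem
      rw [Finset.mem_filter] at this
      have hgA : g x0 < A := by
        have hx0A : f x0 = A := hx0f
        rw [← hx0A]; exact hx0lt
      exact absurd this.2 (not_le.mpr hgA)
  -- weak inequality above B
  have hweak : ∀ r, B < r → Multiset.countP (r ≤ ·) N ≤ Multiset.countP (r ≤ ·) M := by
    intro r hr
    rw [hcard, hcard]
    apply Finset.card_le_card
    intro x hx
    rw [Finset.mem_filter] at hx ⊢
    exact ⟨hx.1, le_trans hx.2 (hgle x ((hZmem x).mp hx.1) r hr hx.2)⟩
  -- the set of values where counts differ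
  set D : Finset ℝ := (M.toFinset ∪ N.toFinset).filter
      (fun r => Multiset.count r N ≠ Multiset.count r M) with hDdef
  have hDmem : ∀ r, Multiset.count r N ≠ Multiset.count r M → r ∈ D := by
    intro r hr
    rw [hDdef, Finset.mem_filter]
    refine ⟨?_, hr⟩
    rw [Finset.mem_union, Multiset.mem_toFinset, Multiset.mem_toFinset]
    by_contra hc
    push_neg at hc
    rw [Multiset.count_eq_zero.mpr hc.2, Multiset.count_eq_zero.mpr hc.1] at hr
    exact hr rfl
  have hDne : D.Nonempty := by
    by_contra hne
    rw [Finset.not_nonempty_iff_eq_empty] at hne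
    have hMN : N = M := by
      ext r
      by_contra hc
      have := hDmem r hc
      rw [hne] at this
      exact absurd this (Finset.notMem_empty r)
    rw [hMN] at hstrict
    exact lt_irrefl _ hstrict
  set μ := D.max' hDne with hμdef
  have hμD : μ ∈ D := D.max'_mem hDne
  have hμdiff : Multiset.count μ N ≠ Multiset.count μ M := (Finset.mem_filter.mp hμD).2
  have heq_above : ∀ ν, μ < ν → Multiset.count ν N = Multiset.count ν M := by
    intro ν hν
    by_contra hc
    exact absurd (D.le_max' ν (hDmem ν hc)) (not_le.mpr hν)
  have hfilter_eq : ∀ r, μ < r →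
      N.filter (r ≤ ·) = M.filter (r ≤ ·) := by
    intro r hr
    ext ν
    rw [Multiset.count_filter, Multiset.count_filter]
    split_ifs with hle
    · exact heq_above ν (lt_of_lt_of_le hr hle)
    · rfl
  have hAμ : A ≤ μ := by
    by_contra hc
    push_neg at hc
    have := hfilter_eq A hc
    rw [Multiset.countP_eq_card_filter, Multiset.countP_eq_card_filter, this] at hstrict
    exact lt_irrefl _ hstrict
  have hμB : B < μ := lt_of_lt_of_le hBA hAμ
  -- count μ N < count μ M
  have hcnt : Multiset.count μ N < Multiset.count μ M := by
    rcases lt_or_gt_of_ne hμdiff with h' | h'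
    · exact h'
    · exfalso
      have hsplit : ∀ (s : Multiset ℝ),
          Multiset.countP (μ ≤ ·) s = Multiset.count μ s + Multiset.countP (μ < ·) s := by
        intro s
        induction s using Multiset.induction_on with
        | empty => simp
        | cons a t iht =>
          rw [Multiset.countP_cons, Multiset.count_cons, Multiset.countP_cons, iht]
          rcases lt_trichotomy μ a with h | h | h
          · rw [if_pos h.le, if_neg (ne_of_lt h), if_pos h]
            omega
          · rw [if_pos (le_of_eq h), if_pos h, if_neg (by rw [h]; exact lt_irrefl a)]
            omega
          · rw [if_neg (not_le.mpr h), if_neg (ne_of_gt h), if_neg (not_lt.mpr h.le)]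
            omega
      have hgtfilter : Multiset.countP (μ < ·) N = Multiset.countP (μ < ·) M := by
        rw [Multiset.countP_eq_card_filter, Multiset.countP_eq_card_filter]
        congr 1
        ext ν
        rw [Multiset.count_filter, Multiset.count_filter]
        split_ifs with hle
        · exact heq_above ν hle
        · rfl
      have := hweak μ hμB
      rw [hsplit N, hsplit M, hgtfilter] at this
      omega
  -- assemble
  have hsort : ∀ (w : X → ℝ),
      ((Z.val.map w).sort (· ≤ ·)).reverse.Pairwise (· ≥ ·) := by
    intro w
    exact List.pairwise_reverse.mpr
      ((Multiset.pairwise_sort (Z.val.map w) (· ≤ ·)).imp fun h => h)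
  have hcount : ∀ (w : X → ℝ) (r : ℝ),
      ((Z.val.map w).sort (· ≤ ·)).reverse.count r = Multiset.count r (Z.val.map w) := by
    intro w r
    rw [List.count_reverse]
    conv_rhs => rw [← Multiset.sort_eq (Z.val.map w) (· ≤ ·)]
    exact (Multiset.coe_count _ _).symm
  have hlv : ∀ (w : X → EuclideanSpace ℝ (Fin m)), lv G Y w = ((Z.val.map (Sloc G w)).sort (· ≤ ·)).reverse := by
    intro w; rfl
  rw [hlv v, hlv u]
  apply lex_aux _ _ (hsort (Sloc G v)) (hsort (Sloc G u)) μ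
  · rw [hcount, hcount]; exact hcnt
  · intro ν hν
    rw [hcount, hcount]
    exact heq_above ν hν
end

section
/- Let G = (X, E, Y) be a finite connected graph with nonempty Y ⊆ X, and let g : Y → ℝ^m. Among all extensions u : X → ℝ^m of g, there exists one whose vector lv(u) of values of Su listed in non-increasing order is lexicographically minimal; any such lexicographic minimizer is a tight extension of g. -/
/-- `u` is a tight function on `G` relative to the boundary set `Y`. -/
noncomputable def Tight {X : Type*} {m : ℕ} (G : SimpleGraph X) (Y : Set X)
    (u : X → EuclideanSpace ℝ (Fin m)) : Prop :=
  ¬ ∃ v, Tighter G Y v u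

namespace TightAux

/-- descending sorted list of a multiset -/
noncomputable def dlist (s : Multiset ℝ) : List ℝ := (s.sort (· ≤ ·)).reverse

lemma lex_iff_lt {p q : List ℝ} : List.Lex (· < ·) p q ↔ p < q := Iff.rfl

lemma dlist_zero : dlist 0 = [] := by unfold dlist; simp

lemma dlist_cons_max {s : Multiset ℝ} {m : ℝ} (hmax : ∀ y ∈ s, y ≤ m) :
    dlist (m ::ₘ s) = m :: dlist s := by
  have h1 : (m ::ₘ s).sort (· ≤ ·) = s.sort (· ≤ ·) ++ [m] := by
    refine List.Perm.eq_of_pairwise' (r := (· ≤ ·)) ?_ ?_ ?_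
    rotate_right
    · rw [← Multiset.coe_eq_coe]
      simp only [Multiset.sort_eq]
      rw [show ((s.sort (· ≤ ·) ++ [m] : List ℝ) : Multiset ℝ)
            = ((s.sort (· ≤ ·) : List ℝ) : Multiset ℝ) + (([m] : List ℝ) : Multiset ℝ)
          from by rw [← Multiset.coe_add]]
      rw [Multiset.sort_eq]
      rw [add_comm]; rfl
    · exact Multiset.pairwise_sort _ _
    · rw [List.pairwise_append]
      refine ⟨Multiset.pairwise_sort _ _, List.pairwise_singleton _ m, ?_⟩
      intro a ha b hb
      rw [List.mem_singleton] at hb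
      subst hb
      exact hmax a (by rwa [Multiset.mem_sort] at ha)
  unfold dlist
  rw [h1]
  simp

lemma exists_max_map {X : Type*} [DecidableEq X] (s : Multiset X) (h : s ≠ 0) (f : X → ℝ) :
    ∃ x ∈ s, ∀ z ∈ s, f z ≤ f x := by
  obtain ⟨x, hx, hmax⟩ := Finset.exists_max_image s.toFinset f (by rwa [Multiset.toFinset_nonempty])
  exact ⟨x, Multiset.mem_toFinset.mp hx, fun z hz => hmax z (Multiset.mem_toFinset.mpr hz)⟩

lemma cons_le_cons' {a : ℝ} {l l' : List ℝ} (h : l ≤ l') : a :: l ≤ a :: l' := by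
  rcases lt_or_eq_of_le h with h | h
  · exact le_of_lt (lex_iff_lt.mp (List.Lex.cons (lex_iff_lt.mpr h)))
  · rw [h]

lemma le_of_cons_le_cons {a : ℝ} {l l' : List ℝ} (h : a :: l ≤ a :: l') : l ≤ l' := by
  rcases lt_or_eq_of_le h with h | h
  · have h2 := lex_iff_lt.mpr h
    cases h2 with
    | cons h3 => exact le_of_lt (lex_iff_lt.mp h3)
    | rel h3 => exact absurd h3 (lt_irrefl a)
  · rw [List.cons.injEq] at h
    rw [h.2]


lemma peel {X : Type*} [DecidableEq X] (f : X → ℝ) (s : Multiset X) {x : X} (hx : x ∈ s)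
    (hmax : ∀ z ∈ s, f z ≤ f x) :
    dlist (s.map f) = f x :: dlist ((s.erase x).map f) := by
  conv_lhs => rw [← Multiset.cons_erase hx]
  rw [Multiset.map_cons]
  refine dlist_cons_max ?_
  intro y hy
  obtain ⟨z, hz, rfl⟩ := Multiset.mem_map.mp hy
  exact hmax z (Multiset.mem_of_mem_erase hz)

/-- pointwise domination gives lexicographic (non-strict) comparison of descending lists -/
lemma dlist_map_le {X : Type*} [DecidableEq X] (f g : X → ℝ) :
    ∀ (n : ℕ) (s : Multiset X), Multiset.card s = n → (∀ x ∈ s, f x ≤ g x) →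
      dlist (s.map f) ≤ dlist (s.map g) := by
  intro n
  induction n with
  | zero =>
    intro s hcard _
    rw [Multiset.card_eq_zero] at hcard
    subst hcard
    simp
  | succ n ih =>
    intro s hcard hfg
    have hs : s ≠ 0 := by
      intro h; rw [h] at hcard; simp at hcard
    obtain ⟨xg, hxg, hxgmax⟩ := exists_max_map s hs g
    obtain ⟨xf, hxf, hxfmax⟩ := exists_max_map s hs f
    have hq := peel g s hxg hxgmax
    have hp := peel f s hxf hxfmax
    have hmfg : f xf ≤ g xg := le_trans (hfg xf hxf) (hxgmax xf hxf)
    rcases lt_or_eq_of_le hmfg with hlt | heq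
    · rw [hp, hq]
      exact le_of_lt (lex_iff_lt.mp (List.Lex.rel hlt))
    · have h1 : f xf ≤ g xf := hfg xf hxf
      have h2 : g xf ≤ g xg := hxgmax xf hxf
      have hgxf : g xf = g xg := le_antisymm h2 (heq ▸ h1)
      have hq' : dlist (s.map g) = g xf :: dlist ((s.erase xf).map g) :=
        peel g s hxf (fun z hz => (hxgmax z hz).trans hgxf.ge)
      rw [hp, hq', heq, ← hgxf]
      refine cons_le_cons' ?_
      refine ih (s.erase xf) ?_ ?_
      · rw [Multiset.card_erase_of_mem hxf, hcard]; rfl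
      · exact fun z hz => hfg z (Multiset.mem_of_mem_erase hz)

/-- key combinatorial lemma: a "tighter" profile is lexicographically strictly smaller. -/
lemma key_lex {X : Type*} [DecidableEq X] (f g : X → ℝ) (a b : ℝ) (hba : b < a) :
    ∀ (n : ℕ) (s : Multiset X), Multiset.card s = n →
      (∀ x ∈ s, g x < f x → f x ≤ b) →
      ∀ x0, x0 ∈ s → g x0 = a → f x0 < a →
      List.Lex (· < ·) (dlist (s.map f)) (dlist (s.map g)) := by
  intro n
  induction n with
  | zero =>
    intro s hcard _ x0 hx0 _ _
    rw [Multiset.card_eq_zero] at hcard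
    subst hcard
    simp at hx0
  | succ n ih =>
    intro s hcard H1 x0 hx0 hg0 hf0
    have hs : s ≠ 0 := fun h => by rw [h] at hx0; simp at hx0
    obtain ⟨xg, hxg, hxgmax⟩ := exists_max_map s hs g
    obtain ⟨xf, hxf, hxfmax⟩ := exists_max_map s hs f
    have hq := peel g s hxg hxgmax
    have hp := peel f s hxf hxfmax
    have ha_le : a ≤ g xg := hg0 ▸ hxgmax x0 hx0
    have hmfg : f xf ≤ g xg := by
      by_cases hcase : g xf < f xf
      · exact le_trans (H1 xf hxf hcase) (le_trans hba.le ha_le)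
      · exact le_trans (not_lt.mp hcase) (hxgmax xf hxf)
    rcases lt_or_eq_of_le hmfg with hlt | heq
    · rw [hp, hq]
      exact List.Lex.rel hlt
    · -- f xf = g xg = max; peel xf from both sides
      have hfxf_ge_a : a ≤ f xf := heq ▸ ha_le
      have hnot : ¬ g xf < f xf := fun hcase =>
        lt_irrefl a (lt_of_le_of_lt (le_trans hfxf_ge_a (H1 xf hxf hcase)) hba)
      have hgxf : g xf = g xg := le_antisymm (hxgmax xf hxf) (heq ▸ not_lt.mp hnot)
      have hq' : dlist (s.map g) = g xf :: dlist ((s.erase xf).map g) :=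
        peel g s hxf (fun z hz => (hxgmax z hz).trans hgxf.ge)
      have hne : x0 ≠ xf := fun h => absurd (h ▸ hf0) (not_lt.mpr hfxf_ge_a)
      rw [hp, hq', heq, ← hgxf]
      refine List.Lex.cons ?_
      refine ih (s.erase xf) ?_ ?_ x0 ?_ hg0 hf0
      · rw [Multiset.card_erase_of_mem hxf, hcard]; rfl
      · exact fun z hz => H1 z (Multiset.mem_of_mem_erase hz)
      · exact (Multiset.mem_erase_of_ne hne).mpr hx0


section Sloc

variable {X : Type*} {m : ℕ} (G : SimpleGraph X)

lemma sloc_set_eq [Fintype X] [DecidableRel G.Adj] (u : X → EuclideanSpace ℝ (Fin m)) (x : X) :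
    {d : ℝ | ∃ y, G.Adj x y ∧ d = ‖u y - u x‖}
      = ↑((G.neighborFinset x).image (fun y => ‖u y - u x‖)) := by
  ext d
  simp only [Set.mem_setOf_eq, Finset.coe_image, Set.mem_image, Finset.mem_coe,
    SimpleGraph.mem_neighborFinset]
  constructor
  · rintro ⟨y, hy, rfl⟩; exact ⟨y, hy, rfl⟩
  · rintro ⟨y, hy, rfl⟩; exact ⟨y, hy, rfl⟩

lemma sloc_eq_sup' [Fintype X] [DecidableRel G.Adj] (u : X → EuclideanSpace ℝ (Fin m)) (x : X)
    (h : (G.neighborFinset x).Nonempty) :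
    Sloc G u x = (G.neighborFinset x).sup' h (fun y => ‖u y - u x‖) := by
  rw [Finset.sup'_eq_csSup_image]
  show sSup _ = _
  rw [sloc_set_eq G u x, Finset.coe_image]

lemma sloc_eq_zero [Fintype X] [DecidableRel G.Adj] (u : X → EuclideanSpace ℝ (Fin m)) (x : X)
    (h : ¬ (G.neighborFinset x).Nonempty) : Sloc G u x = 0 := by
  have hempty : {d : ℝ | ∃ y, G.Adj x y ∧ d = ‖u y - u x‖} = ∅ := by
    rw [Set.eq_empty_iff_forall_notMem]
    rintro d ⟨y, hy, rfl⟩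
    exact h ⟨y, (SimpleGraph.mem_neighborFinset G x y).mpr hy⟩
  show sSup _ = 0
  rw [hempty, Real.sSup_empty]

lemma sloc_nonneg (u : X → EuclideanSpace ℝ (Fin m)) (x : X) : 0 ≤ Sloc G u x := by
  refine Real.sSup_nonneg ?_
  rintro d ⟨y, hy, rfl⟩
  exact norm_nonneg _

lemma sloc_mono [Fintype X] {u v : X → EuclideanSpace ℝ (Fin m)}
    (h : ∀ p q : X, ‖v p - v q‖ ≤ ‖u p - u q‖) (x : X) : Sloc G v x ≤ Sloc G u x := by
  classical
  by_cases hne : (G.neighborFinset x).Nonempty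
  · rw [sloc_eq_sup' G v x hne, sloc_eq_sup' G u x hne]
    refine Finset.sup'_le _ _ ?_
    intro y hy
    exact le_trans (h y x) (Finset.le_sup' (fun y => ‖u y - u x‖) hy)
  · rw [sloc_eq_zero G v x hne, sloc_eq_zero G u x hne]

lemma continuous_finset_sup' {ι α : Type*} [TopologicalSpace α] (t : Finset ι) (ht : t.Nonempty)
    (f : ι → α → ℝ) (hf : ∀ i, Continuous (f i)) :
    Continuous fun a => t.sup' ht (fun i => f i a) := by
  induction ht using Finset.Nonempty.cons_induction with
  | singleton a => simpa using hf a
  | cons a s ha hs ih =>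
    have : (fun x => (Finset.cons a s ha).sup' (Finset.cons_nonempty ha) (fun i => f i x))
        = fun x => max (f a x) (s.sup' hs (fun i => f i x)) := by
      funext x
      rw [Finset.sup'_cons]
    rw [this]
    exact (hf a).max ih

lemma sloc_continuous [Fintype X] (x : X) :
    Continuous fun u : X → EuclideanSpace ℝ (Fin m) => Sloc G u x := by
  classical
  by_cases h : (G.neighborFinset x).Nonempty
  · have heq : (fun u : X → EuclideanSpace ℝ (Fin m) => Sloc G u x)
        = fun u => (G.neighborFinset x).sup' h (fun y => ‖u y - u x‖) :=
      funext fun u => sloc_eq_sup' G u x h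
    rw [heq]
    exact continuous_finset_sup' _ h _
      (fun y => ((continuous_apply y).sub (continuous_apply x)).norm)
  · have heq : (fun u : X → EuclideanSpace ℝ (Fin m) => Sloc G u x) = fun _ => (0:ℝ) :=
      funext fun u => sloc_eq_zero G u x h
    rw [heq]
    exact continuous_const

end Sloc

/-- existence of a lexicographic minimizer over a compact set -/
lemma exists_lexmin {X : Type*} [Fintype X] [DecidableEq X] {m : ℕ} (G : SimpleGraph X) :
    ∀ (n : ℕ) (s : Multiset X), Multiset.card s = n →
      ∀ (K : Set (X → EuclideanSpace ℝ (Fin m))), IsCompact K → K.Nonempty →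
      ∃ u ∈ K, ∀ v ∈ K, dlist (s.map (Sloc G u)) ≤ dlist (s.map (Sloc G v)) := by
  intro n
  induction n with
  | zero =>
    intro s hcard K _ hne
    rw [Multiset.card_eq_zero] at hcard
    subst hcard
    obtain ⟨u, hu⟩ := hne
    refine ⟨u, hu, fun v _ => ?_⟩
    rw [Multiset.map_zero, Multiset.map_zero]
  | succ n ih =>
    intro s hcard K hK hne
    classical
    have hs : s ≠ 0 := fun h => by rw [h] at hcard; simp at hcard
    have htf : s.toFinset.Nonempty := by rwa [Multiset.toFinset_nonempty]
    set F : (X → EuclideanSpace ℝ (Fin m)) → ℝ :=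
      fun u => s.toFinset.sup' htf (fun x => Sloc G u x) with hF
    have hFcont : Continuous F :=
      continuous_finset_sup' _ htf _ (fun x => sloc_continuous G x)
    have hFmax : ∀ u, ∀ x ∈ s, Sloc G u x ≤ F u := fun u x hx =>
      Finset.le_sup' _ (Multiset.mem_toFinset.mpr hx)
    have hFatt : ∀ u, ∃ x ∈ s, Sloc G u x = F u := by
      intro u
      obtain ⟨x, hx, hmax⟩ := exists_max_map s hs (Sloc G u)
      refine ⟨x, hx, le_antisymm (hFmax u x hx) ?_⟩
      refine Finset.sup'_le _ _ ?_
      intro y hy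
      exact hmax y (Multiset.mem_toFinset.mp hy)
    obtain ⟨u1, hu1K, hu1min⟩ := hK.exists_isMinOn hne hFcont.continuousOn
    set μ : ℝ := F u1 with hμ
    have hμmin : ∀ v ∈ K, μ ≤ F v := fun v hv => hu1min hv
    -- the compact pieces
    set Kx : X → Set (X → EuclideanSpace ℝ (Fin m)) :=
      fun x => K ∩ ({w | F w = μ} ∩ {w | Sloc G w x = μ}) with hKx
    have hKxcompact : ∀ x, IsCompact (Kx x) := by
      intro x
      refine hK.inter_right ?_
      exact ((isClosed_singleton.preimage hFcont).inter
        (isClosed_singleton.preimage (sloc_continuous G x)))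
    have hKxsub : ∀ x, Kx x ⊆ K := fun x => Set.inter_subset_left
    -- peel identity on Kx x
    have hpeel : ∀ x, x ∈ s → ∀ w ∈ Kx x,
        dlist (s.map (Sloc G w)) = μ :: dlist ((s.erase x).map (Sloc G w)) := by
      intro x hxs w hw
      obtain ⟨hwK, hwF, hwx⟩ := hw
      have := peel (Sloc G w) s hxs (fun z hz => by
        rw [hwx]; rw [← hwF]; exact hFmax w z hz)
      rwa [hwx] at this
    set T : Finset X := s.toFinset.filter (fun x => (Kx x).Nonempty) with hT
    have hTne : T.Nonempty := by
      obtain ⟨x1, hx1s, hx1⟩ := hFatt u1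
      exact ⟨x1, Finset.mem_filter.mpr ⟨Multiset.mem_toFinset.mpr hx1s,
        ⟨u1, hu1K, rfl, hx1⟩⟩⟩
    have hTmem : ∀ x ∈ T, x ∈ s ∧ (Kx x).Nonempty := by
      intro x hx
      rw [Finset.mem_filter] at hx
      exact ⟨Multiset.mem_toFinset.mp hx.1, hx.2⟩
    have hrec : ∀ x ∈ T, ∃ w ∈ Kx x, ∀ v ∈ Kx x,
        dlist ((s.erase x).map (Sloc G w)) ≤ dlist ((s.erase x).map (Sloc G v)) := by
      intro x hx
      obtain ⟨hxs, hxne⟩ := hTmem x hx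
      exact ih (s.erase x) (by rw [Multiset.card_erase_of_mem hxs, hcard]; rfl)
        (Kx x) (hKxcompact x) hxne
    choose ux hux1 hux2 using hrec
    obtain ⟨xs, hxsmem, hxsmin⟩ := T.attach.exists_min_image
      (fun x => dlist (s.map (Sloc G (ux x.1 x.2)))) (Finset.attach_nonempty_iff.mpr hTne)
    set u := ux xs.1 xs.2 with hu
    have huKx : u ∈ Kx xs.1 := hux1 xs.1 xs.2
    refine ⟨u, hKxsub _ huKx, ?_⟩
    intro v hv
    obtain ⟨xv, hxvs, hxvatt⟩ := hFatt v
    have hxss : xs.1 ∈ s := (hTmem xs.1 xs.2).1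
    have hupeel : dlist (s.map (Sloc G u)) = μ :: dlist ((s.erase xs.1).map (Sloc G u)) :=
      hpeel xs.1 hxss u huKx
    have hvpeel : dlist (s.map (Sloc G v)) = F v :: dlist ((s.erase xv).map (Sloc G v)) := by
      have := peel (Sloc G v) s hxvs (fun z hz => by rw [hxvatt]; exact hFmax v z hz)
      rwa [hxvatt] at this
    rcases lt_or_eq_of_le (hμmin v hv) with hlt | heqμ
    · rw [hupeel, hvpeel]
      exact le_of_lt (lex_iff_lt.mp (List.Lex.rel hlt))
    · -- F v = μ : v lies in Kx xv
      have hvKx : v ∈ Kx xv := ⟨hv, heqμ.symm, heqμ ▸ hxvatt⟩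
      have hxvT : xv ∈ T := Finset.mem_filter.mpr
        ⟨Multiset.mem_toFinset.mpr hxvs, ⟨v, hvKx⟩⟩
      have h1 : dlist (s.map (Sloc G u)) ≤ dlist (s.map (Sloc G (ux xv hxvT))) :=
        hxsmin ⟨xv, hxvT⟩ (Finset.mem_attach _ _)
      have h2 : dlist ((s.erase xv).map (Sloc G (ux xv hxvT)))
          ≤ dlist ((s.erase xv).map (Sloc G v)) := hux2 xv hxvT v hvKx
      have h3 : dlist (s.map (Sloc G (ux xv hxvT)))
          = μ :: dlist ((s.erase xv).map (Sloc G (ux xv hxvT))) :=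
        hpeel xv hxvs _ (hux1 xv hxvT)
      have h4 : dlist (s.map (Sloc G v)) = μ :: dlist ((s.erase xv).map (Sloc G v)) :=
        hpeel xv hxvs v hvKx
      rw [h4]
      refine le_trans h1 ?_
      rw [h3]
      exact cons_le_cons' h2

end TightAux


theorem stmt1 {X : Type*} [Fintype X] [DecidableEq X] {m : ℕ} (G : SimpleGraph X)
    (hconn : G.Connected) (Y : Finset X) (hY : Y.Nonempty)
    (g : X → EuclideanSpace ℝ (Fin m)) :
    (∃ u : X → EuclideanSpace ℝ (Fin m), (∀ y ∈ Y, u y = g y) ∧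
      ∀ v : X → EuclideanSpace ℝ (Fin m), (∀ y ∈ Y, v y = g y) →
        ¬ List.Lex (· < ·) (lv G Y v) (lv G Y u)) ∧
    (∀ u : X → EuclideanSpace ℝ (Fin m), (∀ y ∈ Y, u y = g y) →
      (∀ v : X → EuclideanSpace ℝ (Fin m), (∀ y ∈ Y, v y = g y) →
        ¬ List.Lex (· < ·) (lv G Y v) (lv G Y u)) →
      Tight G (Y : Set X) u) := by
  classical
  have hlv : ∀ w : X → EuclideanSpace ℝ (Fin m),
      lv G Y w = TightAux.dlist (((Finset.univ \ Y).val).map (Sloc G w)) := fun _ => rfl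
  constructor
  · -- existence of a lexicographic minimizer
    obtain ⟨y0, hy0⟩ := hY
    set R : ℝ := Y.sup' ⟨y0, hy0⟩ (fun y => ‖g y‖) with hRdef
    have hgR : ∀ y ∈ Y, ‖g y‖ ≤ R := fun y hy => Finset.le_sup' (fun y => ‖g y‖) hy
    have hR0 : 0 ≤ R := le_trans (norm_nonneg (g y0)) (hgR y0 hy0)
    have hcoord : ∀ (p : EuclideanSpace ℝ (Fin m)) (i : Fin m), |p i| ≤ ‖p‖ := by
      intro p i
      rw [EuclideanSpace.norm_eq, ← Real.sqrt_sq_eq_abs]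
      apply Real.sqrt_le_sqrt
      calc p i ^ 2 = ‖p i‖ ^ 2 := by rw [Real.norm_eq_abs, sq_abs]
        _ ≤ ∑ j, ‖p j‖ ^ 2 := Finset.single_le_sum (f := fun j => ‖p j‖ ^ 2)
            (fun j _ => sq_nonneg _) (Finset.mem_univ i)
    set c : ℝ → ℝ := fun t => max (-R) (min R t) with hcdef
    have hcabs : ∀ t, |c t| ≤ R := by
      intro t
      rw [abs_le]
      constructor
      · exact neg_le_of_neg_le (neg_le_of_neg_le (le_max_left _ _))
      · exact max_le (by linarith) (min_le_left _ _)
    have hcfix : ∀ t, |t| ≤ R → c t = t := by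
      intro t ht
      rw [abs_le] at ht
      show max (-R) (min R t) = t
      rw [min_eq_right ht.2, max_eq_right ht.1]
    have hclip : ∀ a b : ℝ, |c a - c b| ≤ |a - b| := by
      intro a b
      have h1 : c a = max (min R a) (-R) := by rw [max_comm]
      have h2 : c b = max (min R b) (-R) := by rw [max_comm]
      calc |c a - c b| = |max (min R a) (-R) - max (min R b) (-R)| := by rw [h1, h2]
        _ ≤ |min R a - min R b| := abs_max_sub_max_le_abs _ _ _
        _ ≤ max |R - R| |a - b| := abs_min_sub_min_le_max _ _ _ _
        _ = |a - b| := by simp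
    set P : EuclideanSpace ℝ (Fin m) → EuclideanSpace ℝ (Fin m) :=
      fun p => WithLp.toLp 2 (fun i => c (p i)) with hPdef
    have hPapp : ∀ (p q : EuclideanSpace ℝ (Fin m)) (i : Fin m),
        (P p - P q) i = c (p i) - c (q i) := fun p q i => rfl
    have hPlip : ∀ p q : EuclideanSpace ℝ (Fin m), ‖P p - P q‖ ≤ ‖p - q‖ := by
      intro p q
      rw [EuclideanSpace.norm_eq, EuclideanSpace.norm_eq]
      apply Real.sqrt_le_sqrt
      apply Finset.sum_le_sum
      intro i _
      have h2 : (p - q) i = p i - q i := rfl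
      rw [hPapp p q i, h2, Real.norm_eq_abs, Real.norm_eq_abs]
      exact pow_le_pow_left₀ (abs_nonneg _) (hclip (p i) (q i)) 2
    have hPbox : ∀ p : EuclideanSpace ℝ (Fin m), ∀ i, |(P p) i| ≤ R := fun p i => hcabs (p i)
    have hPfix : ∀ p : EuclideanSpace ℝ (Fin m), (∀ i, |p i| ≤ R) → P p = p := by
      intro p hp
      ext i
      exact hcfix (p i) (hp i)
    set B : Set (EuclideanSpace ℝ (Fin m)) := {p | ∀ i, |p i| ≤ R} with hBdef
    have hgB : ∀ y ∈ Y, g y ∈ B := fun y hy i => le_trans (hcoord (g y) i) (hgR y hy)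
    have hBclosed : IsClosed B := by
      have hBeq : B = ⋂ i, {p : EuclideanSpace ℝ (Fin m) | |p i| ≤ R} := by
        ext p
        simp [hBdef, Set.mem_iInter]
      rw [hBeq]
      refine isClosed_iInter fun i => ?_
      exact isClosed_le ((EuclideanSpace.proj (𝕜 := ℝ) i).continuous.abs) continuous_const
    have hBsub : B ⊆ Metric.closedBall 0 (Real.sqrt (m * R ^ 2)) := by
      intro p hp
      rw [Metric.mem_closedBall, dist_zero_right, EuclideanSpace.norm_eq]
      apply Real.sqrt_le_sqrt
      calc ∑ i, ‖p i‖ ^ 2 ≤ ∑ _i : Fin m, R ^ 2 :=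
            Finset.sum_le_sum (fun i _ => by
              rw [Real.norm_eq_abs]
              exact pow_le_pow_left₀ (abs_nonneg _) (hp i) 2)
        _ = m * R ^ 2 := by
            rw [Finset.sum_const, Finset.card_univ, Fintype.card_fin, nsmul_eq_mul]
    have hBcompact : IsCompact B :=
      IsCompact.of_isClosed_subset (isCompact_closedBall 0 _) hBclosed hBsub
    set K : Set (X → EuclideanSpace ℝ (Fin m)) :=
      (Set.univ.pi fun _ : X => B) ∩ {u | ∀ y ∈ Y, u y = g y} with hKdef
    have hKclosed2 : IsClosed {u : X → EuclideanSpace ℝ (Fin m) | ∀ y ∈ Y, u y = g y} := by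
      have hKeq : {u : X → EuclideanSpace ℝ (Fin m) | ∀ y ∈ Y, u y = g y}
          = ⋂ y ∈ Y, {u : X → EuclideanSpace ℝ (Fin m) | u y = g y} := by
        ext u
        simp
      rw [hKeq]
      exact isClosed_biInter fun y _ => isClosed_eq (continuous_apply y) continuous_const
    have hKcompact : IsCompact K :=
      (isCompact_univ_pi fun _ => hBcompact).inter_right hKclosed2
    have hKne : K.Nonempty := by
      refine ⟨fun x => if x ∈ Y then g x else g y0, fun x _ => ?_, fun y hy => ?_⟩
      · dsimp only
        split_ifs with h
        · exact hgB x h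
        · exact hgB y0 hy0
      · simp [hy]
    obtain ⟨u, huK, humin⟩ := TightAux.exists_lexmin G (Multiset.card ((Finset.univ \ Y).val))
      (Finset.univ \ Y).val rfl K hKcompact hKne
    have huY : ∀ y ∈ Y, u y = g y := huK.2
    refine ⟨u, huY, ?_⟩
    intro v hvY hlex
    set v' : X → EuclideanSpace ℝ (Fin m) := fun x => P (v x) with hv'def
    have hv'K : v' ∈ K := by
      constructor
      · intro x _
        exact fun i => hPbox (v x) i
      · intro y hy
        show P (v y) = g y
        rw [hvY y hy]
        exact hPfix (g y) (hgB y hy)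
    have hnorm : ∀ p q : X, ‖v' p - v' q‖ ≤ ‖v p - v q‖ := fun p q => hPlip (v p) (v q)
    have hsle : ∀ x ∈ (Finset.univ \ Y).val, Sloc G v' x ≤ Sloc G v x :=
      fun x _ => TightAux.sloc_mono G hnorm x
    have hdl : TightAux.dlist (((Finset.univ \ Y).val).map (Sloc G v'))
        ≤ TightAux.dlist (((Finset.univ \ Y).val).map (Sloc G v)) :=
      TightAux.dlist_map_le (Sloc G v') (Sloc G v) _ _ rfl hsle
    have h1 := humin v' hv'K
    rw [hlv, hlv] at hlex
    have hlt := TightAux.lex_iff_lt.mp hlex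
    exact absurd (lt_of_le_of_lt (le_trans h1 hdl) hlt) (lt_irrefl _)
  · -- a lexicographic minimizer is tight
    intro u huY hmin
    rintro ⟨v, hvY, hsup⟩
    set SA := {d : ℝ | ∃ x, x ∉ (Y : Set X) ∧ Sloc G u x = d ∧ Sloc G v x < Sloc G u x} with hSAdef
    set SB := {d : ℝ | ∃ x, x ∉ (Y : Set X) ∧ Sloc G v x = d ∧ Sloc G u x < Sloc G v x} with hSBdef
    have hSAfin : SA.Finite :=
      (Set.finite_range (Sloc G u)).subset (by rintro d ⟨x, -, h, -⟩; exact ⟨x, h⟩)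
    have hSBfin : SB.Finite :=
      (Set.finite_range (Sloc G v)).subset (by rintro d ⟨x, -, h, -⟩; exact ⟨x, h⟩)
    have hSBnonneg : 0 ≤ sSup SB := by
      rcases Set.eq_empty_or_nonempty SB with h | h
      · rw [h, Real.sSup_empty]
      · refine Real.sSup_nonneg ?_
        rintro d ⟨x, -, rfl, -⟩
        exact TightAux.sloc_nonneg G v x
    have hSAne : SA.Nonempty := by
      by_contra h
      rw [Set.not_nonempty_iff_eq_empty] at h
      rw [h, Real.sSup_empty] at hsup
      exact absurd (lt_of_le_of_lt hSBnonneg hsup) (lt_irrefl _)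
    obtain ⟨x0, hx0Y, hx0a, hx0lt⟩ := hSAne.csSup_mem hSAfin
    have hH1 : ∀ x ∈ (Finset.univ \ Y).val, Sloc G u x < Sloc G v x → Sloc G v x ≤ sSup SB := by
      intro x hx hxlt
      refine le_csSup hSBfin.bddAbove ?_
      have hxY : x ∉ Y := (Finset.mem_sdiff.mp (Finset.mem_def.mpr hx)).2
      exact ⟨x, by simpa using hxY, rfl, hxlt⟩
    have hx0mem : x0 ∈ (Finset.univ \ Y).val := by
      refine Finset.mem_def.mp (Finset.mem_sdiff.mpr ⟨Finset.mem_univ x0, ?_⟩)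
      simpa using hx0Y
    have hkey := TightAux.key_lex (Sloc G v) (Sloc G u) (sSup SA) (sSup SB) hsup
      (Multiset.card ((Finset.univ \ Y).val)) (Finset.univ \ Y).val rfl hH1 x0 hx0mem hx0a
      (hx0a ▸ hx0lt)
    refine hmin v (fun y hy => (hvY y (Finset.mem_coe.mpr hy)).trans (huY y hy)) ?_
    rw [hlv, hlv]
    exact hkey
end

section
/- Let G = (X, E, Y) be a finite connected graph with nonempty Y ⊆ X and g : Y → ℝ^m. There is a unique tight extension u : X → ℝ^m of g; moreover, this u is tighter than every other extension v ≠ u of g. -/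
open Finset

noncomputable section

namespace TightProof

open scoped Classical
set_option linter.unusedSectionVars false
set_option maxHeartbeats 1000000

variable {X : Type*} [Fintype X]

/-! ### Order statistics machinery -/

lemma take_sum_eq : ∀ (l : List ℝ) (k : ℕ),
    (l.take k).sum = ∑ j ∈ Finset.range k, l.getD j 0 := by
  intro l
  induction l with
  | nil => intro k; simp
  | cons a t ih =>
    intro k
    cases k with
    | zero => simp
    | succ k =>
      rw [List.take_succ_cons, List.sum_cons, ih k, Finset.sum_range_succ']
      simp [List.getD_cons_succ, List.getD_cons_zero, add_comm]

lemma sorted_count (r : ℝ) : ∀ (l : List ℝ), l.Pairwise (· ≥ ·) → ∀ (j : ℕ) (hj : j < l.length),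
    (r ≤ l.get ⟨j, hj⟩ ↔ j < l.countP (fun v => decide (r ≤ v))) := by
  intro l
  induction l with
  | nil => intro _ j hj; simp at hj
  | cons a t ih =>
    intro h j hj
    have hat : ∀ b ∈ t, a ≥ b := (List.pairwise_cons.1 h).1
    have hts : t.Pairwise (· ≥ ·) := (List.pairwise_cons.1 h).2
    cases j with
    | zero =>
      simp only [List.get, List.countP_cons]
      constructor
      · intro hra; rw [if_pos (by simpa using hra)]; omega
      · intro hpos
        by_cases hra : r ≤ a
        · exact hra
        · rw [if_neg (by simpa using hra)] at hpos
          obtain ⟨v, hv, hrv⟩ := List.countP_pos_iff.1 (show 0 < t.countP (fun v => decide (r ≤ v)) by omega)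
          exact le_trans (of_decide_eq_true hrv) (hat v hv)
    | succ j =>
      have hj' : j < t.length := by simpa using hj
      have iht := ih hts j hj'
      show r ≤ t.get ⟨j, hj'⟩ ↔ _
      rw [List.countP_cons, iht]
      by_cases hra : r ≤ a
      · rw [if_pos (by simpa using hra)]; omega
      · rw [if_neg (by simpa using hra)]
        have hle : ¬ r ≤ t.get ⟨j, hj'⟩ := fun hc => hra (le_trans hc (hat _ (t.get_mem ⟨j, hj'⟩)))
        have h0 : t.countP (fun v => decide (r ≤ v)) ≤ j := by
          by_contra hc; exact hle (iht.2 (by omega))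
        omega



/-- sorted (descending) list of values of `c` on `F` -/
def sortl (F : Finset X) (c : X → ℝ) : List ℝ := ((F.val.map c).sort (· ≤ ·)).reverse

/-- number of vertices in `F` where `c` is at least `r` -/
def Ncnt (F : Finset X) (c : X → ℝ) (r : ℝ) : ℕ := (F.filter (fun x => r ≤ c x)).card

/-- sum of the `k` largest values (max of sums over subsets of size ≤ k) -/
def Sk (F : Finset X) (k : ℕ) (c : X → ℝ) : ℝ :=
  (F.powerset.filter (fun A => A.card ≤ k)).sup' ⟨∅, by simp⟩ (fun A => ∑ x ∈ A, c x)

lemma sortl_sorted (F : Finset X) (c : X → ℝ) : (sortl F c).Pairwise (· ≥ ·) := by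
  have h := Multiset.pairwise_sort (F.val.map c) (· ≤ ·)
  exact List.pairwise_reverse.2 h

lemma sortl_coe (F : Finset X) (c : X → ℝ) : (↑(sortl F c) : Multiset ℝ) = F.val.map c := by
  rw [sortl, Multiset.coe_reverse, Multiset.sort_eq]

lemma sortl_length (F : Finset X) (c : X → ℝ) : (sortl F c).length = F.card := by
  have := congrArg Multiset.card (sortl_coe F c)
  simpa using this

lemma sortl_count (F : Finset X) (c : X → ℝ) (r : ℝ) :
    (sortl F c).countP (fun v => decide (r ≤ v)) = Ncnt F c r := by
  have h1 := Multiset.coe_countP (fun v => r ≤ v) (sortl F c)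
  rw [sortl_coe, Multiset.countP_map] at h1
  rw [← h1, Ncnt, Finset.card_filter]
  simp [Multiset.countP_eq_card_filter]
  rfl

lemma sortl_mem (F : Finset X) (c : X → ℝ) {v : ℝ} (hv : v ∈ sortl F c) :
    ∃ x ∈ F, c x = v := by
  have : v ∈ (↑(sortl F c) : Multiset ℝ) := by exact_mod_cast hv
  rw [sortl_coe] at this
  obtain ⟨x, hx, hcx⟩ := Multiset.mem_map.1 this
  exact ⟨x, hx, hcx⟩

lemma sortl_getD_nonneg (F : Finset X) (c : X → ℝ) (hc : ∀ x ∈ F, 0 ≤ c x) (j : ℕ) :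
    0 ≤ (sortl F c).getD j 0 := by
  by_cases hj : j < (sortl F c).length
  · rw [List.getD_eq_get _ _ ⟨_, hj⟩]
    obtain ⟨x, hx, hcx⟩ := sortl_mem F c (List.get_mem _ ⟨j, hj⟩)
    rw [← hcx]; exact hc x hx
  · rw [List.getD_eq_default _ _ (by omega)]

lemma exists_top_subset (F : Finset X) (c : X → ℝ) (k : ℕ) :
    ∃ A : Finset X, A ⊆ F ∧ A.card ≤ k ∧
      (A.val.map c) = (↑((sortl F c).take k) : Multiset ℝ) := by
  induction k with
  | zero => exact ⟨∅, empty_subset F, le_refl 0, by simp⟩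
  | succ k ih =>
    obtain ⟨A, hAF, hcard, hmap⟩ := ih
    by_cases hk : k < (sortl F c).length
    · have hsub : A.val ≤ F.val := val_le_iff.2 hAF
      have hFA : A.val + (F.val - A.val) = F.val := add_tsub_cancel_of_le hsub
      have hrest : (F.val - A.val).map c = (↑((sortl F c).drop k) : Multiset ℝ) := by
        have h1 : F.val.map c = (↑((sortl F c).take k) : Multiset ℝ) + (F.val - A.val).map c := by
          conv_lhs => rw [← hFA]
          rw [Multiset.map_add, hmap]
        have h2 : F.val.map c
            = (↑((sortl F c).take k) : Multiset ℝ) + (↑((sortl F c).drop k) : Multiset ℝ) := by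
          rw [Multiset.coe_add, List.take_append_drop, sortl_coe]
        exact (add_left_cancel (h1.symm.trans h2))
      have hmem : (sortl F c)[k] ∈ ((sortl F c).drop k) := by
        have h0 : ((sortl F c).drop k)[0]'(by rw [List.length_drop]; omega) = (sortl F c)[k] := by
          rw [List.getElem_drop]; simp
        exact h0 ▸ List.getElem_mem _
      have hmm' : (sortl F c)[k] ∈ (F.val - A.val).map c := by
        rw [hrest]; exact_mod_cast hmem
      obtain ⟨x, hx, hcx⟩ := Multiset.mem_map.1 hmm'
      have hxF : x ∈ F := Multiset.mem_of_le (tsub_le_self) hx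
      have hxA : x ∉ A := by
        intro hxA
        have hcount := Multiset.count_sub x F.val A.val
        have h1 : Multiset.count x F.val = 1 := Multiset.count_eq_one_of_mem F.nodup hxF
        have h2 : Multiset.count x A.val = 1 := Multiset.count_eq_one_of_mem A.nodup hxA
        have h3 : 1 ≤ Multiset.count x (F.val - A.val) := Multiset.one_le_count_iff_mem.2 hx
        omega
      refine ⟨insert x A, ?_, ?_, ?_⟩
      · exact insert_subset hxF hAF
      · rw [card_insert_of_notMem hxA]; omega
      · rw [insert_val_of_notMem hxA, Multiset.map_cons, hmap, hcx]
        rw [List.take_succ, List.getElem?_eq_getElem hk]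
        have hperm : ((sortl F c).take k ++ [(sortl F c)[k]]).Perm
            ((sortl F c)[k] :: (sortl F c).take k) := List.perm_append_singleton _ _
        calc ((sortl F c)[k] ::ₘ ↑((sortl F c).take k) : Multiset ℝ)
            = (↑((sortl F c)[k] :: (sortl F c).take k) : Multiset ℝ) := rfl
          _ = (↑((sortl F c).take k ++ [(sortl F c)[k]]) : Multiset ℝ) :=
              (Multiset.coe_eq_coe.2 hperm).symm
          _ = _ := by simp
    · have h1 : (sortl F c).take (k+1) = (sortl F c).take k := by
        rw [List.take_of_length_le (by omega), List.take_of_length_le (by omega)]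
      exact ⟨A, hAF, by omega, by rw [h1]; exact hmap⟩

lemma mem_sk_aux (F : Finset X) (k : ℕ) (c : X → ℝ) {A : Finset X} (h1 : A ⊆ F)
    (h2 : A.card ≤ k) : ∑ x ∈ A, c x ≤ Sk F k c := by
  unfold Sk
  exact le_sup' (fun A => ∑ x ∈ A, c x) (mem_filter.2 ⟨mem_powerset.2 h1, h2⟩)

lemma TS_le_sk (F : Finset X) (c : X → ℝ) (k : ℕ) :
    ∑ j ∈ Finset.range k, (sortl F c).getD j 0 ≤ Sk F k c := by
  obtain ⟨A, hAF, hcard, hmap⟩ := exists_top_subset F c k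
  have hsum : ∑ x ∈ A, c x = ((sortl F c).take k).sum := by
    rw [show ∑ x ∈ A, c x = (A.val.map c).sum from rfl, hmap, Multiset.sum_coe]
  rw [← take_sum_eq, ← hsum]
  exact mem_sk_aux F k c hAF hcard

lemma sk_le_TS (F : Finset X) (c : X → ℝ) (hc : ∀ x ∈ F, 0 ≤ c x) (k : ℕ) :
    Sk F k c ≤ ∑ j ∈ Finset.range k, (sortl F c).getD j 0 := by
  apply sup'_le
  intro A hA
  obtain ⟨hA1, hA2⟩ := mem_filter.1 hA
  have hAF : A ⊆ F := mem_powerset.1 hA1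
  have hcA : ∀ x ∈ A, 0 ≤ c x := fun x hx => hc x (hAF hx)
  have hent : ∀ j, (sortl A c).getD j 0 ≤ (sortl F c).getD j 0 := by
    intro j
    by_cases hj : j < (sortl A c).length
    · rw [List.getD_eq_get _ _ ⟨_, hj⟩]
      have hself : j < Ncnt A c ((sortl A c).get ⟨j, hj⟩) := by
        rw [← sortl_count]
        exact (sorted_count _ _ (sortl_sorted A c) j hj).1 (le_refl _)
      have hcnt : Ncnt A c ((sortl A c).get ⟨j, hj⟩) ≤ Ncnt F c ((sortl A c).get ⟨j, hj⟩) :=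
        card_le_card (filter_subset_filter _ hAF)
      have hjF : j < (sortl F c).length := by
        rw [sortl_length]
        have := card_filter_le F (fun x => (sortl A c).get ⟨j, hj⟩ ≤ c x)
        calc j < Ncnt A c _ := hself
          _ ≤ Ncnt F c _ := hcnt
          _ ≤ F.card := card_filter_le _ _
      rw [List.getD_eq_get _ _ ⟨_, hjF⟩]
      exact (sorted_count _ _ (sortl_sorted F c) j hjF).2 (by rw [sortl_count]; omega)
    · rw [List.getD_eq_default _ _ (by omega)]
      exact sortl_getD_nonneg F c hc j
  have hsumA : ∑ x ∈ A, c x = ∑ j ∈ Finset.range k, (sortl A c).getD j 0 := by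
    rw [← take_sum_eq, List.take_of_length_le (by rw [sortl_length]; exact hA2)]
    rw [show ∑ x ∈ A, c x = (A.val.map c).sum from rfl, ← sortl_coe A c, Multiset.sum_coe]
  rw [hsumA]
  exact Finset.sum_le_sum (fun i _ => hent i)

lemma sk_nonneg (F : Finset X) (k : ℕ) (c : X → ℝ) : 0 ≤ Sk F k c := by
  simpa using mem_sk_aux F k c (empty_subset F) (by simp)

lemma le_sk_one (F : Finset X) (c : X → ℝ) {x : X} (hx : x ∈ F) : c x ≤ Sk F 1 c := by
  simpa using mem_sk_aux F 1 c (singleton_subset_iff.2 hx) (by simp)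

lemma bridge (F : Finset X) (a b : X → ℝ) (ha : ∀ x ∈ F, 0 ≤ a x) (hb : ∀ x ∈ F, 0 ≤ b x)
    (T : ℝ) (hT : 0 < T)
    (h1 : ∀ r, T ≤ r → Ncnt F a r ≤ Ncnt F b r) (h2 : Ncnt F a T < Ncnt F b T) :
    ∃ k, 1 ≤ k ∧ k ≤ F.card ∧ (∀ j, 1 ≤ j → j < k → Sk F j a ≤ Sk F j b) ∧
      Sk F k a < Sk F k b := by
  set la := sortl F a with hla
  set lb := sortl F b with hlb
  set k0 := Ncnt F a T with hk0
  have hbcard : Ncnt F b T ≤ F.card := card_filter_le _ _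
  have hlb_len : k0 < lb.length := by rw [hlb, sortl_length]; omega
  have hentlt : ∀ j, j < k0 → la.getD j 0 ≤ lb.getD j 0 := by
    intro j hj
    have hja : j < la.length := by
      rw [hla, sortl_length]
      have : Ncnt F a T ≤ F.card := card_filter_le _ _
      omega
    rw [List.getD_eq_get _ _ ⟨_, hja⟩]
    set r := la.get ⟨j, hja⟩ with hrdef
    have hrT : T ≤ r := (sorted_count T la (sortl_sorted F a) j hja).2
      (by rw [hla, sortl_count]; omega)
    have hself : j < Ncnt F a r := by
      rw [← sortl_count F a r, ← hla]
      exact (sorted_count r la (sortl_sorted F a) j hja).1 (le_refl r)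
    have hcb : j < Ncnt F b r := lt_of_lt_of_le hself (h1 r hrT)
    have hjb : j < lb.length := by
      rw [hlb, sortl_length]
      have : Ncnt F b r ≤ F.card := card_filter_le _ _
      omega
    rw [List.getD_eq_get _ _ ⟨_, hjb⟩]
    exact (sorted_count r lb (sortl_sorted F b) j hjb).2 (by rw [hlb, sortl_count]; exact hcb)
  have hstrict : la.getD k0 0 < lb.getD k0 0 := by
    have hgeb : T ≤ lb.get ⟨k0, hlb_len⟩ := (sorted_count T lb (sortl_sorted F b) k0 hlb_len).2
      (by rw [hlb, sortl_count]; exact h2)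
    have hlalt : la.getD k0 0 < T := by
      by_cases hkl : k0 < la.length
      · rw [List.getD_eq_get _ _ ⟨_, hkl⟩]
        by_contra hc
        push_neg at hc
        have := (sorted_count T la (sortl_sorted F a) k0 hkl).1 hc
        rw [hla, sortl_count] at this
        omega
      · rw [List.getD_eq_default _ _ (by omega)]; exact hT
    rw [List.getD_eq_get _ _ ⟨_, hlb_len⟩]
    exact lt_of_lt_of_le hlalt hgeb
  refine ⟨k0 + 1, by omega, by omega, ?_, ?_⟩
  · intro j h1j hjk
    calc Sk F j a ≤ ∑ i ∈ Finset.range j, la.getD i 0 := by rw [hla]; exact sk_le_TS F a ha j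
      _ ≤ ∑ i ∈ Finset.range j, lb.getD i 0 :=
          Finset.sum_le_sum (fun i hi => hentlt i (by have := mem_range.1 hi; omega))
      _ ≤ Sk F j b := by rw [hlb]; exact TS_le_sk F b j
  · calc Sk F (k0+1) a ≤ ∑ i ∈ Finset.range (k0+1), la.getD i 0 := by
          rw [hla]; exact sk_le_TS F a ha (k0+1)
      _ < ∑ i ∈ Finset.range (k0+1), lb.getD i 0 := by
          rw [Finset.sum_range_succ, Finset.sum_range_succ]
          exact add_lt_add_of_le_of_lt
            (Finset.sum_le_sum (fun i hi => hentlt i (mem_range.1 hi))) hstrict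
      _ ≤ Sk F (k0+1) b := by rw [hlb]; exact TS_le_sk F b (k0+1)

/-! ### Sloc basics -/

section SLOC

variable {m : ℕ} (G : SimpleGraph X)

/-- closed neighborhood as a finset -/
def nbhd (x : X) : Finset X := insert x (univ.filter (G.Adj x))

lemma sloc_eq_sup' (u : X → EuclideanSpace ℝ (Fin m)) (x : X) :
    Sloc G u x = (nbhd G x).sup' ⟨x, mem_insert_self _ _⟩ (fun y => ‖u y - u x‖) := by
  have hfin : ({d : ℝ | ∃ y, G.Adj x y ∧ d = ‖u y - u x‖}).Finite := by
    apply Set.Finite.subset (Set.finite_range (fun y => ‖u y - u x‖))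
    rintro d ⟨y, _, rfl⟩; exact ⟨y, rfl⟩
  unfold Sloc
  apply le_antisymm
  · by_cases hne : ({d : ℝ | ∃ y, G.Adj x y ∧ d = ‖u y - u x‖}).Nonempty
    · apply csSup_le hne
      rintro d ⟨y, hy, rfl⟩
      exact le_sup' (fun y => ‖u y - u x‖) (mem_insert_of_mem (mem_filter.2 ⟨mem_univ _, hy⟩))
    · rw [Set.not_nonempty_iff_eq_empty.1 hne, Real.sSup_empty]
      calc (0:ℝ) = ‖u x - u x‖ := by simp
        _ ≤ _ := le_sup' (fun y => ‖u y - u x‖) (mem_insert_self x _)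
  · apply sup'_le
    intro y hy
    rcases mem_insert.1 hy with h' | h'
    · rw [h', sub_self, norm_zero]
      by_cases hne2 : ({d : ℝ | ∃ y, G.Adj x y ∧ d = ‖u y - u x‖}).Nonempty
      · obtain ⟨d, hd⟩ := hne2
        obtain ⟨y', hy', rfl⟩ := hd
        exact le_trans (norm_nonneg _) (le_csSup hfin.bddAbove ⟨y', hy', rfl⟩)
      · rw [Set.not_nonempty_iff_eq_empty.1 hne2, Real.sSup_empty]
    · exact le_csSup hfin.bddAbove ⟨y, (mem_filter.1 h').2, rfl⟩

lemma sloc_nonneg (u : X → EuclideanSpace ℝ (Fin m)) (x : X) : 0 ≤ Sloc G u x := by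
  rw [sloc_eq_sup']
  calc (0:ℝ) = ‖u x - u x‖ := by simp
    _ ≤ _ := le_sup' (fun y => ‖u y - u x‖) (mem_insert_self x _)

lemma norm_le_sloc (u : X → EuclideanSpace ℝ (Fin m)) {x y : X} (h : G.Adj x y) :
    ‖u y - u x‖ ≤ Sloc G u x := by
  rw [sloc_eq_sup']
  exact le_sup' (fun y => ‖u y - u x‖) (mem_insert_of_mem (mem_filter.2 ⟨mem_univ _, h⟩))

lemma sloc_le (u : X → EuclideanSpace ℝ (Fin m)) {x : X} {c : ℝ} (hc : 0 ≤ c)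
    (h : ∀ y, G.Adj x y → ‖u y - u x‖ ≤ c) : Sloc G u x ≤ c := by
  rw [sloc_eq_sup']
  apply sup'_le
  intro y hy
  rcases mem_insert.1 hy with h' | h'
  · subst h'; simpa using hc
  · exact h y (mem_filter.1 h').2

lemma sloc_attain (u : X → EuclideanSpace ℝ (Fin m)) {x : X} (h : 0 < Sloc G u x) :
    ∃ y, G.Adj x y ∧ Sloc G u x = ‖u y - u x‖ := by
  obtain ⟨y, hy, hval⟩ := Finset.exists_mem_eq_sup' (⟨x, mem_insert_self x _⟩ :
    (nbhd G x).Nonempty) (fun y => ‖u y - u x‖)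
  rcases mem_insert.1 hy with h' | h'
  · subst h'
    rw [sloc_eq_sup'] at h
    rw [hval] at h
    simp at h
  · exact ⟨y, (mem_filter.1 h').2, by rw [sloc_eq_sup', hval]⟩

lemma continuous_finset_sup' {ι β : Type*} [TopologicalSpace β]
    (s : Finset ι) (hs : s.Nonempty) (f : ι → β → ℝ) (hf : ∀ i, Continuous (f i)) :
    Continuous (fun b => s.sup' hs (fun i => f i b)) := by
  induction hs using Finset.Nonempty.cons_induction with
  | singleton a => simpa using hf a
  | cons a s ha hs ih =>
    have hrw : (fun b => (Finset.cons a s ha).sup' (Finset.cons_nonempty ha) (fun i => f i b))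
        = fun b => max (f a b) (s.sup' hs fun i => f i b) := by
      funext b
      rw [Finset.sup'_cons]
    rw [hrw]
    exact (hf a).max ih

lemma sloc_cont (x : X) :
    Continuous (fun u : X → EuclideanSpace ℝ (Fin m) => Sloc G u x) := by
  have hrw : (fun u : X → EuclideanSpace ℝ (Fin m) => Sloc G u x)
      = fun u => (nbhd G x).sup' ⟨x, mem_insert_self _ _⟩ (fun y => ‖u y - u x‖) :=
    funext (fun u => sloc_eq_sup' G u x)
  rw [hrw]
  exact continuous_finset_sup' _ _ _
    (fun y => ((continuous_apply y).sub (continuous_apply x)).norm)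

end SLOC

/-! ### chains of nested argmin sets -/

section CHAIN

variable {V : Type*} [TopologicalSpace V]

def chain (s₀ : Set V) (σ : ℕ → V → ℝ) : ℕ → Set V
  | 0 => s₀
  | (k+1) => {u ∈ chain s₀ σ k | ∀ w ∈ chain s₀ σ k, σ (k+1) u ≤ σ (k+1) w}

lemma chain_subset (s₀ : Set V) (σ : ℕ → V → ℝ) (k : ℕ) :
    chain s₀ σ (k+1) ⊆ chain s₀ σ k := fun _ hu => hu.1

lemma chain_subset_of_le (s₀ : Set V) (σ : ℕ → V → ℝ) {j k : ℕ} (h : j ≤ k) :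
    chain s₀ σ k ⊆ chain s₀ σ j := by
  induction k with
  | zero => have : j = 0 := by omega
            subst this; exact subset_rfl
  | succ k ih =>
    by_cases hj : j = k + 1
    · subst hj; exact subset_rfl
    · exact (chain_subset s₀ σ k).trans (ih (by omega))

lemma chain_good (s₀ : Set V) (σ : ℕ → V → ℝ) (hcpt : IsCompact s₀) (hne : s₀.Nonempty)
    (hσ : ∀ k, Continuous (σ k)) (k : ℕ) :
    IsCompact (chain s₀ σ k) ∧ (chain s₀ σ k).Nonempty := by
  induction k with
  | zero => exact ⟨hcpt, hne⟩
  | succ k ih =>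
    obtain ⟨ihc, ihn⟩ := ih
    constructor
    · have heq : chain s₀ σ (k+1)
          = chain s₀ σ k ∩ (⋂ w ∈ chain s₀ σ k, {u | σ (k+1) u ≤ σ (k+1) w}) := by
        ext u
        constructor
        · rintro ⟨h1, h2⟩; exact ⟨h1, Set.mem_iInter₂.2 h2⟩
        · rintro ⟨h1, h2⟩; exact ⟨h1, Set.mem_iInter₂.1 h2⟩
      rw [heq]
      exact ihc.inter_right (isClosed_biInter
        (fun w _ => isClosed_le (hσ (k+1)) continuous_const))
    · obtain ⟨u, hu, hmin⟩ := ihc.exists_isMinOn ihn (hσ (k+1)).continuousOn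
      exact ⟨u, hu, fun w hw => hmin hw⟩

end CHAIN

/-! ### the minimizer -/

section MIN

variable {m : ℕ} (G : SimpleGraph X) (Y : Set X) (g : X → EuclideanSpace ℝ (Fin m))

/-- the free vertices -/
def Fre (Y : Set X) : Finset X := univ.filter (fun x => x ∉ Y)

lemma mem_fre {Y : Set X} {x : X} : x ∈ Fre Y ↔ x ∉ Y := by simp [Fre]

/-- `w` improves on `u`: it is an extension whose counting profile of local Lipschitz
constants is strictly better above some positive threshold. -/
def Improves (w u : X → EuclideanSpace ℝ (Fin m)) : Prop :=
  (∀ y ∈ Y, w y = g y) ∧ ∃ T : ℝ, 0 < T ∧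
    (∀ r, T ≤ r → Ncnt (Fre Y) (Sloc G w) r ≤ Ncnt (Fre Y) (Sloc G u) r) ∧
    Ncnt (Fre Y) (Sloc G w) T < Ncnt (Fre Y) (Sloc G u) T

lemma walk_bound {m : ℕ} (G : SimpleGraph X) (Y : Set X) (g : X → EuclideanSpace ℝ (Fin m))
    {u : X → EuclideanSpace ℝ (Fin m)} (hext : ∀ y ∈ Y, u y = g y) {c0 Cg : ℝ}
    (hCg : ∀ z, ‖g z‖ ≤ Cg) (hS : ∀ x ∈ Fre Y, Sloc G u x ≤ c0) (hc0 : 0 ≤ c0) :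
    ∀ (a b : X) (w : G.Walk a b), b ∈ Y → ‖u a‖ ≤ Cg + (w.length : ℝ) * c0 := by
  intro a b w
  induction w with
  | nil =>
    intro hb
    rw [hext _ hb]
    simpa using hCg _
  | @cons a b c hadj p ih =>
    intro hc
    have hihc := ih hc
    by_cases ha : a ∈ Y
    · rw [hext a ha]
      have h1 : ‖g a‖ ≤ Cg := hCg a
      have h2 : 0 ≤ ((SimpleGraph.Walk.cons hadj p).length : ℝ) * c0 := by positivity
      linarith
    · have hadj' : ‖u b - u a‖ ≤ Sloc G u a := norm_le_sloc G u hadj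
      have h2 : Sloc G u a ≤ c0 := hS a (mem_fre.2 ha)
      have h3 : ‖u a‖ ≤ ‖u b‖ + ‖u b - u a‖ := by
        have hh : u b + (u a - u b) = u a := by abel
        calc ‖u a‖ = ‖u b + (u a - u b)‖ := by rw [hh]
          _ ≤ ‖u b‖ + ‖u a - u b‖ := norm_add_le _ _
          _ = ‖u b‖ + ‖u b - u a‖ := by rw [norm_sub_rev]
      have hlen : ((SimpleGraph.Walk.cons hadj p).length : ℝ) = (p.length : ℝ) + 1 := by
        rw [SimpleGraph.Walk.length_cons]; push_cast; ring
      rw [hlen]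
      nlinarith

lemma exists_min (hconn : G.Connected) (hY : Y.Nonempty) :
    ∃ u : X → EuclideanSpace ℝ (Fin m), (∀ y ∈ Y, u y = g y) ∧
      ∀ w, ¬ Improves G Y g w u := by
  classical
  obtain ⟨y0, hy0⟩ := hY
  set u0 : X → EuclideanSpace ℝ (Fin m) := fun x => if x ∈ Y then g x else g y0 with hu0
  have hu0ext : ∀ y ∈ Y, u0 y = g y := fun y hy => by simp [hu0, hy]
  have hσcont : ∀ k, Continuous
      (fun u : X → EuclideanSpace ℝ (Fin m) => Sk (Fre Y) k (Sloc G u)) := by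
    intro k
    unfold Sk
    exact continuous_finset_sup' _ _ (fun A u => ∑ x ∈ A, Sloc G u x)
      (fun A => continuous_finset_sum _ (fun x _ => sloc_cont G x))
  set c0 : ℝ := Sk (Fre Y) 1 (Sloc G u0) with hc0
  have hc0nn : 0 ≤ c0 := sk_nonneg _ _ _
  set Cg : ℝ := univ.sup' ⟨y0, mem_univ _⟩ (fun z => ‖g z‖) with hCg
  have hwalk : ∀ z : X, Nonempty (G.Walk z y0) := fun z => (hconn.preconnected z y0)
  set wk : ∀ z : X, G.Walk z y0 := fun z => (hwalk z).some with hwk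
  set L : ℕ := univ.sup' ⟨y0, mem_univ _⟩ (fun z => (wk z).length) with hL
  have hCgall : ∀ z, ‖g z‖ ≤ Cg := fun z => le_sup' (fun z => ‖g z‖) (mem_univ z)
  have hbound : ∀ u : X → EuclideanSpace ℝ (Fin m), (∀ y ∈ Y, u y = g y) →
      (∀ x ∈ Fre Y, Sloc G u x ≤ c0) → ∀ z, ‖u z‖ ≤ Cg + (L : ℝ) * c0 := by
    intro u hext hS z
    have h4 : ((wk z).length : ℝ) ≤ (L : ℝ) := by
      exact_mod_cast Nat.cast_le.2 (le_sup' (fun z => (wk z).length) (mem_univ z))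
    have h5 := walk_bound G Y g hext hCgall hS hc0nn z y0 (wk z) hy0
    nlinarith
  set s₀ : Set (X → EuclideanSpace ℝ (Fin m)) :=
    {u | (∀ y ∈ Y, u y = g y) ∧ ∀ x ∈ Fre Y, Sloc G u x ≤ c0} with hs₀
  have hs₀closed : IsClosed s₀ := by
    have hrw : s₀ = (⋂ y ∈ Y, {u : X → EuclideanSpace ℝ (Fin m) | u y = g y})
        ∩ (⋂ x ∈ Fre Y, {u : X → EuclideanSpace ℝ (Fin m) | Sloc G u x ≤ c0}) := by
      ext u
      simp only [hs₀, Set.mem_inter_iff, Set.mem_iInter, Set.mem_setOf_eq]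
    rw [hrw]
    exact IsClosed.inter
      (isClosed_biInter fun y _ => isClosed_eq (continuous_apply y) continuous_const)
      (isClosed_biInter fun x _ => isClosed_le (sloc_cont G x) continuous_const)
  have hs₀cpt : IsCompact s₀ := by
    apply Metric.isCompact_of_isClosed_isBounded hs₀closed
    rw [isBounded_iff_forall_norm_le]
    refine ⟨Cg + (L:ℝ)*c0, ?_⟩
    intro u hu
    have hb := hbound u hu.1 hu.2
    have hCgnn : (0:ℝ) ≤ Cg + (L:ℝ)*c0 := by
      have h1 : (0:ℝ) ≤ Cg := le_trans (norm_nonneg (g y0)) (le_sup' (fun z => ‖g z‖) (mem_univ y0))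
      positivity
    rw [pi_norm_le_iff_of_nonneg hCgnn]
    exact hb
  have hs₀ne : s₀.Nonempty := ⟨u0, hu0ext, fun x _ => le_sk_one _ _ (by assumption)⟩
  obtain ⟨u, hu⟩ := (chain_good s₀ (fun k u => Sk (Fre Y) k (Sloc G u))
    hs₀cpt hs₀ne hσcont (Fre Y).card).2
  have huS0 : u ∈ s₀ := chain_subset_of_le s₀ _ (Nat.zero_le _) hu
  refine ⟨u, huS0.1, ?_⟩
  rintro w ⟨hwext, T, hT, hdom, hstr⟩
  obtain ⟨k, hk1, hkN, hpre, hklt⟩ := bridge (Fre Y) (Sloc G w) (Sloc G u)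
    (fun x _ => sloc_nonneg G w x) (fun x _ => sloc_nonneg G u x) T hT hdom hstr
  obtain ⟨k', rfl⟩ : ∃ k', k = k' + 1 := ⟨k - 1, by omega⟩
  have hwchain : ∀ j, j ≤ k' → w ∈ chain s₀ (fun k u => Sk (Fre Y) k (Sloc G u)) j := by
    intro j
    induction j with
    | zero =>
      intro _
      refine ⟨hwext, ?_⟩
      intro x hx
      have h1 : Sloc G w x ≤ Sk (Fre Y) 1 (Sloc G w) := le_sk_one _ _ hx
      have h2 : Sk (Fre Y) 1 (Sloc G w) ≤ Sk (Fre Y) 1 (Sloc G u) := by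
        rcases Nat.lt_or_ge 1 (k'+1) with hlt | hge
        · exact hpre 1 le_rfl hlt
        · have hk'' : k' + 1 = 1 := by omega
          rw [hk''] at hklt
          exact le_of_lt hklt
      have hu1 : u ∈ chain s₀ (fun k u => Sk (Fre Y) k (Sloc G u)) 1 :=
        chain_subset_of_le s₀ _ (by omega) hu
      have h3 : Sk (Fre Y) 1 (Sloc G u) ≤ Sk (Fre Y) 1 (Sloc G u0) :=
        hu1.2 u0 ⟨hu0ext, fun x _ => le_sk_one _ _ (by assumption)⟩
      calc Sloc G w x ≤ Sk (Fre Y) 1 (Sloc G w) := h1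
        _ ≤ Sk (Fre Y) 1 (Sloc G u) := h2
        _ ≤ c0 := h3
    | succ j ih =>
      intro hj
      have hwj : w ∈ chain s₀ _ j := ih (by omega)
      refine ⟨hwj, ?_⟩
      intro z hz
      have huj : u ∈ chain s₀ (fun k u => Sk (Fre Y) k (Sloc G u)) (j+1) :=
        chain_subset_of_le s₀ _ (by omega) hu
      have h1 : Sk (Fre Y) (j+1) (Sloc G w) ≤ Sk (Fre Y) (j+1) (Sloc G u) :=
        hpre (j+1) (by omega) (by omega)
      exact le_trans h1 (huj.2 z hz)
  have hwk' : w ∈ chain s₀ (fun k u => Sk (Fre Y) k (Sloc G u)) k' := hwchain k' le_rfl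
  have huk : u ∈ chain s₀ (fun k u => Sk (Fre Y) k (Sloc G u)) (k'+1) :=
    chain_subset_of_le s₀ _ hkN hu
  have hmin : Sk (Fre Y) (k'+1) (Sloc G u) ≤ Sk (Fre Y) (k'+1) (Sloc G w) := huk.2 w hwk'
  exact absurd hmin (not_le.2 hklt)

end MIN

/-! ### main comparison tools -/

section TOOLS

variable {m : ℕ}

lemma strict_norm (a b : EuclideanSpace ℝ (Fin m)) (s : ℝ)
    (ha : ‖a‖ ≤ s) (hb : ‖b‖ ≤ s) (hab : 2*s ≤ ‖a + b‖) : a = b := by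
  have hpar := parallelogram_law_with_norm ℝ a b
  have h0 : 0 ≤ s := le_trans (norm_nonneg a) ha
  have h1 : ‖a - b‖ * ‖a - b‖ ≤ 0 := by nlinarith [norm_nonneg (a+b), norm_nonneg a, norm_nonneg b]
  have h2 : ‖a - b‖ = 0 := by nlinarith [norm_nonneg (a - b)]
  exact sub_eq_zero.1 (norm_eq_zero.1 h2)

lemma walk_closed {V : Type*} {H : SimpleGraph V} (P : V → Prop)
    (hstep : ∀ a b, P a → H.Adj a b → P b) :
    ∀ {a b : V} (w : H.Walk a b), P a → P b := by
  intro a b w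
  induction w with
  | nil => exact id
  | @cons a b c hadj p ih => exact fun ha => ih (hstep _ _ ha hadj)

lemma improves_of_pointwise (G : SimpleGraph X) (Y : Set X)
    (g : X → EuclideanSpace ℝ (Fin m)) {u w : X → EuclideanSpace ℝ (Fin m)}
    (hwext : ∀ y ∈ Y, w y = g y)
    (hle : ∀ x ∈ Fre Y, Sloc G w x ≤ Sloc G u x)
    {x0 : X} (hx0 : x0 ∈ Fre Y) (hlt : Sloc G w x0 < Sloc G u x0) :
    Improves G Y g w u := by
  refine ⟨hwext, Sloc G u x0, lt_of_le_of_lt (sloc_nonneg G w x0) hlt, ?_, ?_⟩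
  · intro r _
    apply card_le_card
    intro x hx
    obtain ⟨hxF, hxr⟩ := mem_filter.1 hx
    exact mem_filter.2 ⟨hxF, le_trans hxr (hle x hxF)⟩
  · apply card_lt_card
    rw [Finset.ssubset_def]
    constructor
    · intro x hx
      obtain ⟨hxF, hxr⟩ := mem_filter.1 hx
      exact mem_filter.2 ⟨hxF, le_trans hxr (hle x hxF)⟩
    · intro hsub
      have hx0m : x0 ∈ (Fre Y).filter (fun x => Sloc G u x0 ≤ Sloc G u x) :=
        mem_filter.2 ⟨hx0, le_refl _⟩
      exact absurd (mem_filter.1 (hsub hx0m)).2 (not_le.2 hlt)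

end TOOLS

section MAIN2

variable {m : ℕ}

lemma main2 (G : SimpleGraph X) (Y : Set X) (g : X → EuclideanSpace ℝ (Fin m))
    (hconn : G.Connected) (hY : Y.Nonempty) {u v : X → EuclideanSpace ℝ (Fin m)}
    (huext : ∀ y ∈ Y, u y = g y) (hmin : ∀ w, ¬ Improves G Y g w u)
    (hvext : ∀ y ∈ Y, v y = g y) (hS : ∀ x ∈ Fre Y, Sloc G v x = Sloc G u x) :
    u = v := by
  classical
  set u' : X → EuclideanSpace ℝ (Fin m) :=
    fun z => ((3:ℝ)/4) • u z + ((1:ℝ)/4) • v z with hu'def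
  have hu'ext : ∀ y ∈ Y, u' y = g y := by
    intro y hy
    rw [hu'def]
    simp only
    rw [huext y hy, hvext y hy]
    module
  have hdiff : ∀ x y : X, u' y - u' x
      = ((3:ℝ)/4) • (u y - u x) + ((1:ℝ)/4) • (v y - v x) := by
    intro x y
    rw [hu'def]
    simp only
    module
  -- convexity: Sloc u' ≤ Sloc u on free vertices
  have hu'le : ∀ x ∈ Fre Y, Sloc G u' x ≤ Sloc G u x := by
    intro x hx
    apply sloc_le G u' (sloc_nonneg G u x)
    intro y hy
    rw [hdiff x y]
    calc ‖((3:ℝ)/4) • (u y - u x) + ((1:ℝ)/4) • (v y - v x)‖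
        ≤ ‖((3:ℝ)/4) • (u y - u x)‖ + ‖((1:ℝ)/4) • (v y - v x)‖ := norm_add_le _ _
      _ = (3/4)*‖u y - u x‖ + (1/4)*‖v y - v x‖ := by
          rw [norm_smul, norm_smul, Real.norm_eq_abs, Real.norm_eq_abs,
            abs_of_nonneg (by norm_num : (0:ℝ) ≤ 3/4),
            abs_of_nonneg (by norm_num : (0:ℝ) ≤ 1/4)]
      _ ≤ (3/4)*Sloc G u x + (1/4)*Sloc G v x :=
          add_le_add (mul_le_mul_of_nonneg_left (norm_le_sloc G u hy) (by norm_num))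
            (mul_le_mul_of_nonneg_left (norm_le_sloc G v hy) (by norm_num))
      _ = Sloc G u x := by rw [hS x hx]; ring
  -- equality of Sloc u' and Sloc u
  have hu'eq : ∀ x ∈ Fre Y, Sloc G u' x = Sloc G u x := by
    by_contra hc
    push_neg at hc
    obtain ⟨x0, hx0, hne⟩ := hc
    exact hmin u' (improves_of_pointwise G Y g hu'ext hu'le hx0
      (lt_of_le_of_ne (hu'le x0 hx0) hne))
  -- the strict convexity property (G)
  have hGprop : ∀ x ∈ Fre Y, ∀ y, G.Adj x y → ‖u' y - u' x‖ = Sloc G u x →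
      u y - u x = v y - v x := by
    intro x hx y hadj hcrit
    have ha : ‖u y - u x‖ ≤ Sloc G u x := norm_le_sloc G u hadj
    have hb : ‖v y - v x‖ ≤ Sloc G u x := by rw [← hS x hx]; exact norm_le_sloc G v hadj
    have hd : ‖(1/2:ℝ) • (u y - u x) + (1/2:ℝ) • (v y - v x)‖ ≤ Sloc G u x := by
      calc ‖(1/2:ℝ) • (u y - u x) + (1/2:ℝ) • (v y - v x)‖
          ≤ ‖(1/2:ℝ) • (u y - u x)‖ + ‖(1/2:ℝ) • (v y - v x)‖ := norm_add_le _ _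
        _ = (1/2)*‖u y - u x‖ + (1/2)*‖v y - v x‖ := by
            rw [norm_smul, norm_smul, Real.norm_eq_abs,
              abs_of_nonneg (by norm_num : (0:ℝ) ≤ 1/2)]
        _ ≤ Sloc G u x := by linarith
    have hsum : (u y - u x) + ((1/2:ℝ) • (u y - u x) + (1/2:ℝ) • (v y - v x))
        = (2:ℝ) • (((3:ℝ)/4) • (u y - u x) + ((1:ℝ)/4) • (v y - v x)) := by module
    have h2 : ‖(u y - u x) + ((1/2:ℝ) • (u y - u x) + (1/2:ℝ) • (v y - v x))‖
        = 2 * Sloc G u x := by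
      rw [hsum, norm_smul, Real.norm_eq_abs, abs_of_nonneg (by norm_num : (0:ℝ) ≤ 2),
        ← hdiff x y, hcrit]
    have heq := strict_norm (u y - u x) _ (Sloc G u x) ha hd (le_of_eq h2.symm)
    have h5 : (u y - u x) - ((1/2:ℝ) • (u y - u x) + (1/2:ℝ) • (v y - v x)) = 0 :=
      sub_eq_zero.2 heq
    have h6 : (1/2:ℝ) • ((u y - u x) - (v y - v x))
        = (u y - u x) - ((1/2:ℝ) • (u y - u x) + (1/2:ℝ) • (v y - v x)) := by module
    have h7 : (u y - u x) - (v y - v x) = 0 := by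
      have := h6.trans h5
      rcases smul_eq_zero.1 this with h | h
      · norm_num at h
      · exact h
    exact sub_eq_zero.1 h7
  -- suppose u ≠ v
  by_contra huv
  have hx1 : ∃ x, u x - v x ≠ 0 := by
    by_contra hall
    push_neg at hall
    exact huv (funext (fun x => sub_eq_zero.1 (hall x)))
  obtain ⟨x1, hx1ne⟩ := hx1
  have hx1F : x1 ∈ Fre Y := by
    rw [mem_fre]
    intro hx1Y
    exact hx1ne (by rw [huext x1 hx1Y, hvext x1 hx1Y, sub_self])
  set Fψ : Finset X := (Fre Y).filter (fun x => u x - v x ≠ 0) with hFψ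
  have hFψne : Fψ.Nonempty := ⟨x1, mem_filter.2 ⟨hx1F, hx1ne⟩⟩
  have hψY : ∀ z, u z - v z ≠ 0 → z ∈ Fψ := by
    intro z hz
    apply mem_filter.2
    refine ⟨mem_fre.2 ?_, hz⟩
    intro hzY
    exact hz (by rw [huext z hzY, hvext z hzY, sub_self])
  set T : ℝ := Fψ.sup' hFψne (Sloc G u) with hTdef
  obtain ⟨x0, hx0ψ, hx0T⟩ := Finset.exists_mem_eq_sup' hFψne (Sloc G u)
  obtain ⟨hx0F, hx0ne⟩ := mem_filter.1 hx0ψ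
  set c : EuclideanSpace ℝ (Fin m) := u x0 - v x0 with hcdef
  have hTnn : 0 ≤ T := by rw [hTdef, hx0T]; exact sloc_nonneg G u x0
  have hTbound : ∀ z ∈ Fψ, Sloc G u z ≤ T := fun z hz => le_sup' (Sloc G u) hz
  rcases eq_or_lt_of_le hTnn with hT0 | hTpos
  · -- case T = 0 : the difference propagates through the whole graph
    have hstep : ∀ a b : X, (u a - v a = c) → G.Adj a b → (u b - v b = c) := by
      intro a b hPa hadj
      have haψ : a ∈ Fψ := hψY a (by rw [hPa]; exact hx0ne)
      have haF : a ∈ Fre Y := (mem_filter.1 haψ).1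
      have hSa : Sloc G u a = 0 := le_antisymm (hT0 ▸ hTbound a haψ) (sloc_nonneg G u a)
      have hcrit : ‖u' b - u' a‖ = Sloc G u a := by
        rw [hSa]
        have h1 : ‖u' b - u' a‖ ≤ Sloc G u' a := norm_le_sloc G u' hadj
        rw [hu'eq a haF, hSa] at h1
        exact le_antisymm h1 (norm_nonneg _)
      have h3 := hGprop a haF b hadj hcrit
      calc u b - v b = (u b - u a) - (v b - v a) + (u a - v a) := by abel
        _ = c := by rw [h3, hPa]; abel
    obtain ⟨y0, hy0⟩ := hY
    have hPy0 : u y0 - v y0 = c := by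
      obtain ⟨wlk⟩ := hconn.preconnected x0 y0
      exact walk_closed (fun z => u z - v z = c) hstep wlk rfl
    rw [huext y0 hy0, hvext y0 hy0, sub_self] at hPy0
    exact hx0ne hPy0.symm
  · -- case T > 0 : contraction of a critical component
    have hx0S : Sloc G u x0 = T := by rw [hTdef, hx0T]
    set VΓ : Finset X := (Fre Y).filter (fun z => Sloc G u z = T ∧ u z - v z = c) with hVΓ
    set stepR : X → X → Prop :=
      fun p q => G.Adj p q ∧ p ∈ VΓ ∧ q ∈ VΓ ∧ ‖u' q - u' p‖ = T with hstepRdef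
    set D : Finset X := univ.filter (fun z => Relation.ReflTransGen stepR x0 z) with hDdef
    have hx0V : x0 ∈ VΓ := mem_filter.2 ⟨hx0F, hx0S, rfl⟩
    have hx0D : x0 ∈ D := mem_filter.2 ⟨mem_univ _, Relation.ReflTransGen.refl⟩
    have hDV : ∀ z ∈ D, z ∈ VΓ := by
      intro z hz
      have hreach := (mem_filter.1 hz).2
      induction hreach with
      | refl => exact hx0V
      | tail h1 hstep ih => exact hstep.2.2.1
    have hDS : ∀ x ∈ D, Sloc G u x = T := fun x hx => ((mem_filter.1 (hDV x hx)).2).1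
    have hDF : ∀ x ∈ D, x ∈ Fre Y := fun x hx => (mem_filter.1 (hDV x hx)).1
    have hDψ : ∀ x ∈ D, u x - v x = c := fun x hx => ((mem_filter.1 (hDV x hx)).2).2
    have hDnotY : ∀ x ∈ D, x ∉ Y := fun x hx => mem_fre.1 (hDF x hx)
    have hcrit : ∀ x ∈ D, ∀ z, G.Adj x z → ‖u' z - u' x‖ = T → z ∈ D := by
      intro x hx z hadj hnorm
      have hxF := hDF x hx
      have h1 : u z - u x = v z - v x :=
        hGprop x hxF z hadj (by rw [hDS x hx]; exact hnorm)
      have hψz : u z - v z = c := by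
        calc u z - v z = (u z - u x) - (v z - v x) + (u x - v x) := by abel
          _ = c := by rw [h1, hDψ x hx]; abel
      have hzF : z ∈ Fre Y := mem_fre.2 (fun hzY => by
        rw [huext z hzY, hvext z hzY, sub_self] at hψz
        exact hx0ne hψz.symm)
      have hzψ : z ∈ Fψ := mem_filter.2 ⟨hzF, by rw [hψz]; exact hx0ne⟩
      have hle1 : Sloc G u z ≤ T := hTbound z hzψ
      have hge1 : T ≤ Sloc G u z := by
        have h2 : ‖u' x - u' z‖ ≤ Sloc G u' z := norm_le_sloc G u' hadj.symm
        rw [hu'eq z hzF, norm_sub_rev, hnorm] at h2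
        exact h2
      have hzV : z ∈ VΓ := mem_filter.2 ⟨hzF, le_antisymm hle1 hge1, hψz⟩
      exact mem_filter.2 ⟨mem_univ _,
        Relation.ReflTransGen.tail ((mem_filter.1 hx).2) ⟨hadj, hDV x hx, hzV, hnorm⟩⟩
    have hbdry : ∀ x ∈ D, ∀ z, G.Adj x z → z ∉ D → ‖u' z - u' x‖ < T := by
      intro x hx z hadj hzD
      have h1 : ‖u' z - u' x‖ ≤ T := by
        have h2 := norm_le_sloc G u' hadj
        rw [hu'eq x (hDF x hx), hDS x hx] at h2
        exact h2
      rcases lt_or_eq_of_le h1 with h | h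
      · exact h
      · exact absurd (hcrit x hx z hadj h) hzD
    set p0 := u' x0 with hp0
    set R : ℝ := univ.sup' ⟨x0, mem_univ _⟩ (fun z => ‖p0 - u' z‖) with hRdef
    have hRb : ∀ z, ‖p0 - u' z‖ ≤ R := fun z => le_sup' (fun z => ‖p0 - u' z‖) (mem_univ z)
    have hR0 : 0 ≤ R := le_trans (norm_nonneg _) (hRb x0)
    set Bd : Finset (X × X) :=
      (univ ×ˢ univ).filter (fun pq => pq.1 ∈ D ∧ pq.2 ∉ D ∧ G.Adj pq.1 pq.2) with hBddef
    set η : ℝ := (insert ((x0, x0) : X × X) Bd).sup' ⟨_, mem_insert_self _ _⟩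
      (fun pq => ‖u' pq.2 - u' pq.1‖) with hηdef
    have hηlt : η < T := by
      apply (Finset.sup'_lt_iff _).2
      intro pq hpq
      rcases mem_insert.1 hpq with h | h
      · rw [h]; simpa using hTpos
      · obtain ⟨_, h2⟩ := mem_filter.1 h
        exact hbdry pq.1 h2.1 pq.2 h2.2.2 h2.2.1
    have hη0 : 0 ≤ η := by
      have h3 := le_sup' (fun pq : X × X => ‖u' pq.2 - u' pq.1‖)
        (mem_insert_self ((x0, x0) : X × X) Bd)
      exact le_trans (norm_nonneg _) h3
    have hηbd : ∀ x ∈ D, ∀ z, z ∉ D → G.Adj x z → ‖u' z - u' x‖ ≤ η := by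
      intro x hx z hz hadj
      have hmemb : ((x, z) : X × X) ∈ insert ((x0, x0) : X × X) Bd :=
        mem_insert_of_mem (mem_filter.2
          ⟨Finset.mem_product.2 ⟨mem_univ _, mem_univ _⟩, hx, hz, hadj⟩)
      have h5 := le_sup' (fun pq : X × X => ‖u' pq.2 - u' pq.1‖) hmemb
      rw [hηdef]
      exact h5
    set δ : ℝ := min (1/2 : ℝ) ((T - η)/(2*(R+1))) with hδdef
    have hδpos : 0 < δ := lt_min (by norm_num) (div_pos (by linarith) (by linarith))
    have hδhalf : δ ≤ 1/2 := min_le_left _ _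
    have hδR : η + δ * R < T := by
      have h1 : δ ≤ (T - η)/(2*(R+1)) := min_le_right _ _
      have h2 : δ * R ≤ (T - η)/(2*(R+1)) * R := mul_le_mul_of_nonneg_right h1 hR0
      have h3 : (T - η)/(2*(R+1)) * R < T - η := by
        rw [div_mul_eq_mul_div, div_lt_iff₀ (by linarith)]
        nlinarith
      linarith
    set wfn : X → EuclideanSpace ℝ (Fin m) :=
      fun z => if z ∈ D then u' z + δ • (p0 - u' z) else u' z with hwfndef
    have hwext : ∀ y ∈ Y, wfn y = g y := by
      intro y hy
      rw [hwfndef]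
      simp only
      rw [if_neg (fun hyD => hDnotY y hyD hy)]
      exact hu'ext y hy
    have hwin : ∀ x ∈ D, ∀ y ∈ D, wfn y - wfn x = (1-δ) • (u' y - u' x) := by
      intro x hx y hy
      rw [hwfndef]
      simp only
      rw [if_pos hy, if_pos hx]
      module
    have hwcross : ∀ x ∈ D, ∀ z, z ∉ D → wfn z - wfn x = (u' z - u' x) - δ • (p0 - u' x) := by
      intro x hx z hz
      rw [hwfndef]
      simp only
      rw [if_neg hz, if_pos hx]
      module
    have he1 : ∀ x ∈ D, Sloc G wfn x < T := by
      intro x hx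
      have hmax : max ((1-δ)*T) (η + δ*R) < T := by
        apply max_lt
        · nlinarith
        · exact hδR
      apply lt_of_le_of_lt ?_ hmax
      apply sloc_le G wfn (le_trans (by nlinarith : (0:ℝ) ≤ (1-δ)*T) (le_max_left _ _))
      intro y hadj
      by_cases hyD : y ∈ D
      · rw [hwin x hx y hyD, norm_smul, Real.norm_eq_abs,
          abs_of_nonneg (by linarith : (0:ℝ) ≤ 1-δ)]
        have h1 : ‖u' y - u' x‖ ≤ T := by
          have h2 := norm_le_sloc G u' hadj
          rw [hu'eq x (hDF x hx), hDS x hx] at h2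
          exact h2
        calc (1-δ)*‖u' y - u' x‖ ≤ (1-δ)*T := by nlinarith [norm_nonneg (u' y - u' x)]
          _ ≤ max ((1-δ)*T) (η + δ*R) := le_max_left _ _
      · rw [hwcross x hx y hyD]
        calc ‖(u' y - u' x) - δ • (p0 - u' x)‖
            ≤ ‖u' y - u' x‖ + ‖δ • (p0 - u' x)‖ := norm_sub_le _ _
          _ = ‖u' y - u' x‖ + δ * ‖p0 - u' x‖ := by
              rw [norm_smul, Real.norm_eq_abs, abs_of_nonneg (le_of_lt hδpos)]
          _ ≤ η + δ * R := add_le_add (hηbd x hx y hyD hadj)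
              (mul_le_mul_of_nonneg_left (hRb x) (le_of_lt hδpos))
          _ ≤ max ((1-δ)*T) (η + δ*R) := le_max_right _ _
    have he2 : ∀ z ∈ Fre Y, z ∉ D → ∀ r, T ≤ r → r ≤ Sloc G wfn z → r ≤ Sloc G u z := by
      intro z hzF hzD r hTr hrS
      have hpos : 0 < Sloc G wfn z := lt_of_lt_of_le hTpos (le_trans hTr hrS)
      obtain ⟨y, hadj, heq⟩ := sloc_attain G wfn hpos
      by_cases hyD : y ∈ D
      · exfalso
        have hdiff2 : wfn y - wfn z = (u' y - u' z) + δ • (p0 - u' y) := by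
          rw [hwfndef]
          simp only
          rw [if_pos hyD, if_neg hzD]
          module
        have hb1 : ‖u' y - u' z‖ ≤ η := by
          rw [norm_sub_rev]
          exact hηbd y hyD z hzD hadj.symm
        have hlt2 : Sloc G wfn z < T := by
          rw [heq, hdiff2]
          calc ‖(u' y - u' z) + δ • (p0 - u' y)‖
              ≤ ‖u' y - u' z‖ + ‖δ • (p0 - u' y)‖ := norm_add_le _ _
            _ = ‖u' y - u' z‖ + δ * ‖p0 - u' y‖ := by
                rw [norm_smul, Real.norm_eq_abs, abs_of_nonneg (le_of_lt hδpos)]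
            _ ≤ η + δ * R := add_le_add hb1
                (mul_le_mul_of_nonneg_left (hRb y) (le_of_lt hδpos))
            _ < T := hδR
        have := le_trans hTr hrS
        linarith
      · have hveq : Sloc G wfn z = ‖u' y - u' z‖ := by
          rw [heq, hwfndef]
          simp only
          rw [if_neg hyD, if_neg hzD]
        have h2 : ‖u' y - u' z‖ ≤ Sloc G u' z := norm_le_sloc G u' hadj
        rw [hu'eq z hzF] at h2
        calc r ≤ Sloc G wfn z := hrS
          _ = ‖u' y - u' z‖ := hveq
          _ ≤ Sloc G u z := h2
    apply hmin wfn
    refine ⟨hwext, T, hTpos, ?_, ?_⟩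
    · intro r hr
      apply card_le_card
      intro x hxm
      obtain ⟨hxF, hxr⟩ := mem_filter.1 hxm
      apply mem_filter.2
      refine ⟨hxF, ?_⟩
      by_cases hxD : x ∈ D
      · exact absurd hxr (not_le.2 (lt_of_lt_of_le (he1 x hxD) hr))
      · exact he2 x hxF hxD r hr hxr
    · apply card_lt_card
      rw [Finset.ssubset_def]
      constructor
      · intro x hxm
        obtain ⟨hxF, hxr⟩ := mem_filter.1 hxm
        apply mem_filter.2
        refine ⟨hxF, ?_⟩
        by_cases hxD : x ∈ D
        · exact absurd hxr (not_le.2 (he1 x hxD))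
        · exact he2 x hxF hxD T le_rfl hxr
      · intro hsub
        have hx0m : x0 ∈ (Fre Y).filter (fun x => T ≤ Sloc G u x) :=
          mem_filter.2 ⟨hx0F, le_of_eq hx0S.symm⟩
        have h4 := (mem_filter.1 (hsub hx0m)).2
        exact absurd h4 (not_le.2 (he1 x0 hx0D))

end MAIN2

section MAIN1

variable {m : ℕ}

lemma sfin1 (G : SimpleGraph X) (Y : Set X) (u v : X → EuclideanSpace ℝ (Fin m)) :
    ({d : ℝ | ∃ x, x ∉ Y ∧ Sloc G v x = d ∧ Sloc G u x < Sloc G v x}).Finite := by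
  apply Set.Finite.subset (Set.finite_range (Sloc G v))
  rintro d ⟨x, _, heq, _⟩
  exact ⟨x, heq⟩

lemma main1 (G : SimpleGraph X) (Y : Set X) (g : X → EuclideanSpace ℝ (Fin m))
    (hconn : G.Connected) (hY : Y.Nonempty) {u v : X → EuclideanSpace ℝ (Fin m)}
    (huext : ∀ y ∈ Y, u y = g y) (hmin : ∀ w, ¬ Improves G Y g w u)
    (hvext : ∀ y ∈ Y, v y = g y) (hne : v ≠ u) : Tighter G Y u v := by
  classical
  constructor
  · intro y hy; rw [huext y hy, hvext y hy]
  by_contra hcon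
  push_neg at hcon
  -- hcon : sSup SA ≤ sSup SB
  by_cases hEx : ∃ x, x ∉ Y ∧ Sloc G v x < Sloc G u x
  · -- there is a point where u beats v : build the midpoint competitor
    obtain ⟨xa, hxaY, _⟩ := hEx
    set Apts : Finset X := (Fre Y).filter (fun x => Sloc G v x < Sloc G u x) with hApts
    have hAne : Apts.Nonempty := ⟨xa, mem_filter.2 ⟨mem_fre.2 hxaY, by assumption⟩⟩
    obtain ⟨xs, hxsA, hxsmax⟩ := Finset.exists_mem_eq_sup' hAne (Sloc G u)
    obtain ⟨hxsF, hxslt⟩ := mem_filter.1 hxsA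
    set s : ℝ := Sloc G u xs with hsdef
    have hspos : 0 < s := lt_of_le_of_lt (sloc_nonneg G v xs) hxslt
    have hsmax : ∀ x ∈ Apts, Sloc G u x ≤ s := by
      intro x hx
      rw [← hxsmax]
      exact le_sup' (Sloc G u) hx
    -- sSup SB = s
    have hsB_mem : s ∈ {d : ℝ | ∃ x, x ∉ Y ∧ Sloc G u x = d ∧ Sloc G v x < Sloc G u x} :=
      ⟨xs, mem_fre.1 hxsF, rfl, hxslt⟩
    have hfinB : ({d : ℝ | ∃ x, x ∉ Y ∧ Sloc G u x = d ∧ Sloc G v x < Sloc G u x}).Finite := by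
      apply Set.Finite.subset (Set.finite_range (Sloc G u))
      rintro d ⟨x, _, heq, _⟩
      exact ⟨x, heq⟩
    have hsupB_le : sSup {d : ℝ | ∃ x, x ∉ Y ∧ Sloc G u x = d ∧ Sloc G v x < Sloc G u x} ≤ s := by
      apply csSup_le ⟨s, hsB_mem⟩
      rintro d ⟨x, hxY, rfl, hlt⟩
      exact hsmax x (mem_filter.2 ⟨mem_fre.2 hxY, hlt⟩)
    have hvbd : ∀ x, x ∉ Y → Sloc G u x < Sloc G v x → Sloc G v x ≤ s := by
      intro x hxY hlt
      have h1 : Sloc G v x ≤ sSup {d : ℝ | ∃ x, x ∉ Y ∧ Sloc G v x = d ∧ Sloc G u x < Sloc G v x} :=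
        le_csSup (sfin1 G Y u v).bddAbove ⟨x, hxY, rfl, hlt⟩
      exact le_trans h1 (le_trans hcon hsupB_le)
    -- midpoint
    set w : X → EuclideanSpace ℝ (Fin m) := fun z => (1/2:ℝ) • u z + (1/2:ℝ) • v z with hwdef
    have hwext : ∀ y ∈ Y, w y = g y := by
      intro y hy
      rw [hwdef]
      simp only
      rw [huext y hy, hvext y hy]
      module
    have hwle : ∀ x : X, Sloc G w x ≤ (1/2) * Sloc G u x + (1/2) * Sloc G v x := by
      intro x
      apply sloc_le G w
        (by have h1 := sloc_nonneg G u x; have h2 := sloc_nonneg G v x; linarith)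
      intro y hy
      have hd : w y - w x = (1/2:ℝ) • (u y - u x) + (1/2:ℝ) • (v y - v x) := by
        rw [hwdef]; simp only; module
      rw [hd]
      calc ‖(1/2:ℝ) • (u y - u x) + (1/2:ℝ) • (v y - v x)‖
          ≤ ‖(1/2:ℝ) • (u y - u x)‖ + ‖(1/2:ℝ) • (v y - v x)‖ := norm_add_le _ _
        _ = (1/2)*‖u y - u x‖ + (1/2)*‖v y - v x‖ := by
            rw [norm_smul, norm_smul, Real.norm_eq_abs,
              abs_of_nonneg (by norm_num : (0:ℝ) ≤ 1/2)]
        _ ≤ (1/2) * Sloc G u x + (1/2) * Sloc G v x :=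
            add_le_add (mul_le_mul_of_nonneg_left (norm_le_sloc G u hy) (by norm_num))
              (mul_le_mul_of_nonneg_left (norm_le_sloc G v hy) (by norm_num))
    apply hmin w
    refine ⟨hwext, s, hspos, ?_, ?_⟩
    · intro r hr
      apply card_le_card
      intro x hxm
      obtain ⟨hxF, hxr⟩ := mem_filter.1 hxm
      apply mem_filter.2
      refine ⟨hxF, ?_⟩
      rcases lt_trichotomy (Sloc G v x) (Sloc G u x) with hlt | heq | hlt
      · exfalso
        have h1 : Sloc G u x ≤ s := hsmax x (mem_filter.2 ⟨hxF, hlt⟩)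
        have h2 := hwle x
        linarith
      · have h2 := hwle x
        rw [heq] at h2
        have h3 : Sloc G w x ≤ Sloc G u x := by linarith
        linarith
      · exfalso
        have h1 : Sloc G v x ≤ s := hvbd x (mem_fre.1 hxF) hlt
        have h2 := hwle x
        linarith
    · apply card_lt_card
      rw [Finset.ssubset_def]
      constructor
      · intro x hxm
        obtain ⟨hxF, hxr⟩ := mem_filter.1 hxm
        apply mem_filter.2
        refine ⟨hxF, ?_⟩
        rcases lt_trichotomy (Sloc G v x) (Sloc G u x) with hlt | heq | hlt
        · exfalso
          have h1 : Sloc G u x ≤ s := hsmax x (mem_filter.2 ⟨hxF, hlt⟩)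
          have h2 := hwle x
          linarith
        · have h2 := hwle x
          rw [heq] at h2
          linarith
        · exfalso
          have h1 : Sloc G v x ≤ s := hvbd x (mem_fre.1 hxF) hlt
          have h2 := hwle x
          linarith
      · intro hsub
        have hx0m : xs ∈ (Fre Y).filter (fun x => s ≤ Sloc G u x) :=
          mem_filter.2 ⟨hxsF, le_of_eq hsdef⟩
        have h4 := (mem_filter.1 (hsub hx0m)).2
        have h2 := hwle xs
        rw [← hsdef] at h2
        linarith
  · -- no point where u beats v : then Sloc agrees and main2 applies
    push_neg at hEx
    have hBempty : {d : ℝ | ∃ x, x ∉ Y ∧ Sloc G u x = d ∧ Sloc G v x < Sloc G u x} = ∅ := by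
      rw [Set.eq_empty_iff_forall_notMem]
      rintro d ⟨x, hxY, _, hlt⟩
      exact absurd hlt (not_lt.2 (hEx x hxY))
    rw [hBempty, Real.sSup_empty] at hcon
    have hnoA : ∀ x, x ∉ Y → ¬ (Sloc G u x < Sloc G v x) := by
      intro x hxY hlt
      have h1 : Sloc G v x ≤ sSup {d : ℝ | ∃ x, x ∉ Y ∧ Sloc G v x = d ∧ Sloc G u x < Sloc G v x} :=
        le_csSup (sfin1 G Y u v).bddAbove ⟨x, hxY, rfl, hlt⟩
      have h2 : 0 ≤ Sloc G u x := sloc_nonneg G u x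
      linarith
    have hEq : ∀ x ∈ Fre Y, Sloc G v x = Sloc G u x := by
      intro x hx
      have hxY := mem_fre.1 hx
      exact le_antisymm (not_lt.1 (hnoA x hxY)) (hEx x hxY)
    exact absurd (main2 G Y g hconn hY huext hmin hvext hEq).symm hne

end MAIN1

end TightProof

theorem stmt2 {X : Type*} [Fintype X] {m : ℕ} (G : SimpleGraph X)
    (hconn : G.Connected) (Y : Set X) (hY : Y.Nonempty)
    (g : X → EuclideanSpace ℝ (Fin m)) :
    ∃ u : X → EuclideanSpace ℝ (Fin m),
      (∀ y ∈ Y, u y = g y) ∧ Tight G Y u ∧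
      (∀ v : X → EuclideanSpace ℝ (Fin m), (∀ y ∈ Y, v y = g y) → v ≠ u →
        Tighter G Y u v) ∧
      (∀ u' : X → EuclideanSpace ℝ (Fin m), (∀ y ∈ Y, u' y = g y) → Tight G Y u' →
        u' = u) := by
  classical
  obtain ⟨u, huext, hmin⟩ := TightProof.exists_min G Y g hconn hY
  have hmain1 := fun {v} hvext hne =>
    TightProof.main1 G Y g hconn hY huext hmin (v := v) hvext hne
  refine ⟨u, huext, ?_, ?_, ?_⟩
  · rintro ⟨w, hw1, hw2⟩
    by_cases hwu : w = u
    · subst hwu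
      exact lt_irrefl _ hw2
    · have hwext : ∀ y ∈ Y, w y = g y := fun y hy => by rw [hw1 y hy, huext y hy]
      exact lt_asymm hw2 (hmain1 hwext hwu).2
  · intro v hvext hne
    exact hmain1 hvext hne
  · intro u' hu'ext hu'tight
    by_contra hne
    exact hu'tight ⟨u, hmain1 hu'ext hne⟩
end
end

section
/- Let G = (X, E, Y) be a finite connected graph with nonempty Y ⊆ X. A function u : X → ℝ^m is tight on G if and only if it is edge-tight on G. -/
/-- `v` is edge-tighter than `u`: the comparison of suprema is taken over edges
with not both endpoints in `Y`, using `Ŝu({x,y}) = ‖u x - u y‖`. -/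
noncomputable def EdgeTighter {X : Type*} {m : ℕ} (G : SimpleGraph X) (Y : Set X)
    (v u : X → EuclideanSpace ℝ (Fin m)) : Prop :=
  (∀ y ∈ Y, v y = u y) ∧
    sSup {d : ℝ | ∃ x y, G.Adj x y ∧ ¬(x ∈ Y ∧ y ∈ Y) ∧ ‖u x - u y‖ = d ∧
        ‖v x - v y‖ < ‖u x - u y‖} >
      sSup {d : ℝ | ∃ x y, G.Adj x y ∧ ¬(x ∈ Y ∧ y ∈ Y) ∧ ‖v x - v y‖ = d ∧
        ‖u x - u y‖ < ‖v x - v y‖}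

/-- `u` is edge-tight on `G` relative to the boundary set `Y`. -/
noncomputable def EdgeTight {X : Type*} {m : ℕ} (G : SimpleGraph X) (Y : Set X)
    (u : X → EuclideanSpace ℝ (Fin m)) : Prop :=
  ¬ ∃ v, EdgeTighter G Y v u

/-! ### Auxiliary lemmas -/

section Aux

set_option linter.unusedSectionVars false

private lemma mid_lt {m : ℕ} (a b : EuclideanSpace ℝ (Fin m)) (hab : a ≠ b) :
    ‖a + b‖ < 2 * max ‖a‖ ‖b‖ := by
  rcases lt_trichotomy ‖a‖ ‖b‖ with h | h | h
  · calc ‖a + b‖ ≤ ‖a‖ + ‖b‖ := norm_add_le _ _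
    _ < 2 * max ‖a‖ ‖b‖ := by rw [max_eq_right h.le]; linarith
  · have hr : ‖a‖ ≠ 0 := by
      intro h0
      apply hab
      have ha : a = 0 := norm_eq_zero.mp h0
      have hb : b = 0 := norm_eq_zero.mp (by rw [← h, h0])
      rw [ha, hb]
    have hinner : (inner ℝ a b : ℝ) < ‖a‖ * ‖b‖ := by
      rw [inner_lt_norm_mul_iff_real]
      intro heq
      apply hab
      rw [← h] at heq
      exact smul_right_injective _ hr heq
    have hsq := norm_add_sq_real a b
    have hmax : max ‖a‖ ‖b‖ = ‖b‖ := max_eq_right h.le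
    rw [hmax]
    nlinarith [norm_nonneg (a + b), norm_nonneg a, norm_nonneg b]
  · calc ‖a + b‖ ≤ ‖a‖ + ‖b‖ := norm_add_le _ _
    _ < 2 * max ‖a‖ ‖b‖ := by rw [max_eq_left h.le]; linarith

variable {X : Type*} [Fintype X] {m : ℕ} {G : SimpleGraph X}
  {u : X → EuclideanSpace ℝ (Fin m)} {x : X}

private lemma SlocSet_finite : {d : ℝ | ∃ y, G.Adj x y ∧ d = ‖u y - u x‖}.Finite :=
  (Set.finite_range fun y => ‖u y - u x‖).subset (by rintro d ⟨y, _, rfl⟩; exact ⟨y, rfl⟩)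

private lemma Sloc_nonneg : 0 ≤ Sloc G u x :=
  Real.sSup_nonneg (by rintro d ⟨y, _, rfl⟩; exact norm_nonneg _)

private lemma le_Sloc {z : X} (h : G.Adj x z) : ‖u z - u x‖ ≤ Sloc G u x :=
  le_csSup SlocSet_finite.bddAbove ⟨z, h, rfl⟩

private lemma Sloc_attain (h : 0 < Sloc G u x) :
    ∃ z, G.Adj x z ∧ Sloc G u x = ‖u z - u x‖ := by
  have hne : {d : ℝ | ∃ y, G.Adj x y ∧ d = ‖u y - u x‖}.Nonempty := by
    by_contra hc
    rw [Set.not_nonempty_iff_eq_empty] at hc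
    rw [Sloc, hc, Real.sSup_empty] at h
    exact lt_irrefl _ h
  exact hne.csSup_mem SlocSet_finite

end Aux

set_option maxHeartbeats 1000000 in
private lemma core {X : Type*} [Fintype X] [Nonempty X] {m : ℕ} (G : SimpleGraph X)
    (Y : Set X) (u v : X → EuclideanSpace ℝ (Fin m))
    (hvY : ∀ y ∈ Y, v y = u y) (s t : ℝ) (hs : 0 ≤ s) (hst : s < t) :
    ∃ w' : X → EuclideanSpace ℝ (Fin m),
      (∀ y ∈ Y, w' y = u y) ∧
      (∀ x z, G.Adj x z → u x - u z ≠ v x - v z →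
        ‖w' x - w' z‖ < max ‖u x - u z‖ ‖v x - v z‖) ∧
      (∀ x z, G.Adj x z → u x - u z = v x - v z → ‖u x - u z‖ ≤ s →
        ‖w' x - w' z‖ < t) ∧
      (∀ x z, G.Adj x z → u x - u z = v x - v z → s < ‖u x - u z‖ →
        (v x - u x ≠ 0 → ‖w' x - w' z‖ < ‖u x - u z‖) ∧ ‖w' x - w' z‖ ≤ ‖u x - u z‖) := by
  classical
  set g : X → EuclideanSpace ℝ (Fin m) := fun x => v x - u x with hg
  set w : X → EuclideanSpace ℝ (Fin m) := fun x => (2⁻¹ : ℝ) • (u x + v x) with hw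
  have hwdiff : ∀ x z, w x - w z = (2⁻¹ : ℝ) • ((u x - u z) + (v x - v z)) := by
    intro x z
    simp only [hw]
    module
  have hwrig : ∀ x z, u x - u z = v x - v z → w x - w z = u x - u z := by
    intro x z h
    rw [hwdiff, ← h, ← two_smul ℝ (u x - u z), smul_smul]
    norm_num
  set B : X → X → Prop := fun p q => G.Adj p q ∧ u p - u q = v p - v q ∧ s < ‖u p - u q‖
    with hB
  have hBsymm : Symmetric B := by
    rintro p q ⟨h1, h2, h3⟩
    refine ⟨h1.symm, ?_, ?_⟩
    · rw [← neg_sub (u p) (u q), h2, neg_sub]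
    · rwa [norm_sub_rev]
  have hBg : ∀ p q, B p q → g p = g q := by
    rintro p q ⟨_, h2, _⟩
    have : v p - u p = v q - u q := by
      have := sub_eq_sub_iff_sub_eq_sub.mp h2
      linear_combination (norm := module) -this
    simpa [hg] using this
  set R : X → X → Prop := Relation.ReflTransGen B with hR
  have hRequiv : Equivalence R :=
    ⟨fun _ => Relation.ReflTransGen.refl,
     fun h => by haveI : Std.Symm B := ⟨fun _ _ h' => hBsymm h'⟩; exact Relation.ReflTransGen.stdSymm.symm _ _ h,
     fun h1 h2 => Relation.ReflTransGen.trans h1 h2⟩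
  set sd : Setoid X := ⟨R, hRequiv⟩ with hsd
  set ctr : X → X := fun x => (@Quotient.mk X sd x).out with hctr
  have hctr_eq : ∀ {p q}, R p q → ctr p = ctr q := by
    intro p q h
    simp only [hctr]
    congr 1
    exact Quotient.sound h
  set C : ℝ := Finset.univ.sup' Finset.univ_nonempty (fun x => ‖w x - w (ctr x)‖) with hCdef
  have hC0 : 0 ≤ C :=
    le_trans (norm_nonneg _)
      (Finset.le_sup' (fun x => ‖w x - w (ctr x)‖) (Finset.mem_univ (Classical.arbitrary X)))
  set gap : X × X → ℝ := fun p =>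
    if G.Adj p.1 p.2 ∧ u p.1 - u p.2 ≠ v p.1 - v p.2 then
      max ‖u p.1 - u p.2‖ ‖v p.1 - v p.2‖ - ‖w p.1 - w p.2‖ else 1 with hgapdef
  have hgap_pos : ∀ p, 0 < gap p := by
    rintro ⟨x, z⟩
    simp only [hgapdef]
    split
    · next h =>
      have hmid : ‖(u x - u z) + (v x - v z)‖ < 2 * max ‖u x - u z‖ ‖v x - v z‖ :=
        mid_lt _ _ h.2
      have : ‖w x - w z‖ = 2⁻¹ * ‖(u x - u z) + (v x - v z)‖ := by
        rw [hwdiff, norm_smul]; norm_num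
      rw [this]; linarith
    · norm_num
  set δ : ℝ := Finset.univ.inf' Finset.univ_nonempty gap with hδdef
  have hδ : 0 < δ := (Finset.lt_inf'_iff _).mpr fun p _ => hgap_pos p
  set num : ℝ := min 1 (min (t - s) δ) with hnumdef
  have hnum0 : 0 < num := lt_min one_pos (lt_min (by linarith) hδ)
  have hnum1 : num ≤ 1 := min_le_left _ _
  have hnumts : num ≤ t - s := le_trans (min_le_right _ _) (min_le_left _ _)
  have hnumδ : num ≤ δ := le_trans (min_le_right _ _) (min_le_right _ _)
  set ε : ℝ := num / (2 * (2 * C + 1)) with hεdef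
  have hden : (0:ℝ) < 2 * (2 * C + 1) := by linarith
  have hε0 : 0 < ε := div_pos hnum0 hden
  have hεnum : ε * (2 * (2 * C + 1)) = num := div_mul_cancel₀ _ (ne_of_gt hden)
  have hε1 : ε ≤ 2⁻¹ := by nlinarith
  have hεC : 2 * ε * C < num := by nlinarith
  set w' : X → EuclideanSpace ℝ (Fin m) := fun x =>
    if g x = 0 then w x else w x - ε • (w x - w (ctr x)) with hw'def
  have hmove : ∀ x, ‖w' x - w x‖ ≤ ε * C := by
    intro x
    simp only [hw'def]
    split
    · simp [mul_nonneg hε0.le hC0]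
    · rw [sub_sub_cancel_left, norm_neg, norm_smul, Real.norm_eq_abs, abs_of_pos hε0]
      exact mul_le_mul_of_nonneg_left
        (Finset.le_sup' (fun x => ‖w x - w (ctr x)‖) (Finset.mem_univ x)) hε0.le
  have hP4 : ∀ x z, ‖w' x - w' z‖ ≤ ‖w x - w z‖ + 2 * ε * C := by
    intro x z
    have h1 : w' x - w' z = (w' x - w x) + (w x - w z) + (w z - w' z) := by abel
    calc ‖w' x - w' z‖ ≤ ‖w' x - w x‖ + ‖w x - w z‖ + ‖w z - w' z‖ := by
          rw [h1]; exact norm_add₃_le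
      _ ≤ ε * C + ‖w x - w z‖ + ε * C := by
          have := hmove x
          have h2 : ‖w z - w' z‖ ≤ ε * C := by rw [norm_sub_rev]; exact hmove z
          linarith
      _ = ‖w x - w z‖ + 2 * ε * C := by ring
  refine ⟨w', ?_, ?_, ?_, ?_⟩
  · intro y hy
    have hgy : g y = 0 := by simp [hg, hvY y hy]
    simp only [hw'def, hgy, if_pos rfl]
    simp only [hw, hvY y hy, ← two_smul ℝ (u y), smul_smul]
    norm_num
  · intro x z hadj hab
    have hgaple : gap (x, z) ≤ max ‖u x - u z‖ ‖v x - v z‖ - ‖w x - w z‖ := by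
      simp only [hgapdef]
      rw [if_pos (⟨hadj, hab⟩ : G.Adj x z ∧ u x - u z ≠ v x - v z)]
    have hδle : δ ≤ gap (x, z) := Finset.inf'_le _ (Finset.mem_univ _)
    have := hP4 x z
    linarith
  · intro x z hadj hab hle
    have h1 : ‖w x - w z‖ = ‖u x - u z‖ := by rw [hwrig x z hab]
    have := hP4 x z
    linarith
  · intro x z hadj hab hgt
    have hBxz : B x z := ⟨hadj, hab, hgt⟩
    have hRxz : R x z := Relation.ReflTransGen.single hBxz
    have hgeq : g x = g z := hBg _ _ hBxz
    have hna : 0 < ‖u x - u z‖ := lt_of_le_of_lt hs hgt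
    by_cases hgx : g x = 0
    · have hgz : g z = 0 := hgeq ▸ hgx
      have hx1 : w' x = w x := by simp only [hw'def]; rw [if_pos hgx]
      have hz1 : w' z = w z := by simp only [hw'def]; rw [if_pos hgz]
      rw [hx1, hz1, hwrig x z hab]
      exact ⟨fun hc => absurd hgx hc, le_refl _⟩
    · have hgz : g z ≠ 0 := by rw [← hgeq]; exact hgx
      have hctrxz : ctr x = ctr z := hctr_eq hRxz
      have hdiff : w' x - w' z = (1 - ε) • (w x - w z) := by
        have hx1 : w' x = w x - ε • (w x - w (ctr x)) := by simp only [hw'def]; rw [if_neg hgx]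
        have hz1 : w' z = w z - ε • (w z - w (ctr z)) := by simp only [hw'def]; rw [if_neg hgz]
        rw [hx1, hz1, hctrxz]
        module
      have hnorm : ‖w' x - w' z‖ = (1 - ε) * ‖u x - u z‖ := by
        rw [hdiff, hwrig x z hab, norm_smul, Real.norm_eq_abs, abs_of_pos (by linarith)]
      constructor
      · intro _
        rw [hnorm]
        nlinarith
      · rw [hnorm]
        nlinarith

private lemma dirA {X : Type*} [Fintype X] {m : ℕ} (G : SimpleGraph X)
    (Y : Set X) (hY : Y.Nonempty) (u v : X → EuclideanSpace ℝ (Fin m))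
    (h : EdgeTighter G Y v u) : ∃ w, Tighter G Y w u := by
  classical
  have hXne : Nonempty X := ⟨hY.some⟩
  obtain ⟨hvY, hlt⟩ := h
  set AE := {d : ℝ | ∃ x y, G.Adj x y ∧ ¬(x ∈ Y ∧ y ∈ Y) ∧ ‖u x - u y‖ = d ∧
      ‖v x - v y‖ < ‖u x - u y‖} with hAEdef
  set BE := {d : ℝ | ∃ x y, G.Adj x y ∧ ¬(x ∈ Y ∧ y ∈ Y) ∧ ‖v x - v y‖ = d ∧
      ‖u x - u y‖ < ‖v x - v y‖} with hBEdef
  set s := sSup BE with hsdef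
  set t := sSup AE with htdef
  have hAfin : AE.Finite :=
    (Set.finite_range fun p : X × X => ‖u p.1 - u p.2‖).subset
      (by rintro d ⟨x, y, _, _, h1, _⟩; exact ⟨(x, y), h1⟩)
  have hBfin : BE.Finite :=
    (Set.finite_range fun p : X × X => ‖v p.1 - v p.2‖).subset
      (by rintro d ⟨x, y, _, _, h1, _⟩; exact ⟨(x, y), h1⟩)
  have hs0 : 0 ≤ s := Real.sSup_nonneg (by rintro d ⟨x, y, _, _, h1, _⟩; rw [← h1]; positivity)
  have ht0 : 0 < t := lt_of_le_of_lt hs0 hlt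
  have hAne : AE.Nonempty := by
    by_contra hc
    rw [Set.not_nonempty_iff_eq_empty] at hc
    rw [htdef, hc, Real.sSup_empty] at ht0
    exact lt_irrefl _ ht0
  obtain ⟨x0, y0, hadj0, hrel0, hequ0, hltv0⟩ := hAne.csSup_mem hAfin
  have HB : ∀ x y, G.Adj x y → ¬(x ∈ Y ∧ y ∈ Y) → ‖u x - u y‖ < ‖v x - v y‖ →
      ‖v x - v y‖ ≤ s := fun x y h1 h2 h3 => le_csSup hBfin.bddAbove ⟨x, y, h1, h2, rfl, h3⟩
  obtain ⟨p, q, hadjpq, hpY, hequpq, hltpq⟩ :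
      ∃ p q, G.Adj p q ∧ p ∉ Y ∧ ‖u p - u q‖ = t ∧ ‖v p - v q‖ < ‖u p - u q‖ := by
    by_cases hx0 : x0 ∈ Y
    · have hy0 : y0 ∉ Y := fun hy => hrel0 ⟨hx0, hy⟩
      refine ⟨y0, x0, hadj0.symm, hy0, ?_, ?_⟩
      · rw [norm_sub_rev]; exact hequ0
      · rw [norm_sub_rev (v y0), norm_sub_rev (u y0)]; exact hltv0
    · exact ⟨x0, y0, hadj0, hx0, hequ0, hltv0⟩
  obtain ⟨a, b, hadj, haY, hga, hequ, hltv⟩ :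
      ∃ a b, G.Adj a b ∧ a ∉ Y ∧ v a - u a ≠ 0 ∧ ‖u a - u b‖ = t ∧
        ‖v a - v b‖ < ‖u a - u b‖ := by
    by_cases hgp : v p - u p = 0
    · have hvp : v p = u p := by rwa [sub_eq_zero] at hgp
      have hgq : v q - u q ≠ 0 := by
        intro h0
        have hvq : v q = u q := by rwa [sub_eq_zero] at h0
        rw [hvp, hvq] at hltpq
        exact lt_irrefl _ hltpq
      have hqY : q ∉ Y := fun hq => hgq (by rw [hvY q hq, sub_self])
      refine ⟨q, p, hadjpq.symm, hqY, hgq, ?_, ?_⟩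
      · rw [norm_sub_rev]; exact hequpq
      · rw [norm_sub_rev (v q), norm_sub_rev (u q)]; exact hltpq
    · exact ⟨p, q, hadjpq, hpY, hgp, hequpq, hltpq⟩
  obtain ⟨w', P0, P1, P2, P3⟩ := core G Y u v hvY s t hs0 hlt
  refine ⟨w', P0, ?_⟩
  have hSua : t ≤ Sloc G u a := by
    have h1 : ‖u b - u a‖ ≤ Sloc G u a := le_Sloc hadj
    rw [norm_sub_rev, hequ] at h1
    exact h1
  have hPE : ∀ z, G.Adj a z → ‖w' a - w' z‖ < Sloc G u a := by
    intro z hz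
    have hle2 : ‖u a - u z‖ ≤ Sloc G u a := by
      rw [norm_sub_rev]; exact le_Sloc hz
    by_cases hab2 : u a - u z = v a - v z
    · by_cases hsz : ‖u a - u z‖ ≤ s
      · have := P2 a z hz hab2 hsz
        linarith
      · have := (P3 a z hz hab2 (not_le.mp hsz)).1 hga
        linarith
    · have h1 := P1 a z hz hab2
      rcases le_or_gt ‖v a - v z‖ ‖u a - u z‖ with hle | hlt2
      · rw [max_eq_left hle] at h1
        linarith
      · have h2 := HB a z hz (fun hc => haY hc.1) hlt2
        rw [max_eq_right hlt2.le] at h1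
        linarith
  have hSwa : Sloc G w' a < Sloc G u a := by
    by_cases h0 : 0 < Sloc G w' a
    · obtain ⟨z, hz, heq⟩ := Sloc_attain h0
      rw [heq, norm_sub_rev]
      exact hPE z hz
    · push_neg at h0
      linarith
  set AV := {d : ℝ | ∃ x, x ∉ Y ∧ Sloc G u x = d ∧ Sloc G w' x < Sloc G u x} with hAVdef
  set BV := {d : ℝ | ∃ x, x ∉ Y ∧ Sloc G w' x = d ∧ Sloc G u x < Sloc G w' x} with hBVdef
  have hAVfin : AV.Finite :=
    (Set.finite_range fun x => Sloc G u x).subset (by rintro d ⟨x, _, h1, _⟩; exact ⟨x, h1⟩)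
  have hBVfin : BV.Finite :=
    (Set.finite_range fun x => Sloc G w' x).subset (by rintro d ⟨x, _, h1, _⟩; exact ⟨x, h1⟩)
  have hAVle : Sloc G u a ≤ sSup AV := le_csSup hAVfin.bddAbove ⟨a, haY, rfl, hSwa⟩
  have hBVlt : ∀ d ∈ BV, d < t := by
    rintro d ⟨x, hxY, heqd, hgtd⟩
    have hd0 : 0 < Sloc G w' x := lt_of_le_of_lt Sloc_nonneg hgtd
    obtain ⟨z, hz, heqz⟩ := Sloc_attain hd0
    have hdval : d = ‖w' x - w' z‖ := by rw [← heqd, heqz, norm_sub_rev]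
    have hle2 : ‖u x - u z‖ ≤ Sloc G u x := by
      rw [norm_sub_rev]; exact le_Sloc hz
    have hdS : Sloc G w' x = ‖w' x - w' z‖ := by rw [heqz, norm_sub_rev]
    by_cases hab2 : u x - u z = v x - v z
    · by_cases hsz : ‖u x - u z‖ ≤ s
      · have := P2 x z hz hab2 hsz
        rw [hdval]; exact this
      · have h2 := (P3 x z hz hab2 (not_le.mp hsz)).2
        exfalso
        rw [hdS] at hgtd
        linarith
    · have h1 := P1 x z hz hab2
      rcases le_or_gt ‖v x - v z‖ ‖u x - u z‖ with hle | hlt2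
      · rw [max_eq_left hle] at h1
        exfalso
        rw [hdS] at hgtd
        linarith
      · have h2 := HB x z hz (fun hc => hxY hc.1) hlt2
        rw [max_eq_right hlt2.le] at h1
        rw [hdval]
        linarith
  show sSup BV < sSup AV
  rcases Set.eq_empty_or_nonempty BV with hE | hne
  · rw [hE, Real.sSup_empty]
    linarith
  · have hmem := hne.csSup_mem hBVfin
    have := hBVlt _ hmem
    linarith

private lemma dirB {X : Type*} [Fintype X] {m : ℕ} (G : SimpleGraph X)
    (Y : Set X) (hY : Y.Nonempty) (u v : X → EuclideanSpace ℝ (Fin m))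
    (h : Tighter G Y v u) : ∃ w, EdgeTighter G Y w u := by
  classical
  have hXne : Nonempty X := ⟨hY.some⟩
  obtain ⟨hvY, hlt⟩ := h
  set AV := {d : ℝ | ∃ x, x ∉ Y ∧ Sloc G u x = d ∧ Sloc G v x < Sloc G u x} with hAVdef
  set BV := {d : ℝ | ∃ x, x ∉ Y ∧ Sloc G v x = d ∧ Sloc G u x < Sloc G v x} with hBVdef
  set s := sSup BV with hsdef
  set t := sSup AV with htdef
  have hAfin : AV.Finite :=
    (Set.finite_range fun x => Sloc G u x).subset (by rintro d ⟨x, _, h1, _⟩; exact ⟨x, h1⟩)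
  have hBfin : BV.Finite :=
    (Set.finite_range fun x => Sloc G v x).subset (by rintro d ⟨x, _, h1, _⟩; exact ⟨x, h1⟩)
  have hs0 : 0 ≤ s :=
    Real.sSup_nonneg (by rintro d ⟨x, _, h1, _⟩; rw [← h1]; exact Sloc_nonneg)
  have ht0 : 0 < t := lt_of_le_of_lt hs0 hlt
  have hAne : AV.Nonempty := by
    by_contra hc
    rw [Set.not_nonempty_iff_eq_empty] at hc
    rw [htdef, hc, Real.sSup_empty] at ht0
    exact lt_irrefl _ ht0
  obtain ⟨x0, hx0Y, hequ, hlv⟩ := hAne.csSup_mem hAfin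
  have HBv : ∀ x, x ∉ Y → Sloc G u x < Sloc G v x → Sloc G v x ≤ s :=
    fun x h1 h2 => le_csSup hBfin.bddAbove ⟨x, h1, rfl, h2⟩
  have hu0 : 0 < Sloc G u x0 := by rw [hequ]; exact ht0
  obtain ⟨y0, hy0, hey0⟩ := Sloc_attain hu0
  obtain ⟨w', P0, P1, P2, P3⟩ := core G Y u v hvY s t hs0 hlt
  refine ⟨w', P0, ?_⟩
  set AE := {d : ℝ | ∃ x y, G.Adj x y ∧ ¬(x ∈ Y ∧ y ∈ Y) ∧ ‖u x - u y‖ = d ∧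
      ‖w' x - w' y‖ < ‖u x - u y‖} with hAEdef
  set BE := {d : ℝ | ∃ x y, G.Adj x y ∧ ¬(x ∈ Y ∧ y ∈ Y) ∧ ‖w' x - w' y‖ = d ∧
      ‖u x - u y‖ < ‖w' x - w' y‖} with hBEdef
  have hAEfin : AE.Finite :=
    (Set.finite_range fun p : X × X => ‖u p.1 - u p.2‖).subset
      (by rintro d ⟨x, y, _, _, h1, _⟩; exact ⟨(x, y), h1⟩)
  have hBEfin : BE.Finite :=
    (Set.finite_range fun p : X × X => ‖w' p.1 - w' p.2‖).subset
      (by rintro d ⟨x, y, _, _, h1, _⟩; exact ⟨(x, y), h1⟩)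
  have huxy : ‖u x0 - u y0‖ = t := by rw [norm_sub_rev, ← hey0, hequ]
  have hvxy : ‖v x0 - v y0‖ < ‖u x0 - u y0‖ := by
    have h1 : ‖v y0 - v x0‖ ≤ Sloc G v x0 := le_Sloc hy0
    rw [norm_sub_rev (v x0), huxy]
    rw [hequ] at hlv
    linarith
  have hab0 : u x0 - u y0 ≠ v x0 - v y0 := by
    intro hcc
    rw [hcc] at hvxy
    exact lt_irrefl _ hvxy
  have hw0 : ‖w' x0 - w' y0‖ < ‖u x0 - u y0‖ := by
    have h1 := P1 x0 y0 hy0 hab0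
    rw [max_eq_left hvxy.le] at h1
    exact h1
  have htAE : t ≤ sSup AE :=
    le_csSup hAEfin.bddAbove ⟨x0, y0, hy0, fun hc => hx0Y hc.1, huxy, hw0⟩
  have hBElt : ∀ d ∈ BE, d < sSup AE := by
    rintro d ⟨x, y, hadj, hrel, heqd, hgt⟩
    by_cases hab : u x - u y = v x - v y
    · by_cases hss : ‖u x - u y‖ ≤ s
      · have := P2 x y hadj hab hss
        rw [heqd] at this
        linarith
      · have := (P3 x y hadj hab (not_le.mp hss)).2
        exfalso
        rw [heqd] at this hgt
        linarith
    · rcases le_or_gt ‖v x - v y‖ ‖u x - u y‖ with hle | hlt2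
      · have h1 := P1 x y hadj hab
        rw [max_eq_left hle, heqd] at h1
        exfalso
        linarith
      · have hd : d < ‖v x - v y‖ := by
          have h1 := P1 x y hadj hab
          rw [max_eq_right hlt2.le, heqd] at h1
          exact h1
        have hgne : v x - u x ≠ v y - u y := by
          intro h1
          apply hab
          have := sub_eq_sub_iff_sub_eq_sub.mp h1
          linear_combination (norm := module) -this
        have hK : ∀ c, c ∉ Y → v c - u c ≠ 0 → ‖v x - v y‖ ≤ Sloc G v c → d < sSup AE := by
          intro c hcY hgc hBle
          rcases le_or_gt (Sloc G v c) s with hcs | hcs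
          · linarith
          · have hvu : Sloc G v c ≤ Sloc G u c := by
              by_contra hcon
              push_neg at hcon
              exact absurd (HBv c hcY hcon) (not_le.mpr hcs)
            have hu0c : 0 < Sloc G u c := by linarith
            obtain ⟨z, hz, hez⟩ := Sloc_attain hu0c
            have hA'n : ‖u c - u z‖ = Sloc G u c := by rw [norm_sub_rev, ← hez]
            have himp : ‖w' c - w' z‖ < ‖u c - u z‖ := by
              by_cases hab' : u c - u z = v c - v z
              · have hbig : s < ‖u c - u z‖ := by rw [hA'n]; linarith
                exact (P3 c z hz hab' hbig).1 hgc
              · have h1 := P1 c z hz hab'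
                have hb'le : ‖v c - v z‖ ≤ ‖u c - u z‖ := by
                  rw [hA'n]
                  calc ‖v c - v z‖ = ‖v z - v c‖ := norm_sub_rev _ _
                    _ ≤ Sloc G v c := le_Sloc hz
                    _ ≤ Sloc G u c := hvu
                rw [max_eq_left hb'le] at h1
                exact h1
            have hle3 : ‖u c - u z‖ ≤ sSup AE :=
              le_csSup hAEfin.bddAbove ⟨c, z, hz, fun hc2 => hcY hc2.1, rfl, himp⟩
            rw [hA'n] at hle3
            linarith
        by_cases hgx : v x - u x = 0
        · have hgy : v y - u y ≠ 0 := fun h1 => hgne (hgx.trans h1.symm)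
          have hyY : y ∉ Y := fun hy => hgy (by rw [hvY y hy, sub_self])
          exact hK y hyY hgy (le_Sloc hadj.symm)
        · have hxY2 : x ∉ Y := fun hx => hgx (by rw [hvY x hx, sub_self])
          refine hK x hxY2 hgx ?_
          rw [norm_sub_rev]
          exact le_Sloc hadj
  show sSup BE < sSup AE
  rcases Set.eq_empty_or_nonempty BE with hE | hne
  · rw [hE, Real.sSup_empty]
    linarith
  · have hmem := hne.csSup_mem hBEfin
    exact hBElt _ hmem

theorem stmt4 {X : Type*} [Fintype X] {m : ℕ} (G : SimpleGraph X)
    (hconn : G.Connected) (Y : Set X) (hY : Y.Nonempty)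
    (u : X → EuclideanSpace ℝ (Fin m)) :
    Tight G Y u ↔ EdgeTight G Y u := by
  constructor
  · intro ht
    rintro ⟨v, hv⟩
    exact ht (dirA G Y hY u v hv)
  · intro het
    rintro ⟨v, hv⟩
    exact het (dirB G Y hY u v hv)
end

section
/- Define sequences r_0 = 1, ε_0 = 1/4, r_{i+1} = (r_i² + (ε_i/2)²)^{1/2}, ε_{i+1} = 2(r_i − (r_i² − ε_i²)^{1/2}). Then (i) r_i is increasing; (ii) ε_{i+1} ≤ 2 ε_i² for all i; (iii) ε_i → 0 and Σ_i ε_i < ∞; (iv) r_i converges to a finite limit. -/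
theorem stmt6 (r ε : ℕ → ℝ) (hr0 : r 0 = 1) (he0 : ε 0 = 1/4)
    (hr : ∀ i, r (i+1) = Real.sqrt ((r i)^2 + (ε i / 2)^2))
    (he : ∀ i, ε (i+1) = 2 * (r i - Real.sqrt ((r i)^2 - (ε i)^2))) :
    StrictMono r ∧
    (∀ i, ε (i+1) ≤ 2 * (ε i)^2) ∧
    Filter.Tendsto ε Filter.atTop (nhds 0) ∧
    Summable ε ∧
    ∃ L : ℝ, Filter.Tendsto r Filter.atTop (nhds L) := by
  have key : ∀ i, 1 ≤ r i ∧ r i ≤ 3/2 - (1/2)^(i+1) ∧ 0 < ε i ∧ ε i ≤ 1/4 * (1/2)^i := by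
    intro i
    induction i with
    | zero => refine ⟨by rw [hr0], by rw [hr0]; norm_num, by rw [he0]; norm_num, by rw [he0]; norm_num⟩
    | succ n ih =>
      obtain ⟨hr1, hrb, hε0, hεb⟩ := ih
      have hpow : (0:ℝ) < (1/2:ℝ)^n := by positivity
      have hpow1 : ((1:ℝ)/2)^n ≤ 1 := pow_le_one₀ (by norm_num) (by norm_num)
      have hεq : ε n ≤ 1/4 := by nlinarith
      have hnn : 0 ≤ (r n)^2 - (ε n)^2 := by nlinarith
      have hs0 : 0 ≤ Real.sqrt ((r n)^2 - (ε n)^2) := Real.sqrt_nonneg _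
      have hs2 : (Real.sqrt ((r n)^2 - (ε n)^2))^2 = (r n)^2 - (ε n)^2 := Real.sq_sqrt hnn
      set s := Real.sqrt ((r n)^2 - (ε n)^2) with hsdef
      have hsr : s < r n := by nlinarith
      have hr1' : 1 ≤ r (n+1) := by
        rw [hr n]
        rw [show (1:ℝ) = Real.sqrt 1 by simp]
        apply Real.sqrt_le_sqrt
        nlinarith
      have hrle : r (n+1) ≤ r n + ε n := by
        rw [hr n]
        have h1 : (r n)^2 + (ε n / 2)^2 ≤ (r n + ε n)^2 := by nlinarith
        calc Real.sqrt ((r n)^2 + (ε n / 2)^2) ≤ Real.sqrt ((r n + ε n)^2) :=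
              Real.sqrt_le_sqrt h1
          _ = r n + ε n := Real.sqrt_sq (by linarith)
      refine ⟨hr1', ?_, ?_, ?_⟩
      · have : (1/2:ℝ)^(n+2) = (1/4) * (1/2)^n := by ring
        calc r (n+1) ≤ r n + ε n := hrle
          _ ≤ 3/2 - (1/2)^(n+1+1) := by rw [this]; rw [show ((1:ℝ)/2)^(n+1) = (1/2)*(1/2)^n by ring] at hrb; nlinarith
      · rw [he n]; nlinarith
      · rw [he n]
        have h1 : 2 * (r n - s) ≤ 2 * (ε n)^2 := by nlinarith
        have h2 : 2 * (ε n)^2 ≤ (1/2) * ε n := by nlinarith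
        calc 2 * (r n - s) ≤ (1/2) * ε n := by linarith
          _ ≤ 1/4 * (1/2)^(n+1) := by rw [show ((1:ℝ)/2)^(n+1) = (1/2)*(1/2)^n by ring]; nlinarith
  have hmono : StrictMono r := by
    apply strictMono_nat_of_lt_succ
    intro n
    obtain ⟨hr1, _, hε0, _⟩ := key n
    rw [hr n]
    exact (Real.lt_sqrt (by linarith)).mpr (by nlinarith)
  have hstep : ∀ i, ε (i+1) ≤ 2 * (ε i)^2 := by
    intro n
    obtain ⟨hr1, _, hε0, hεb⟩ := key n
    have hpow1 : ((1:ℝ)/2)^n ≤ 1 := pow_le_one₀ (by norm_num) (by norm_num)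
    have hnn : 0 ≤ (r n)^2 - (ε n)^2 := by nlinarith
    have hs0 : 0 ≤ Real.sqrt ((r n)^2 - (ε n)^2) := Real.sqrt_nonneg _
    have hs2 : (Real.sqrt ((r n)^2 - (ε n)^2))^2 = (r n)^2 - (ε n)^2 := Real.sq_sqrt hnn
    rw [he n]
    nlinarith
  have hεbound : ∀ i, ε i ≤ 1/4 * (1/2)^i := fun i => (key i).2.2.2
  have hεpos : ∀ i, 0 ≤ ε i := fun i => le_of_lt (key i).2.2.1
  have htend : Filter.Tendsto ε Filter.atTop (nhds 0) := by
    apply squeeze_zero hεpos hεbound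
    have : Filter.Tendsto (fun i : ℕ => ((1:ℝ)/2)^i) Filter.atTop (nhds 0) :=
      tendsto_pow_atTop_nhds_zero_of_lt_one (by norm_num) (by norm_num)
    have h := this.const_mul (1/4 : ℝ)
    simpa using h
  have hsum : Summable ε := by
    apply Summable.of_nonneg_of_le hεpos hεbound
    exact (summable_geometric_of_lt_one (by norm_num) (by norm_num)).mul_left _
  refine ⟨hmono, hstep, htend, hsum, ?_⟩
  have hbdd : BddAbove (Set.range r) := by
    refine ⟨3/2, ?_⟩
    rintro x ⟨i, rfl⟩
    have := (key i).2.1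
    have hp : (0:ℝ) < (1/2:ℝ)^(i+1) := by positivity
    linarith
  exact ⟨⨆ i, r i, tendsto_atTop_ciSup hmono.monotone hbdd⟩
end

section
/- For an m × n real matrix A with λ₁(AᵗA) > λ₂(AᵗA), let a be a unit vector spanning the principal eigenspace of AᵗA. Then for any m × n matrix B, the map s ↦ |A + sB|² (operator norm squared) is differentiable at s = 0 with derivative 2(Aa)ᵗ(Ba); i.e., |A + sB|² = |A|² + 2s (Aa)ᵗ(Ba) + O(s²). -/
open Matrix

/-- The operator norm of an `m × n` real matrix, `|A| = max_{|a|=1} |Aa|`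
(Euclidean norms on domain and codomain). -/
noncomputable def opN {m n : ℕ} (A : Matrix (Fin m) (Fin n) ℝ) : ℝ :=
  ‖LinearMap.toContinuousLinearMap (Matrix.toEuclideanLin A)‖

open scoped RealInnerProductSpace

namespace Stmt10Aux

variable {E F : Type*} [NormedAddCommGroup E] [InnerProductSpace ℝ E]
  [NormedAddCommGroup F] [InnerProductSpace ℝ F] [FiniteDimensional ℝ E]

-- Step A: norm attained
lemma exists_unit_max (a : E) (ha : ‖a‖ = 1) (M : E →L[ℝ] F) :
    ∃ v : E, ‖v‖ = 1 ∧ ‖M v‖ = ‖M‖ := by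
  obtain ⟨v, hv, hvmax⟩ := (isCompact_sphere (0:E) 1).exists_isMaxOn
    ⟨a, by simp [ha]⟩ ((continuous_norm.comp M.continuous).continuousOn)
  rw [mem_sphere_zero_iff_norm] at hv
  refine ⟨v, hv, le_antisymm (M.unit_le_opNorm v hv.le) ?_⟩
  refine M.opNorm_le_bound (norm_nonneg _) (fun x => ?_)
  rcases eq_or_ne x 0 with rfl | hx
  · simp
  · have hxn : ‖x‖ ≠ 0 := norm_ne_zero_iff.mpr hx
    have h1 : ‖(‖x‖⁻¹ • x)‖ = 1 := by
      rw [norm_smul, norm_inv, norm_norm, inv_mul_cancel₀ hxn]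
    have := hvmax (mem_sphere_zero_iff_norm.mpr h1)
    simp only [Function.comp, _root_.map_smul, norm_smul, norm_inv, norm_norm] at this
    calc ‖M x‖ = ‖x‖ * (‖x‖⁻¹ * ‖M x‖) := by field_simp
    _ ≤ ‖x‖ * ‖M v‖ := by
        apply mul_le_mul_of_nonneg_left _ (norm_nonneg x)
        simpa [norm_smul] using this
    _ = ‖M v‖ * ‖x‖ := mul_comm _ _

lemma gap_lemma (T : E →L[ℝ] F) (a : E) (ha : ‖a‖ = 1)
    (hTa : ∀ v : E, ⟪T a, T v⟫ = ‖T‖^2 * ⟪a, v⟫)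
    (hmax : ∀ v : E, ‖v‖ = 1 → ‖T v‖ = ‖T‖ → v = a ∨ v = -a) :
    ∃ δ > 0, ∀ v : E, ‖v‖ = 1 → ‖T v‖^2 ≤ ‖T‖^2 - δ * (1 - ⟪a, v⟫^2) := by
  have haa : ⟪a, a⟫ = 1 := by rw [real_inner_self_eq_norm_sq, ha]; norm_num
  have hTaa : ‖T a‖^2 = ‖T‖^2 := by
    rw [← real_inner_self_eq_norm_sq, hTa a, haa, mul_one]
  -- orthogonal part bound
  have hkey : ∃ μ < ‖T‖^2, ∀ w : E, ⟪a, w⟫ = 0 → ‖T w‖^2 ≤ μ * ‖w‖^2 := by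
    by_cases hK : ∀ w : E, ⟪a, w⟫ = 0 → w = 0
    · refine ⟨‖T‖^2 - 1, by linarith, fun w hw => ?_⟩
      rw [hK w hw]; simp
    · push_neg at hK
      obtain ⟨w₁, hw₁, hw₁0⟩ := hK
      have hSp : (Metric.sphere (0:E) 1 ∩ {w : E | ⟪a, w⟫ = 0}).Nonempty := by
        refine ⟨‖w₁‖⁻¹ • w₁, ?_, ?_⟩
        · rw [mem_sphere_zero_iff_norm, norm_smul, norm_inv, norm_norm,
            inv_mul_cancel₀ (norm_ne_zero_iff.mpr hw₁0)]
        · simp [Set.mem_setOf_eq, real_inner_smul_right, hw₁]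
      have hcpt : IsCompact (Metric.sphere (0:E) 1 ∩ {w : E | ⟪a, w⟫ = 0}) :=
        (isCompact_sphere (0:E) 1).inter_right
          (isClosed_eq ((continuous_const.inner continuous_id')) continuous_const)
      obtain ⟨w₀, hw₀mem, hw₀max⟩ := hcpt.exists_isMaxOn hSp
        ((continuous_norm.comp T.continuous).continuousOn)
      obtain ⟨hw₀s, hw₀o⟩ := hw₀mem
      rw [mem_sphere_zero_iff_norm] at hw₀s
      rw [Set.mem_setOf_eq] at hw₀o
      refine ⟨‖T w₀‖^2, ?_, fun w hw => ?_⟩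
      · have hle : ‖T w₀‖ ≤ ‖T‖ := T.unit_le_opNorm w₀ hw₀s.le
        rcases lt_or_eq_of_le hle with h | h
        · exact pow_lt_pow_left₀ h (norm_nonneg _) two_ne_zero
        · exfalso
          rcases hmax w₀ hw₀s h with rfl | rfl
          · rw [haa] at hw₀o; norm_num at hw₀o
          · rw [inner_neg_right, haa] at hw₀o; norm_num at hw₀o
      · rcases eq_or_ne w 0 with rfl | hw0
        · simp
        · have hwn : ‖w‖ ≠ 0 := norm_ne_zero_iff.mpr hw0
          have hmem : ‖w‖⁻¹ • w ∈ Metric.sphere (0:E) 1 ∩ {w : E | ⟪a, w⟫ = 0} := by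
            refine ⟨?_, ?_⟩
            · rw [mem_sphere_zero_iff_norm, norm_smul, norm_inv, norm_norm,
                inv_mul_cancel₀ hwn]
            · simp [Set.mem_setOf_eq, real_inner_smul_right, hw]
          have h3 : ‖T (‖w‖⁻¹ • w)‖ ≤ ‖T w₀‖ := hw₀max hmem
          rw [_root_.map_smul, norm_smul, norm_inv, norm_norm] at h3
          have h2 : ‖T w‖ ≤ ‖T w₀‖ * ‖w‖ := by
            calc ‖T w‖ = ‖w‖ * (‖w‖⁻¹ * ‖T w‖) := by field_simp
            _ ≤ ‖w‖ * ‖T w₀‖ := mul_le_mul_of_nonneg_left h3 (norm_nonneg w)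
            _ = ‖T w₀‖ * ‖w‖ := mul_comm _ _
          calc ‖T w‖^2 ≤ (‖T w₀‖ * ‖w‖)^2 := by
                exact pow_le_pow_left₀ (norm_nonneg _) h2 2
          _ = ‖T w₀‖^2 * ‖w‖^2 := by ring
  obtain ⟨μ, hμ, hμw⟩ := hkey
  refine ⟨‖T‖^2 - μ, by linarith, fun v hv => ?_⟩
  set t : ℝ := ⟪a, v⟫ with ht
  set w : E := v - t • a with hwdef
  have hw : ⟪a, w⟫ = 0 := by
    rw [hwdef, inner_sub_right, real_inner_smul_right, haa]; ring
  have hvw : v = t • a + w := by rw [hwdef]; abel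
  have hns : 1 = t^2 + ‖w‖^2 := by
    have : ‖v‖^2 = t^2*‖a‖^2 + 2*(t*⟪a,w⟫) + ‖w‖^2 := by
      rw [hvw, norm_add_sq_real, norm_smul, real_inner_smul_left]
      simp [mul_pow]; try ring
    rw [hv, ha, hw] at this; simpa using this
  have hexp : ‖T v‖^2 = t^2*‖T‖^2 + ‖T w‖^2 := by
    have hcross : ⟪T a, T w⟫ = 0 := by rw [hTa w, hw, mul_zero]
    rw [hvw, map_add, _root_.map_smul, norm_add_sq_real, norm_smul, real_inner_smul_left,
      hcross, mul_zero]
    simp [mul_pow, hTaa]; try ring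
  have hTw : ‖T w‖^2 ≤ μ * ‖w‖^2 := hμw w hw
  have h1t : ‖w‖^2 = 1 - t^2 := by linarith
  rw [hexp, h1t] at *
  nlinarith [sq_nonneg t, norm_nonneg w]

set_option maxHeartbeats 1000000 in
theorem aux (T U : E →L[ℝ] F) (a : E) (ha : ‖a‖ = 1)
    (hTa : ∀ v : E, ⟪T a, T v⟫ = ‖T‖^2 * ⟪a, v⟫)
    (hmax : ∀ v : E, ‖v‖ = 1 → ‖T v‖ = ‖T‖ → v = a ∨ v = -a) :
    HasDerivAt (fun s : ℝ => ‖T + s • U‖^2) (2 * ⟪T a, U a⟫) 0 := by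
  set L : ℝ := ‖T‖ with hL
  set β : ℝ := ‖U‖ with hβ
  have hL0 : 0 ≤ L := norm_nonneg _
  have hβ0 : 0 ≤ β := norm_nonneg _
  set d : ℝ := 2 * ⟪T a, U a⟫ with hd
  obtain ⟨δ, hδ, hgap⟩ := gap_lemma T a ha hTa hmax
  have haa : ⟪a, a⟫ = 1 := by rw [real_inner_self_eq_norm_sq, ha]; norm_num
  have hTaa : ‖T a‖^2 = L^2 := by
    rw [← real_inner_self_eq_norm_sq, hTa a, haa, mul_one]
  set K : ℝ := 4*L*β + 4*β^2 with hK
  have hK0 : 0 ≤ K := by positivity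
  set C : ℝ := 4*L*β*Real.sqrt (2*K/δ) + β^2 with hC
  have hC0 : 0 ≤ C := by positivity
  have hexp : ∀ (s : ℝ) (v : E),
      ‖(T + s • U) v‖^2 = ‖T v‖^2 + 2*(s*⟪T v, U v⟫) + s^2*‖U v‖^2 := by
    intro s v
    have h1 : (T + s • U) v = T v + s • U v := by
      simp [ContinuousLinearMap.add_apply, ContinuousLinearMap.smul_apply]
    rw [h1, norm_add_sq_real, real_inner_smul_right, norm_smul]
    simp [mul_pow, Real.norm_eq_abs, sq_abs]
  -- the master two-sided estimate
  have key : ∀ s : ℝ, |s| ≤ 1 →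
      0 ≤ ‖T + s•U‖^2 - L^2 - s*d ∧
      ‖T + s•U‖^2 - L^2 - s*d ≤ C * (|s| * Real.sqrt |s|) := by
    intro s hs
    have habs : 0 ≤ |s| := abs_nonneg s
    have hsq : Real.sqrt |s| * Real.sqrt |s| = |s| := Real.mul_self_sqrt habs
    have hsqrt0 : 0 ≤ Real.sqrt |s| := Real.sqrt_nonneg _
    have hsqrt1 : Real.sqrt |s| ≤ 1 := by
      rw [show (1:ℝ) = Real.sqrt 1 by simp]
      exact Real.sqrt_le_sqrt hs
    have habssq : |s| ≤ Real.sqrt |s| := by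
      calc |s| = Real.sqrt |s| * Real.sqrt |s| := hsq.symm
      _ ≤ Real.sqrt |s| * 1 := mul_le_mul_of_nonneg_left hsqrt1 hsqrt0
      _ = Real.sqrt |s| := mul_one _
    have hssq : s^2 = |s| * |s| := by rw [← abs_mul, abs_mul_self]; ring
    have e2 : |s| * |s| ≤ |s| := by
      calc |s| * |s| ≤ 1 * |s| := mul_le_mul_of_nonneg_right hs habs
      _ = |s| := one_mul _
    have hs2 : s^2 ≤ |s| * Real.sqrt |s| := by
      have h1 : |s| * |s| ≤ |s| * Real.sqrt |s| :=
        mul_le_mul_of_nonneg_left habssq habs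
      linarith [hssq]
    -- lower bound via a
    have hlow : L^2 + s*d + s^2*‖U a‖^2 ≤ ‖T + s•U‖^2 := by
      have h1 : ‖(T + s•U) a‖ ≤ ‖T + s•U‖ := (T + s•U).unit_le_opNorm a ha.le
      have h2 : ‖(T + s•U) a‖^2 ≤ ‖T + s•U‖^2 :=
        pow_le_pow_left₀ (norm_nonneg _) h1 2
      rw [hexp s a, hTaa] at h2
      rw [hd]; linarith [h2]
    have hUa2 : (0:ℝ) ≤ s^2*‖U a‖^2 := by positivity
    constructor
    · linarith [hlow, hUa2]
    -- upper bound via maximizer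
    obtain ⟨v, hv1, hvmax⟩ := exists_unit_max a ha (T + s•U)
    set t : ℝ := ⟪a, v⟫ with ht
    have hfs : ‖T + s•U‖^2 = ‖T v‖^2 + 2*(s*⟪T v, U v⟫) + s^2*‖U v‖^2 := by
      rw [← hvmax, hexp]
    have hTvL : ‖T v‖ ≤ L := T.unit_le_opNorm v hv1.le
    have hUvβ : ‖U v‖ ≤ β := U.unit_le_opNorm v hv1.le
    have hTaL : ‖T a‖ ≤ L := T.unit_le_opNorm a ha.le
    have hUaβ : ‖U a‖ ≤ β := U.unit_le_opNorm a ha.le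
    have hTv0 : 0 ≤ ‖T v‖ := norm_nonneg _
    have hUv0 : 0 ≤ ‖U v‖ := norm_nonneg _
    have hiTU : |⟪T v, U v⟫| ≤ L * β := by
      calc |⟪T v, U v⟫| ≤ ‖T v‖ * ‖U v‖ := abs_real_inner_le_norm _ _
      _ ≤ L * β := mul_le_mul hTvL hUvβ hUv0 hL0
    -- L^2 close to ‖T+sU‖^2
    have htri1 : L ≤ ‖T + s•U‖ + |s| * β := by
      have heq : T = (T + s•U) - s•U := by abel
      calc L = ‖(T + s•U) - s•U‖ := by rw [← heq]
      _ ≤ ‖T + s•U‖ + ‖s•U‖ := norm_sub_le _ _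
      _ = ‖T + s•U‖ + |s| * β := by rw [norm_smul s U, Real.norm_eq_abs]
    have htri2 : ‖T + s•U‖ ≤ L + |s| * β := by
      calc ‖T + s•U‖ ≤ ‖T‖ + ‖s•U‖ := norm_add_le _ _
      _ = L + |s| * β := by rw [norm_smul s U, Real.norm_eq_abs]
    have hN0 : 0 ≤ ‖T + s•U‖ := norm_nonneg _
    have hineqL : L^2 ≤ ‖T + s•U‖^2 + 2 * |s| * β * (L + |s| * β) + s^2*β^2 := by
      have h1 : L^2 ≤ (‖T + s•U‖ + |s| * β)^2 := by nlinarith [htri1, hN0]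
      have h3 : (2*(|s| * β)) * ‖T + s•U‖ ≤ (2*(|s| * β)) * (L + |s| * β) :=
        mul_le_mul_of_nonneg_left htri2 (by positivity)
      have m4 : s^2*β^2 = (|s| * |s|)*β^2 := by rw [hssq]
      linarith [h1, h3, m4]
    -- ‖T v‖^2 is close to L^2
    have hTv2 : ‖T + s•U‖^2 - 2 * |s| * (L*β) - s^2*β^2 ≤ ‖T v‖^2 := by
      have h1 : s*⟪T v, U v⟫ ≤ |s| * (L*β) := by
        calc s*⟪T v, U v⟫ ≤ |s*⟪T v, U v⟫| := le_abs_self _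
        _ = |s| * |⟪T v, U v⟫| := abs_mul _ _
        _ ≤ |s| * (L*β) := mul_le_mul_of_nonneg_left hiTU habs
      have h2 : ‖U v‖^2 ≤ β^2 := pow_le_pow_left₀ hUv0 hUvβ 2
      have m : s^2*‖U v‖^2 ≤ s^2*β^2 := mul_le_mul_of_nonneg_left h2 (sq_nonneg s)
      linarith [hfs, h1, m]
    have hgapv : ‖T v‖^2 ≤ L^2 - δ*(1 - t^2) := hgap v hv1
    have h1t : δ*(1 - t^2) ≤ K * |s| := by
      have m1 : (|s| * |s|)*β^2 ≤ |s| * β^2 := mul_le_mul_of_nonneg_right e2 (sq_nonneg β)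
      have m2 : s^2*β^2 ≤ |s| * β^2 := by
        rw [hssq]; exact m1
      have hKs : K * |s| = 4*(L*(β * |s|)) + 4*(β^2 * |s|) := by rw [hK]; ring
      have m5 : s^2*β^2 = (|s| * |s|)*β^2 := by rw [hssq]
      linarith [hgapv, hineqL, hTv2, m1, m2, hKs, m5]
    -- flip sign
    set u : E := if 0 ≤ t then v else -v with hu
    have hu1 : ‖u‖ = 1 := by rw [hu]; split <;> simp [hv1]
    have hut : ⟪a, u⟫ = |t| := by
      rw [hu]; split
      · rw [abs_of_nonneg (by assumption)]
      · rw [inner_neg_right, ← ht, abs_of_neg (by linarith [not_le.mp (by assumption)])]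
    have hiuv : ⟪T u, U u⟫ = ⟪T v, U v⟫ := by
      rw [hu]; split
      · rfl
      · rw [map_neg, map_neg, inner_neg_neg]
    have htabs : |t| ≤ 1 := by
      have h6 := abs_real_inner_le_norm a v
      rwa [ha, hv1, one_mul] at h6
    have huma : ‖u - a‖^2 ≤ 2*(1 - t^2) := by
      rw [norm_sub_sq_real, hu1, ha, real_inner_comm a u, hut]
      have h5 : t^2 ≤ |t| := by
        have h7 : t^2 = |t| * |t| := by rw [← abs_mul, abs_mul_self]; ring
        calc t^2 = |t| * |t| := h7
        _ ≤ |t| * 1 := mul_le_mul_of_nonneg_left htabs (abs_nonneg t)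
        _ = |t| := mul_one _
      linarith [h5]
    have huma2 : ‖u - a‖^2 ≤ 2*K/δ * |s| := by
      have h1 : 1 - t^2 ≤ K * |s|/δ := by
        rw [le_div_iff₀ hδ]; linarith [h1t]
      calc ‖u - a‖^2 ≤ 2*(1 - t^2) := huma
      _ ≤ 2*(K * |s|/δ) := by linarith
      _ = 2*K/δ * |s| := by ring
    have hdist : ‖u - a‖ ≤ Real.sqrt (2*K/δ) * Real.sqrt |s| := by
      rw [← Real.sqrt_mul (by positivity) |s|]
      calc ‖u - a‖ = Real.sqrt (‖u - a‖^2) := by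
            rw [Real.sqrt_sq (norm_nonneg _)]
      _ ≤ Real.sqrt (2*K/δ * |s|) := Real.sqrt_le_sqrt huma2
    have hdiff : |⟪T v, U v⟫ - ⟪T a, U a⟫| ≤ 2*L*β*‖u - a‖ := by
      rw [← hiuv]
      have hsplit : ⟪T u, U u⟫ - ⟪T a, U a⟫ = ⟪T (u-a), U u⟫ + ⟪T a, U (u-a)⟫ := by
        rw [map_sub, map_sub, inner_sub_left, inner_sub_right]; ring
      rw [hsplit]
      have h1 : |⟪T (u-a), U u⟫| ≤ (L*‖u-a‖)*β := by
        calc |⟪T (u-a), U u⟫| ≤ ‖T (u-a)‖*‖U u‖ := abs_real_inner_le_norm _ _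
        _ ≤ (L*‖u-a‖)*β :=
          mul_le_mul (T.le_opNorm _) (U.unit_le_opNorm u hu1.le) (norm_nonneg _)
            (by positivity)
      have h2 : |⟪T a, U (u-a)⟫| ≤ L*(β*‖u-a‖) := by
        calc |⟪T a, U (u-a)⟫| ≤ ‖T a‖*‖U (u-a)‖ := abs_real_inner_le_norm _ _
        _ ≤ L*(β*‖u-a‖) :=
          mul_le_mul hTaL (U.le_opNorm _) (norm_nonneg _) hL0
      calc |⟪T (u-a), U u⟫ + ⟪T a, U (u-a)⟫|
          ≤ |⟪T (u-a), U u⟫| + |⟪T a, U (u-a)⟫| := abs_add_le _ _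
      _ ≤ 2*L*β*‖u - a‖ := by linarith [h1, h2]
    -- assemble the upper bound
    have h2s : 2*(s*⟪T v, U v⟫) - s*d ≤ 2 * |s| * (2*L*β*‖u - a‖) := by
      have h1 : 2*(s*⟪T v, U v⟫) - s*d = 2*(s*(⟪T v, U v⟫ - ⟪T a, U a⟫)) := by
        rw [hd]; ring
      rw [h1]
      have h2 : s*(⟪T v, U v⟫ - ⟪T a, U a⟫) ≤ |s| * (2*L*β*‖u - a‖) := by
        calc s*(⟪T v, U v⟫ - ⟪T a, U a⟫) ≤ |s*(⟪T v, U v⟫ - ⟪T a, U a⟫)| := le_abs_self _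
        _ = |s| * |⟪T v, U v⟫ - ⟪T a, U a⟫| := abs_mul _ _
        _ ≤ |s| * (2*L*β*‖u - a‖) := mul_le_mul_of_nonneg_left hdiff habs
      linarith
    have hTv2' : ‖T v‖^2 ≤ L^2 := pow_le_pow_left₀ hTv0 hTvL 2
    have hUv2 : ‖U v‖^2 ≤ β^2 := pow_le_pow_left₀ hUv0 hUvβ 2
    have hfinal : ‖T + s•U‖^2 - L^2 - s*d
        ≤ 2 * |s| * (2*L*β*‖u - a‖) + β^2*s^2 := by
      have m3 : s^2*‖U v‖^2 ≤ s^2*β^2 := mul_le_mul_of_nonneg_left hUv2 (sq_nonneg s)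
      linarith [hfs, hTv2', h2s, m3]
    have hprod : 2 * |s| * (2*L*β*‖u - a‖)
        ≤ 4*L*β*Real.sqrt (2*K/δ) * (|s| * Real.sqrt |s|) := by
      have h1 : (0:ℝ) ≤ 4*L*β* |s| := by positivity
      linarith [mul_le_mul_of_nonneg_left hdist h1]
    have hβs : β^2*s^2 ≤ β^2*(|s| * Real.sqrt |s|) :=
      mul_le_mul_of_nonneg_left hs2 (by positivity)
    calc ‖T + s•U‖^2 - L^2 - s*d ≤ 2 * |s| * (2*L*β*‖u - a‖) + β^2*s^2 := hfinal
    _ ≤ 4*L*β*Real.sqrt (2*K/δ) * (|s| * Real.sqrt |s|)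
          + β^2*(|s| * Real.sqrt |s|) := by linarith [hprod, hβs]
    _ = C * (|s| * Real.sqrt |s|) := by rw [hC]; ring
  -- conclude via little-o
  rw [hasDerivAt_iff_isLittleO, Asymptotics.isLittleO_iff]
  intro c hc
  have hr0 : 0 < min 1 ((c/(C+1))^2) := by
    apply lt_min one_pos
    positivity
  filter_upwards [eventually_abs_sub_lt 0 hr0] with s hs
  rw [sub_zero] at hs
  have hs1 : |s| ≤ 1 := le_of_lt (lt_of_lt_of_le hs (min_le_left _ _))
  have hs2 : |s| ≤ (c/(C+1))^2 := le_of_lt (lt_of_lt_of_le hs (min_le_right _ _))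
  have hsqrt : Real.sqrt |s| ≤ c/(C+1) := by
    calc Real.sqrt |s| ≤ Real.sqrt ((c/(C+1))^2) := Real.sqrt_le_sqrt hs2
    _ = c/(C+1) := Real.sqrt_sq (by positivity)
  obtain ⟨hge, hle⟩ := key s hs1
  have hf0 : ‖T + (0:ℝ)•U‖ = L := by simp [hL]
  simp only [sub_zero, smul_eq_mul]
  rw [hf0, Real.norm_eq_abs, Real.norm_eq_abs]
  rw [abs_of_nonneg (by linarith [hge] : (0:ℝ) ≤ ‖T + s•U‖^2 - L^2 - s*d)]
  have hCs : C * (|s| * Real.sqrt |s|) ≤ c * |s| := by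
    have h1 : C * Real.sqrt |s| ≤ C * (c/(C+1)) :=
      mul_le_mul_of_nonneg_left hsqrt hC0
    have h2 : C * (c/(C+1)) ≤ c := by
      rw [div_eq_mul_inv]
      have h3 : C/(C+1) ≤ 1 := by
        rw [div_le_one (by linarith)]; linarith
      calc C * (c * (C+1)⁻¹) = (C/(C+1)) * c := by ring
      _ ≤ 1 * c := mul_le_mul_of_nonneg_right h3 (le_of_lt hc)
      _ = c := one_mul c
    have h4 : (C * Real.sqrt |s|) * |s| ≤ c * |s| :=
      mul_le_mul_of_nonneg_right (le_trans h1 h2) (abs_nonneg s)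
    linarith [h4]
  linarith [hle, hCs]

end Stmt10Aux

namespace Stmt10Aux

noncomputable def toCLM {m n : ℕ} (M : Matrix (Fin m) (Fin n) ℝ) :
    EuclideanSpace ℝ (Fin n) →L[ℝ] EuclideanSpace ℝ (Fin m) :=
  LinearMap.toContinuousLinearMap (Matrix.toEuclideanLin M)

lemma toCLM_apply {m n : ℕ} (M : Matrix (Fin m) (Fin n) ℝ) (x : Fin n → ℝ) :
    toCLM M ((WithLp.equiv 2 _).symm x) = (WithLp.equiv 2 _).symm (M *ᵥ x) := by
  simp [toCLM, WithLp.equiv_symm_apply, Matrix.toEuclideanLin_toLp]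

lemma toCLM_add_smul {m n : ℕ} (A B : Matrix (Fin m) (Fin n) ℝ) (s : ℝ) :
    toCLM (A + s • B) = toCLM A + s • toCLM B := by
  simp [toCLM, map_add, _root_.map_smul]

lemma inner_symm_eq {k : ℕ} (x y : Fin k → ℝ) :
    ⟪(WithLp.equiv 2 (Fin k → ℝ)).symm x, (WithLp.equiv 2 (Fin k → ℝ)).symm y⟫ = x ⬝ᵥ y := by
  rw [WithLp.equiv_symm_apply, EuclideanSpace.inner_toLp_toLp, star_trivial, dotProduct_comm]

lemma P1 {m n : ℕ} (A : Matrix (Fin m) (Fin n) ℝ) (v w : EuclideanSpace ℝ (Fin n)) :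
    ⟪toCLM A v, toCLM A w⟫ = ⟪toCLM (Aᵀ * A) v, w⟫ := by
  set e := WithLp.equiv 2 (Fin n → ℝ)
  have hv : v = e.symm (e v) := (e.symm_apply_apply v).symm
  have hw : w = e.symm (e w) := (e.symm_apply_apply w).symm
  rw [hv, hw, toCLM_apply, toCLM_apply, toCLM_apply, inner_symm_eq, inner_symm_eq]
  rw [← Matrix.mulVec_mulVec, Matrix.mulVec_transpose, ← Matrix.dotProduct_mulVec]

lemma S_norm_le {m n : ℕ} (A : Matrix (Fin m) (Fin n) ℝ) (z : EuclideanSpace ℝ (Fin n)) :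
    ‖toCLM (Aᵀ * A) z‖ ≤ ‖toCLM A‖^2 * ‖z‖ := by
  set T := toCLM A with hT
  set S := toCLM (Aᵀ * A) with hS
  have h2 : ⟪S z, S z⟫ = ⟪T z, T (S z)⟫ := (P1 A z (S z)).symm
  rw [real_inner_self_eq_norm_sq] at h2
  have h3 := real_inner_le_norm (T z) (T (S z))
  have h4 := T.le_opNorm z
  have h5 := T.le_opNorm (S z)
  have h6 : ‖S z‖^2 ≤ (‖T‖^2 * ‖z‖) * ‖S z‖ := by
    have h7 : ‖T z‖ * ‖T (S z)‖ ≤ (‖T‖ * ‖z‖) * (‖T‖ * ‖S z‖) :=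
      mul_le_mul h4 h5 (norm_nonneg _) (by positivity)
    calc ‖S z‖^2 = ⟪T z, T (S z)⟫ := h2
    _ ≤ ‖T z‖ * ‖T (S z)‖ := h3
    _ ≤ (‖T‖ * ‖z‖) * (‖T‖ * ‖S z‖) := h7
    _ = (‖T‖^2 * ‖z‖) * ‖S z‖ := by ring
  nlinarith [h6, norm_nonneg (S z), (by positivity : (0:ℝ) ≤ ‖T‖^2 * ‖z‖)]

end Stmt10Aux

open Stmt10Aux in
set_option maxHeartbeats 1000000 in
theorem stmt10 {m n : ℕ} (A B : Matrix (Fin m) (Fin n) ℝ) (a : Fin n → ℝ)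
    (ha : ∑ i, (a i)^2 = 1)
    (heig : (Aᵀ * A).mulVec a = ((opN A)^2) • a)
    (hsimple : ∀ w : Fin n → ℝ, w ≠ 0 → (Aᵀ * A).mulVec w = ((opN A)^2) • w →
      ∃ c : ℝ, w = c • a)
    (hgap : ∀ w : Fin n → ℝ, ∀ μ : ℝ, w ≠ 0 → (Aᵀ * A).mulVec w = μ • w →
      μ ≤ (opN A)^2) :
    HasDerivAt (fun s : ℝ => (opN (A + s • B))^2)
      (2 * (A.mulVec a ⬝ᵥ B.mulVec a)) 0 := by
  have hTop : opN A = ‖toCLM A‖ := rfl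
  set T := toCLM A with hT
  set U := toCLM B with hU
  set a' : EuclideanSpace ℝ (Fin n) := (WithLp.equiv 2 (Fin n → ℝ)).symm a with ha'def
  have ha'1 : ‖a'‖ = 1 := by
    have h1 : ⟪a', a'⟫ = 1 := by
      rw [ha'def, inner_symm_eq]
      simpa [dotProduct, pow_two] using ha
    rw [real_inner_self_eq_norm_sq] at h1
    nlinarith [norm_nonneg a', h1]
  have heig' : toCLM (Aᵀ * A) a' = ((opN A)^2) • a' := by
    rw [ha'def, toCLM_apply, heig, (show ∀ (c : ℝ) (x : Fin n → ℝ), (WithLp.equiv 2 (Fin n → ℝ)).symm (c • x) = c • (WithLp.equiv 2 (Fin n → ℝ)).symm x from fun _ _ => rfl)]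
  have hTa : ∀ v : EuclideanSpace ℝ (Fin n), ⟪T a', T v⟫ = ‖T‖^2 * ⟪a', v⟫ := by
    intro v
    rw [hT, P1 A a' v, heig', real_inner_smul_left, hTop]
  have hmax : ∀ v : EuclideanSpace ℝ (Fin n), ‖v‖ = 1 → ‖T v‖ = ‖T‖ →
      v = a' ∨ v = -a' := by
    intro v hv1 hvT
    have hSv : toCLM (Aᵀ * A) v = (‖T‖^2) • v := by
      have h0 : ⟪toCLM (Aᵀ * A) v, v⟫ = ‖T‖^2 := by
        rw [← P1 A v v, ← hT, real_inner_self_eq_norm_sq, hvT]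
      have hS := S_norm_le A v
      rw [hv1, mul_one, ← hT] at hS
      have h1 : ‖toCLM (Aᵀ * A) v - (‖T‖^2) • v‖^2 ≤ 0 := by
        have h2 : ‖toCLM (Aᵀ * A) v - (‖T‖^2) • v‖^2
            = ‖toCLM (Aᵀ * A) v‖^2 - 2*(‖T‖^2 * ⟪toCLM (Aᵀ * A) v, v⟫)
              + (‖T‖^2)^2 := by
          rw [norm_sub_sq_real, real_inner_smul_right, norm_smul, hv1,
            Real.norm_eq_abs, abs_of_nonneg (sq_nonneg ‖T‖)]
          ring
        rw [h2, h0]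
        nlinarith [hS, norm_nonneg (toCLM (Aᵀ * A) v)]
      have h3 : toCLM (Aᵀ * A) v - (‖T‖^2) • v = 0 := by
        rw [← norm_eq_zero]
        nlinarith [norm_nonneg (toCLM (Aᵀ * A) v - (‖T‖^2) • v), h1]
      linear_combination (norm := abel) h3
    set w := (WithLp.equiv 2 (Fin n → ℝ)) v with hwdef
    have hvw : v = (WithLp.equiv 2 (Fin n → ℝ)).symm w :=
      (Equiv.symm_apply_apply _ v).symm
    have hmv : (Aᵀ * A) *ᵥ w = ((opN A)^2) • w := by
      apply (WithLp.equiv 2 (Fin n → ℝ)).symm.injective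
      rw [← toCLM_apply, ← hvw, hSv, (show ∀ (c : ℝ) (x : Fin n → ℝ), (WithLp.equiv 2 (Fin n → ℝ)).symm (c • x) = c • (WithLp.equiv 2 (Fin n → ℝ)).symm x from fun _ _ => rfl), ← hvw, hTop]
    have hw0 : w ≠ 0 := by
      intro h
      have hv0 : v = 0 := by rw [hvw, h]; simp
      rw [hv0] at hv1; simp at hv1
    obtain ⟨c, hc⟩ := hsimple w hw0 hmv
    have hva : v = c • a' := by
      rw [hvw, hc, (show ∀ (c : ℝ) (x : Fin n → ℝ), (WithLp.equiv 2 (Fin n → ℝ)).symm (c • x) = c • (WithLp.equiv 2 (Fin n → ℝ)).symm x from fun _ _ => rfl), ← ha'def]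
    have hc1 : |c| = 1 := by
      have h4 : ‖v‖ = |c| * ‖a'‖ := by rw [hva, norm_smul, Real.norm_eq_abs]
      rw [hv1, ha'1, mul_one] at h4; exact h4.symm
    rcases (abs_eq zero_le_one).mp hc1 with rfl | rfl
    · left; rw [hva, one_smul]
    · right; rw [hva, neg_smul, one_smul]
  have hfun : (fun s : ℝ => (opN (A + s • B))^2)
      = (fun s : ℝ => ‖T + s • U‖^2) := by
    funext s
    rw [show opN (A + s • B) = ‖toCLM (A + s • B)‖ from rfl, toCLM_add_smul, ← hT, ← hU]
  have hder : 2 * (A.mulVec a ⬝ᵥ B.mulVec a) = 2 * ⟪T a', U a'⟫ := by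
    rw [hT, hU, ha'def, toCLM_apply, toCLM_apply, inner_symm_eq]
  rw [hfun, hder]
  exact aux T U a' ha'1 hTa hmax
end

section
/- For t ∈ [0,1], define u_t : B₁(0) ⊆ ℝ² → ℝ² (identifying ℝ² with ℂ) by u_t(z) := t z² + (1 − t) z²/|z| (and u_t(0) := 0). Then the local Lipschitz constant satisfies L u_t(x) = 2 + 2t(|x| − 1) for x ∈ B₁(0)∖{0}. Consequently, for 0 ≤ t₂ < t₁ ≤ 1, L u_{t₁}(x) < L u_{t₂}(x) at every x ∈ B₁(0)∖{0}, while u_{t₁} = u_{t₂} on ∂B₁(0); hence u_{t₁} is tighter than u_{t₂} on B₁(0). -/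
/-- The Lipschitz constant of `f` on `s`: `Lip(f,s) = sup_{x ≠ y ∈ s} ‖f x - f y‖/‖x - y‖`. -/
noncomputable def LipOn (f : ℂ → ℂ) (s : Set ℂ) : ℝ :=
  sSup {c : ℝ | ∃ x ∈ s, ∃ y ∈ s, x ≠ y ∧ c = ‖f x - f y‖ / ‖x - y‖}

/-- The local Lipschitz constant `L f(x) = inf_{r>0} Lip(f, U ∩ B_r(x))`. -/
noncomputable def Lloc (U : Set ℂ) (f : ℂ → ℂ) (x : ℂ) : ℝ :=
  sInf {c : ℝ | ∃ r > (0:ℝ), c = LipOn f (U ∩ Metric.ball x r)}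

/-- `v` is tighter than `u` on `U`. -/
def TighterC (U : Set ℂ) (v u : ℂ → ℂ) : Prop :=
  (∀ x ∈ frontier U, v x = u x) ∧
    sSup {c : ℝ | ∃ x ∈ U, Lloc U u x = c ∧ Lloc U v x < Lloc U u x} >
      sSup {c : ℝ | ∃ x ∈ U, Lloc U v x = c ∧ Lloc U u x < Lloc U v x}

/-- The family `u_t(z) = t z² + (1-t) z²/|z|`, with `u_t(0) = 0`. -/
noncomputable def ut (t : ℝ) (z : ℂ) : ℂ :=
  if z = 0 then 0 else (t : ℂ) * z^2 + ((1 - t : ℝ) : ℂ) * z^2 / (‖z‖ : ℂ)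

open Complex Metric Set Filter

section Aux

lemma normG {z w : ℂ} (hz : z ≠ 0) (hw : w ≠ 0) :
    ‖(‖w‖:ℂ) * z^2 - (‖z‖:ℂ) * w^2‖ ≤ 2 * ‖z - w‖ * (‖z‖ * ‖w‖) := by
  have hr : 0 < ‖z‖ := norm_pos_iff.mpr hz
  have hs : 0 < ‖w‖ := norm_pos_iff.mpr hw
  have hr2 : ‖z‖^2 = z.re^2 + z.im^2 := by
    rw [Complex.sq_norm, Complex.normSq_apply]; ring
  have hs2 : ‖w‖^2 = w.re^2 + w.im^2 := by
    rw [Complex.sq_norm, Complex.normSq_apply]; ring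
  have e1 : ‖(‖w‖:ℂ) * z^2 - (‖z‖:ℂ) * w^2‖^2 = Complex.normSq ((‖w‖:ℂ) * z^2 - (‖z‖:ℂ) * w^2) := by
    rw [Complex.sq_norm]
  have e2 : ‖z - w‖^2 = Complex.normSq (z - w) := by
    rw [Complex.sq_norm]
  have eq : 4*(‖z‖^2*‖w‖^2)*‖z-w‖^2 - ‖(‖w‖:ℂ)*z^2-(‖z‖:ℂ)*w^2‖^2
      = ‖z‖*‖w‖*(2*(z.re*w.re+z.im*w.im) - 2*(‖z‖*‖w‖))^2
        + 3*‖z‖^2*‖w‖^2*(‖z‖-‖w‖)^2 := by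
    rw [e1, e2]
    simp only [Complex.normSq_apply, Complex.sub_re, Complex.sub_im, Complex.mul_re,
      Complex.mul_im, Complex.ofReal_re, Complex.ofReal_im, pow_two, Complex.add_re,
      Complex.add_im]
    linear_combination
      ((-3)*‖w‖^4 + 2*‖z‖*‖w‖^3 + (-3)*‖z‖^2*‖w‖^2 + 4*w.im^2*‖w‖^2 + (-1)*w.im^4
        + 4*w.re^2*‖w‖^2 + (-2)*w.re^2*w.im^2 + (-1)*w.re^4 + z.im^2*‖w‖^2 + z.re^2*‖w‖^2) * hr2
      + ((-3)*z.im^2*‖w‖^2 + 2*z.im^2*‖z‖*‖w‖ + z.im^2*w.im^2 + z.im^2*w.re^2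
        + (-3)*z.re^2*‖w‖^2 + 2*z.re^2*‖z‖*‖w‖ + z.re^2*w.im^2 + z.re^2*w.re^2) * hs2
  have cert : 0 ≤ ‖z‖*‖w‖*(2*(z.re*w.re+z.im*w.im) - 2*(‖z‖*‖w‖))^2
        + 3*‖z‖^2*‖w‖^2*(‖z‖-‖w‖)^2 := by positivity
  have key : ‖(‖w‖:ℂ) * z^2 - (‖z‖:ℂ) * w^2‖^2 ≤ (2 * ‖z - w‖ * (‖z‖ * ‖w‖))^2 := by
    nlinarith [eq, cert]
  exact (pow_le_pow_iff_left₀ (norm_nonneg _) (by positivity) two_ne_zero).mp key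

lemma ut_zero (t : ℝ) : ut t 0 = 0 := by simp [ut]

lemma norm_ut_le {t : ℝ} (ht0 : 0 ≤ t) (ht1 : t ≤ 1) (z : ℂ) :
    ‖ut t z‖ ≤ t * ‖z‖^2 + (1-t) * ‖z‖ := by
  rcases eq_or_ne z 0 with rfl | hz
  · simp [ut_zero]
  · have hr : 0 < ‖z‖ := norm_pos_iff.mpr hz
    rw [ut, if_neg hz]
    have hrc : ((‖z‖:ℝ) : ℂ) ≠ 0 := by exact_mod_cast hr.ne'
    calc ‖(t : ℂ) * z^2 + ((1 - t : ℝ) : ℂ) * z^2 / (‖z‖ : ℂ)‖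
        ≤ ‖(t : ℂ) * z^2‖ + ‖((1 - t : ℝ) : ℂ) * z^2 / (‖z‖ : ℂ)‖ := norm_add_le _ _
      _ = t * ‖z‖^2 + (1-t) * (‖z‖^2 / ‖z‖) := by
          rw [norm_mul, norm_div, norm_mul, norm_pow, Complex.norm_real, Complex.norm_real,
            Complex.norm_real, Real.norm_of_nonneg ht0, Real.norm_of_nonneg (by linarith),
            Real.norm_of_nonneg hr.le, mul_div_assoc]
      _ = t * ‖z‖^2 + (1-t) * ‖z‖ := by rw [sq, mul_div_assoc, div_self hr.ne', mul_one]

lemma quotA {t : ℝ} (ht0 : 0 ≤ t) (ht1 : t ≤ 1) {M : ℝ} {z w : ℂ}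
    (hz : ‖z‖ ≤ M) (hw : ‖w‖ ≤ M) :
    ‖ut t z - ut t w‖ ≤ (2*t*M + 2*(1-t)) * ‖z - w‖ := by
  have hM : 0 ≤ M := le_trans (norm_nonneg z) hz
  have ht1' : (0:ℝ) ≤ 1 - t := by linarith
  rcases eq_or_ne z 0 with rfl | hz0
  · rcases eq_or_ne w 0 with rfl | hw0
    · simp
    · rw [ut_zero, zero_sub, norm_neg, zero_sub, norm_neg]
      calc ‖ut t w‖ ≤ t * ‖w‖^2 + (1-t)*‖w‖ := norm_ut_le ht0 ht1 w
        _ ≤ (2*t*M + 2*(1-t)) * ‖w‖ := by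
            nlinarith [mul_nonneg (mul_nonneg ht0 (norm_nonneg w)) (sub_nonneg.mpr hw),
              mul_nonneg ht1' (norm_nonneg w),
              mul_nonneg (mul_nonneg ht0 hM) (norm_nonneg w)]
  rcases eq_or_ne w 0 with rfl | hw0
  · rw [ut_zero, sub_zero, sub_zero]
    calc ‖ut t z‖ ≤ t * ‖z‖^2 + (1-t)*‖z‖ := norm_ut_le ht0 ht1 z
      _ ≤ (2*t*M + 2*(1-t)) * ‖z‖ := by
          nlinarith [mul_nonneg (mul_nonneg ht0 (norm_nonneg z)) (sub_nonneg.mpr hz),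
            mul_nonneg ht1' (norm_nonneg z),
            mul_nonneg (mul_nonneg ht0 hM) (norm_nonneg z)]
  · have hr : 0 < ‖z‖ := norm_pos_iff.mpr hz0
    have hs : 0 < ‖w‖ := norm_pos_iff.mpr hw0
    have h1 : ((‖z‖:ℝ) : ℂ) ≠ 0 := by exact_mod_cast hr.ne'
    have h2 : ((‖w‖:ℝ) : ℂ) ≠ 0 := by exact_mod_cast hs.ne'
    rw [ut, if_neg hz0, ut, if_neg hw0]
    have splitg : z^2/(‖z‖:ℂ) - w^2/(‖w‖:ℂ)
        = ((‖w‖:ℂ) * z^2 - (‖z‖:ℂ) * w^2) / ((‖z‖:ℂ) * (‖w‖:ℂ)) := by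
      rw [div_sub_div _ _ h1 h2]
      ring_nf
    have split : (t : ℂ) * z^2 + ((1 - t : ℝ) : ℂ) * z^2 / (‖z‖ : ℂ)
        - ((t : ℂ) * w^2 + ((1 - t : ℝ) : ℂ) * w^2 / (‖w‖ : ℂ))
        = (t : ℂ) * (z^2 - w^2)
          + ((1 - t : ℝ) : ℂ) * (((‖w‖:ℂ) * z^2 - (‖z‖:ℂ) * w^2) / ((‖z‖:ℂ) * (‖w‖:ℂ))) := by
      rw [← splitg]; ring
    rw [split]
    have e1 : ‖(t : ℂ) * (z^2 - w^2)‖ ≤ t * ((‖z‖ + ‖w‖) * ‖z - w‖) := by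
      rw [norm_mul, Complex.norm_real, Real.norm_of_nonneg ht0]
      have hzw : ‖z^2 - w^2‖ ≤ (‖z‖+‖w‖) * ‖z-w‖ := by
        have f : z^2 - w^2 = (z+w)*(z-w) := by ring
        rw [f, norm_mul]
        exact mul_le_mul_of_nonneg_right (norm_add_le _ _) (norm_nonneg _)
      exact mul_le_mul_of_nonneg_left hzw ht0
    have e2 : ‖((1 - t : ℝ) : ℂ) * (((‖w‖:ℂ) * z^2 - (‖z‖:ℂ) * w^2) / ((‖z‖:ℂ) * (‖w‖:ℂ)))‖
        ≤ (1-t) * (2 * ‖z - w‖) := by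
      rw [norm_mul, Complex.norm_real, Real.norm_of_nonneg ht1', norm_div, norm_mul,
        Complex.norm_real, Complex.norm_real, Real.norm_of_nonneg hr.le,
        Real.norm_of_nonneg hs.le]
      refine mul_le_mul_of_nonneg_left ?_ ht1'
      rw [div_le_iff₀ (by positivity)]
      calc ‖(‖w‖:ℂ) * z^2 - (‖z‖:ℂ) * w^2‖ ≤ 2 * ‖z - w‖ * (‖z‖ * ‖w‖) := normG hz0 hw0
        _ = 2 * ‖z-w‖ * (‖z‖*‖w‖) := rfl
    calc ‖(t : ℂ) * (z^2 - w^2) + ((1 - t : ℝ) : ℂ) * (((‖w‖:ℂ) * z^2 - (‖z‖:ℂ) * w^2) / ((‖z‖:ℂ) * (‖w‖:ℂ)))‖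
        ≤ ‖(t : ℂ) * (z^2 - w^2)‖ + ‖((1 - t : ℝ) : ℂ) * (((‖w‖:ℂ) * z^2 - (‖z‖:ℂ) * w^2) / ((‖z‖:ℂ) * (‖w‖:ℂ)))‖ :=
          norm_add_le _ _
      _ ≤ t * ((‖z‖ + ‖w‖) * ‖z - w‖) + (1-t) * (2 * ‖z - w‖) := add_le_add e1 e2
      _ ≤ (2*t*M + 2*(1-t)) * ‖z - w‖ := by
          nlinarith [mul_nonneg (mul_nonneg ht0 (sub_nonneg.mpr hz)) (norm_nonneg (z-w)),
            mul_nonneg (mul_nonneg ht0 (sub_nonneg.mpr hw)) (norm_nonneg (z-w)),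
            mul_nonneg ht1' (norm_nonneg (z-w))]

lemma quotQ {t : ℝ} (ht1 : t ≤ 1) {p : ℂ} (hp : p ≠ 0) {h : ℝ}
    (hh : Complex.exp (h * I) ≠ 1) (ht0 : 0 ≤ t) :
    ‖ut t (p * Complex.exp (h*I)) - ut t p‖ / ‖p * Complex.exp (h*I) - p‖
      = ‖Complex.exp (h*I) + 1‖ * (t * ‖p‖ + (1 - t)) := by
  set e := Complex.exp (h*I) with he
  have h1t : (0:ℝ) ≤ 1 - t := by linarith
  have hnorme : ‖e‖ = 1 := by
    rw [he]
    exact Complex.norm_exp_ofReal_mul_I h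
  have he0 : e ≠ 0 := Complex.exp_ne_zero _
  have hq0 : p * e ≠ 0 := mul_ne_zero hp he0
  have hr : 0 < ‖p‖ := norm_pos_iff.mpr hp
  have habs : ‖p‖ ≠ 0 := hr.ne'
  have hnq : ‖p * e‖ = ‖p‖ := by rw [norm_mul, hnorme, mul_one]
  have h1 : ((‖p‖:ℝ) : ℂ) ≠ 0 := by exact_mod_cast hr.ne'
  have key : ut t (p*e) - ut t p = (p^2 * (e-1) * (e+1)) * ((t:ℂ) + ((1-t:ℝ):ℂ)/(‖p‖:ℂ)) := by
    rw [ut, if_neg hq0, ut, if_neg hp, hnq]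
    field_simp
    ring
  have hden : p * e - p = p * (e - 1) := by ring
  have hsub1 : e - 1 ≠ 0 := sub_ne_zero.mpr hh
  have hsub1' : 0 < ‖e - 1‖ := norm_pos_iff.mpr hsub1
  have hscal : ‖(t:ℂ) + ((1-t:ℝ):ℂ)/(‖p‖:ℂ)‖ = t + (1-t)/‖p‖ := by
    have hcast : (t:ℂ) + ((1-t:ℝ):ℂ)/(‖p‖:ℂ) = ((t + (1-t)/‖p‖ : ℝ) : ℂ) := by push_cast; ring
    rw [hcast, Complex.norm_real, Real.norm_of_nonneg (by positivity)]
  rw [key, hden, norm_mul, norm_mul, norm_mul, norm_mul, norm_pow, hscal]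
  rw [div_eq_iff (by positivity)]
  field_simp [habs]

lemma quot_mem_le {t : ℝ} (ht0 : 0 ≤ t) (ht1 : t ≤ 1) {M : ℝ} {s : Set ℂ}
    (hs : ∀ z ∈ s, ‖z‖ ≤ M) {c : ℝ}
    (hc : c ∈ {c : ℝ | ∃ x ∈ s, ∃ y ∈ s, x ≠ y ∧ c = ‖ut t x - ut t y‖ / ‖x - y‖}) :
    c ≤ 2*t*M + 2*(1-t) := by
  obtain ⟨x, hx, y, hy, hxy, rfl⟩ := hc
  have hpos : 0 < ‖x - y‖ := norm_pos_iff.mpr (sub_ne_zero.mpr hxy)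
  rw [div_le_iff₀ hpos]
  exact quotA ht0 ht1 (hs x hx) (hs y hy)

lemma quot_nonneg {f : ℂ → ℂ} {s : Set ℂ} {c : ℝ}
    (hc : c ∈ {c : ℝ | ∃ x ∈ s, ∃ y ∈ s, x ≠ y ∧ c = ‖f x - f y‖ / ‖x - y‖}) : 0 ≤ c := by
  obtain ⟨x, hx, y, hy, hxy, rfl⟩ := hc
  positivity

lemma lipOn_nonneg (f : ℂ → ℂ) (s : Set ℂ) : 0 ≤ LipOn f s :=
  Real.sSup_nonneg fun _ hc => quot_nonneg hc

lemma lipOn_le {t : ℝ} (ht0 : 0 ≤ t) (ht1 : t ≤ 1) {M : ℝ} (hM : 0 ≤ M) {s : Set ℂ}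
    (hs : ∀ z ∈ s, ‖z‖ ≤ M) : LipOn (ut t) s ≤ 2*t*M + 2*(1-t) :=
  Real.sSup_le (fun _ hc => quot_mem_le ht0 ht1 hs hc) (by nlinarith)

lemma exp_ne_one' {h : ℝ} (h0 : 0 < h) (h1 : h < 1) : Complex.exp (h * I) ≠ 1 := by
  intro hc
  rw [Complex.exp_eq_one_iff] at hc
  obtain ⟨n, hn⟩ := hc
  have him : h = n * (2 * Real.pi) := by
    have := congrArg Complex.im hn
    simpa using this
  have hpi := Real.pi_gt_three
  rcases le_or_gt n 0 with hn0 | hn0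
  · have : (n:ℝ) ≤ 0 := by exact_mod_cast hn0
    nlinarith
  · have : (1:ℝ) ≤ (n:ℝ) := by exact_mod_cast hn0
    nlinarith

lemma lipOn_ge {t : ℝ} (ht0 : 0 ≤ t) (ht1 : t ≤ 1) {s : Set ℂ}
    (hs : ∀ z ∈ s, ‖z‖ ≤ 1) {p : ℂ} (hp : p ≠ 0)
    (hev : ∀ᶠ (h : ℝ) in nhdsWithin (0:ℝ) (Set.Ioi (0:ℝ)), p ∈ s ∧ p * Complex.exp (h*I) ∈ s) :
    2 * (t * ‖p‖ + (1-t)) ≤ LipOn (ut t) s := by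
  have hbdd : BddAbove {c : ℝ | ∃ x ∈ s, ∃ y ∈ s, x ≠ y ∧ c = ‖ut t x - ut t y‖ / ‖x - y‖} :=
    ⟨2*t*1 + 2*(1-t), fun c hc => quot_mem_le ht0 ht1 hs hc⟩
  have hcont : Filter.Tendsto (fun h : ℝ => ‖Complex.exp (h*I) + 1‖ * (t * ‖p‖ + (1-t)))
      (nhdsWithin (0:ℝ) (Set.Ioi (0:ℝ))) (nhds (2 * (t * ‖p‖ + (1-t)))) := by
    have hco : Continuous (fun h : ℝ => ‖Complex.exp (h*I) + 1‖ * (t * ‖p‖ + (1-t))) := by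
      fun_prop
    have h2 := hco.tendsto 0
    simp only [Complex.ofReal_zero, zero_mul, Complex.exp_zero] at h2
    have h3 : ‖(1:ℂ) + 1‖ * (t * ‖p‖ + (1-t)) = 2 * (t * ‖p‖ + (1-t)) := by norm_num
    rw [h3] at h2
    exact h2.mono_left nhdsWithin_le_nhds
  refine le_of_tendsto hcont ?_
  have hIoo : Set.Ioo (0:ℝ) 1 ∈ nhdsWithin (0:ℝ) (Set.Ioi (0:ℝ)) :=
    Ioo_mem_nhdsGT_of_mem (by simp)
  filter_upwards [hev, hIoo] with h hmem hh
  obtain ⟨hps, hqs⟩ := hmem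
  have hne1 : Complex.exp (h * I) ≠ 1 := exp_ne_one' hh.1 hh.2
  have hqp : p * Complex.exp (h*I) ≠ p := by
    intro hc
    exact hne1 ((mul_right_inj' hp).mp (by rw [hc, mul_one]))
  have hmemQ : ‖Complex.exp (h*I) + 1‖ * (t * ‖p‖ + (1-t))
      ∈ {c : ℝ | ∃ x ∈ s, ∃ y ∈ s, x ≠ y ∧ c = ‖ut t x - ut t y‖ / ‖x - y‖} :=
    ⟨p * Complex.exp (h*I), hqs, p, hps, hqp, (quotQ ht1 hp hne1 ht0).symm⟩
  exact le_csSup hbdd hmemQ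

lemma lloc_eq {t : ℝ} (ht0 : 0 ≤ t) (ht1 : t ≤ 1) {x : ℂ} (hx : x ∈ ball (0:ℂ) 1) :
    Lloc (Metric.ball 0 1) (ut t) x = 2 + 2*t*(‖x‖-1) := by
  have hx1 : ‖x‖ < 1 := mem_ball_zero_iff.mp hx
  have hball : ∀ r : ℝ, ∀ z ∈ ball (0:ℂ) 1 ∩ ball x r, ‖z‖ ≤ 1 :=
    fun r z hz => (mem_ball_zero_iff.mp hz.1).le
  have hne : {c : ℝ | ∃ r > (0:ℝ), c = LipOn (ut t) (ball 0 1 ∩ ball x r)}.Nonempty :=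
    ⟨LipOn (ut t) (ball 0 1 ∩ ball x 1), 1, one_pos, rfl⟩
  have hbdd : BddBelow {c : ℝ | ∃ r > (0:ℝ), c = LipOn (ut t) (ball 0 1 ∩ ball x r)} := by
    refine ⟨0, fun c hc => ?_⟩
    obtain ⟨r, hr, rfl⟩ := hc
    exact lipOn_nonneg _ _
  refine le_antisymm ?_ ?_
  · refine le_of_forall_pos_le_add fun ε hε => ?_
    have h2t : (0:ℝ) < 2*t+1 := by linarith
    set δ := ε/(2*t+1) with hδdef
    have hδ : 0 < δ := by positivity
    have hmem : LipOn (ut t) (ball 0 1 ∩ ball x δ) ∈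
        {c : ℝ | ∃ r > (0:ℝ), c = LipOn (ut t) (ball 0 1 ∩ ball x r)} := ⟨δ, hδ, rfl⟩
    have h1 : Lloc (Metric.ball 0 1) (ut t) x ≤ LipOn (ut t) (ball 0 1 ∩ ball x δ) :=
      csInf_le hbdd hmem
    have h2 : LipOn (ut t) (ball 0 1 ∩ ball x δ) ≤ 2*t*(‖x‖+δ) + 2*(1-t) := by
      refine lipOn_le ht0 ht1 (by positivity) fun z hz => ?_
      have hzx : ‖z - x‖ < δ := mem_ball_iff_norm.mp hz.2
      calc ‖z‖ = ‖z - x + x‖ := by ring_nf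
        _ ≤ ‖z - x‖ + ‖x‖ := norm_add_le _ _
        _ ≤ ‖x‖ + δ := by linarith
    have h3 : 2*t*δ ≤ ε := by
      have heq : 2*t*δ = (2*t*ε)/(2*t+1) := by rw [hδdef]; ring
      rw [heq, div_le_iff₀ h2t]
      nlinarith
    calc Lloc (Metric.ball 0 1) (ut t) x ≤ 2*t*(‖x‖+δ) + 2*(1-t) := le_trans h1 h2
      _ = 2 + 2*t*(‖x‖-1) + 2*t*δ := by ring
      _ ≤ 2 + 2*t*(‖x‖-1) + ε := by linarith
  · refine le_csInf hne fun c hc => ?_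
    obtain ⟨r, hr, rfl⟩ := hc
    rcases eq_or_ne x 0 with rfl | hx0
    · set a : ℝ := min r 1 / 2 with ha
      have ha0 : 0 < a := by positivity
      have har : a < r := by
        have : min r 1 ≤ r := min_le_left _ _
        simp only [ha]; linarith
      have ha1 : a < 1 := by
        have : min r 1 ≤ 1 := min_le_right _ _
        simp only [ha]; linarith
      set p : ℂ := (a : ℂ) with hpdef
      have hp0 : p ≠ 0 := by
        simp only [hpdef, ne_eq, Complex.ofReal_eq_zero]
        exact ha0.ne'
      have hnp : ‖p‖ = a := by
        rw [hpdef, Complex.norm_real, Real.norm_of_nonneg ha0.le]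
      have hmemp : ∀ (h : ℝ), p * Complex.exp (h*I) ∈ ball (0:ℂ) 1 ∩ ball (0:ℂ) r := by
        intro h
        have hq : ‖p * Complex.exp (h*I)‖ = a := by
          rw [norm_mul, hnp, Complex.norm_exp_ofReal_mul_I, mul_one]
        constructor
        · rw [mem_ball_zero_iff, hq]; exact ha1
        · rw [mem_ball_zero_iff, hq]; exact har
      have hmemp0 : p ∈ ball (0:ℂ) 1 ∩ ball (0:ℂ) r := by
        constructor
        · rw [mem_ball_zero_iff, hnp]; exact ha1
        · rw [mem_ball_zero_iff, hnp]; exact har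
      have key := lipOn_ge ht0 ht1 (hball r) hp0
        (Filter.Eventually.of_forall fun h => ⟨hmemp0, hmemp h⟩)
      rw [hnp] at key
      have h5 : (2:ℝ) + 2*t*(‖(0:ℂ)‖-1) ≤ 2 * (t * a + (1-t)) := by
        simp only [norm_zero]
        nlinarith [mul_nonneg ht0 ha0.le]
      linarith
    · have key := lipOn_ge ht0 ht1 (hball r) hx0 ?_
      · linarith [key]
      · have hc1 : Filter.Tendsto (fun h : ℝ => ‖x * Complex.exp (h*I) - x‖) (nhds 0) (nhds 0) := by
          have hcont : Continuous (fun h : ℝ => ‖x * Complex.exp (h*I) - x‖) := by fun_prop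
          have h2 := hcont.tendsto 0
          simpa using h2
        have hev2 : ∀ᶠ (h : ℝ) in nhds (0:ℝ), ‖x * Complex.exp (h*I) - x‖ < r :=
          hc1.eventually_lt_const hr
        have hev3 : ∀ᶠ (h : ℝ) in nhdsWithin (0:ℝ) (Set.Ioi (0:ℝ)),
            ‖x * Complex.exp (h*I) - x‖ < r := hev2.filter_mono nhdsWithin_le_nhds
        filter_upwards [hev3] with h hh
        refine ⟨⟨hx, mem_ball_self hr⟩, ?_, ?_⟩
        · rw [mem_ball_zero_iff, norm_mul,
            Complex.norm_exp_ofReal_mul_I, mul_one]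
          exact hx1
        · rw [mem_ball_iff_norm]
          exact hh

lemma ut_sphere {t : ℝ} {z : ℂ} (hz : z ∈ sphere (0:ℂ) 1) : ut t z = z^2 := by
  have hz1 : ‖z‖ = 1 := mem_sphere_zero_iff_norm.mp hz
  have hz0 : z ≠ 0 := by
    intro h; rw [h, norm_zero] at hz1; norm_num at hz1
  rw [ut, if_neg hz0, hz1]
  push_cast
  ring

end Aux

theorem stmt11 :
    (∀ t ∈ Set.Icc (0:ℝ) 1, ∀ x ∈ Metric.ball (0:ℂ) 1, x ≠ 0 →
      Lloc (Metric.ball 0 1) (ut t) x = 2 + 2 * t * (‖x‖ - 1)) ∧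
    (∀ t₁ t₂ : ℝ, 0 ≤ t₂ → t₂ < t₁ → t₁ ≤ 1 →
      (∀ x ∈ Metric.ball (0:ℂ) 1, x ≠ 0 →
        Lloc (Metric.ball 0 1) (ut t₁) x < Lloc (Metric.ball 0 1) (ut t₂) x) ∧
      (∀ z ∈ Metric.sphere (0:ℂ) 1, ut t₁ z = ut t₂ z) ∧
      TighterC (Metric.ball 0 1) (ut t₁) (ut t₂)) := by
  constructor
  · intro t ht x hx _
    exact lloc_eq ht.1 ht.2 hx
  · intro t₁ t₂ ht₂0 hlt ht₁1
    have ht₂1 : t₂ ≤ 1 := le_trans hlt.le ht₁1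
    have ht₁0 : 0 ≤ t₁ := le_trans ht₂0 hlt.le
    have hstrict : ∀ x ∈ ball (0:ℂ) 1,
        Lloc (ball 0 1) (ut t₁) x < Lloc (ball 0 1) (ut t₂) x := by
      intro x hx
      rw [lloc_eq ht₁0 ht₁1 hx, lloc_eq ht₂0 ht₂1 hx]
      have hx1 : ‖x‖ < 1 := mem_ball_zero_iff.mp hx
      nlinarith
    refine ⟨fun x hx _ => hstrict x hx, fun z hz => by rw [ut_sphere hz, ut_sphere hz], ?_, ?_⟩
    · intro x hxf
      rw [frontier_ball (0:ℂ) one_ne_zero] at hxf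
      rw [ut_sphere hxf, ut_sphere hxf]
    · have hBempty : {c : ℝ | ∃ x ∈ ball (0:ℂ) 1, Lloc (ball 0 1) (ut t₁) x = c ∧
          Lloc (ball 0 1) (ut t₂) x < Lloc (ball 0 1) (ut t₁) x} = ∅ := by
        ext c
        simp only [Set.mem_setOf_eq, Set.mem_empty_iff_false, iff_false]
        rintro ⟨x, hx, _, hlt2⟩
        exact absurd hlt2 (not_lt.mpr (hstrict x hx).le)
      rw [hBempty, Real.sSup_empty]
      have hmem : ((1/2 : ℝ) : ℂ) ∈ ball (0:ℂ) 1 := by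
        rw [mem_ball_zero_iff, Complex.norm_real, Real.norm_of_nonneg (by norm_num)]
        norm_num
      have hA : Lloc (ball 0 1) (ut t₂) ((1/2 : ℝ) : ℂ)
          ∈ {c : ℝ | ∃ x ∈ ball (0:ℂ) 1, Lloc (ball 0 1) (ut t₂) x = c ∧
            Lloc (ball 0 1) (ut t₁) x < Lloc (ball 0 1) (ut t₂) x} :=
        ⟨((1/2 : ℝ) : ℂ), hmem, rfl, hstrict _ hmem⟩
      have hAbdd : BddAbove {c : ℝ | ∃ x ∈ ball (0:ℂ) 1, Lloc (ball 0 1) (ut t₂) x = c ∧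
          Lloc (ball 0 1) (ut t₁) x < Lloc (ball 0 1) (ut t₂) x} := by
        refine ⟨2, ?_⟩
        rintro c ⟨x, hx, rfl, _⟩
        rw [lloc_eq ht₂0 ht₂1 hx]
        have hx1 : ‖x‖ < 1 := mem_ball_zero_iff.mp hx
        nlinarith
      have hval : Lloc (ball 0 1) (ut t₂) ((1/2 : ℝ) : ℂ) = 2 - t₂ := by
        rw [lloc_eq ht₂0 ht₂1 hmem, Complex.norm_real, Real.norm_of_nonneg (by norm_num)]
        ring
      have := le_csSup hAbdd hA
      rw [hval] at this
      linarith
end
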